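/- arXiv:1411.2024 — 5 statements merged into one kernel-verified Lean document; each statement's English description precedes it below -/
import Mathlib

section
/- For an irreducible recurrent Markov chain on a countable state space E, every nonnegative harmonic function is constant. -/
open MeasureTheory ENNReal
open scoped Classical NNReal

/-- A (time-homogeneous) Markov chain on a countable state space `E`, given by its
transition probabilities `p` and the family of path-space laws `P x` (the chain started
at `x`), characterized by its finite-dimensional distributions. -/
structure MC (E : Type*) [MeasurableSpace E] where
  p : E → E → ℝ≥0∞
  P : E → Measure (ℕ → E)
  prob : ∀ x, IsProbabilityMeasure (P x)
  stochastic : ∀ x, ∑' y, p x y = 1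
  fdd : ∀ (x : E) (n : ℕ) (xs : Fin (n + 1) → E),
    P x {ω | ∀ i : Fin (n + 1), ω i = xs i}
      = (if xs 0 = x then 1 else 0) * ∏ i : Fin n, p (xs i.castSucc) (xs i.succ)

/-- Irreducibility: every state is reachable from every state with positive probability. -/
def MC.Irreducible {E : Type*} [MeasurableSpace E] (M : MC E) : Prop :=
  ∀ x y : E, ∃ n : ℕ, 0 < M.P x {ω | ω n = y}

/-- Recurrence: started from any state, the chain returns to that state infinitely often
almost surely. -/
def MC.Recurrent {E : Type*} [MeasurableSpace E] (M : MC E) : Prop :=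
  ∀ x : E, M.P x {ω | ∀ N : ℕ, ∃ n, N ≤ n ∧ ω n = x} = 1

namespace MCproof

variable {E : Type*} [Countable E] [MeasurableSpace E]

/-- algebraic n-step transition sums. -/
noncomputable def pn (M : MC E) : ℕ → E → E → ℝ≥0∞
  | 0 => fun x y => if y = x then 1 else 0
  | n + 1 => fun x y => ∑' z, M.p x z * pn M n z y

lemma pn_one (M : MC E) (x y : E) : pn M 1 x y = M.p x y := by
  show (∑' z, M.p x z * pn M 0 z y) = M.p x y
  rw [tsum_eq_single y]
  · simp [pn]
  · intro z hz
    simp [pn, Ne.symm hz]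

lemma tsum_pn_zero (M : MC E) (f : E → ℝ≥0∞) (x : E) :
    ∑' w, pn M 0 x w * f w = f x := by
  rw [tsum_eq_single x]
  · simp [pn]
  · intro w hw
    simp [pn, hw]

lemma pn_add (M : MC E) (m n : ℕ) (x y : E) :
    pn M (m + n) x y = ∑' z, pn M m x z * pn M n z y := by
  induction m generalizing x with
  | zero =>
    rw [Nat.zero_add, eq_comm, tsum_eq_single x]
    · simp [pn]
    · intro z hz; simp [pn, hz]
  | succ m ih =>
    have hmn : m + 1 + n = (m + n) + 1 := by omega
    rw [hmn]
    show (∑' z, M.p x z * pn M (m + n) z y) = _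
    calc ∑' z, M.p x z * pn M (m + n) z y
        = ∑' z, ∑' w, M.p x z * (pn M m z w * pn M n w y) := by
          refine tsum_congr fun z => ?_
          rw [ih, ← ENNReal.tsum_mul_left]
      _ = ∑' w, ∑' z, M.p x z * (pn M m z w * pn M n w y) := ENNReal.tsum_comm
      _ = ∑' w, (∑' z, M.p x z * pn M m z w) * pn M n w y := by
          refine tsum_congr fun w => ?_
          rw [← ENNReal.tsum_mul_right]
          exact tsum_congr fun z => (mul_assoc _ _ _).symm
      _ = ∑' w, pn M (m + 1) x w * pn M n w y := rfl

lemma pn_succ_right (M : MC E) (n : ℕ) (x y : E) :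
    pn M (n + 1) x y = ∑' z, pn M n x z * M.p z y := by
  have h := pn_add M n 1 x y
  simpa [pn_one] using h

/-- the path-sum with both endpoints pinned. -/
noncomputable def Q (M : MC E) (n : ℕ) (x y : E) : ℝ≥0∞ :=
  ∑' xs : Fin (n + 1) → E,
    (if xs 0 = x then 1 else 0) *
      ((if xs (Fin.last n) = y then 1 else 0) *
        ∏ i : Fin n, M.p (xs i.castSucc) (xs i.succ))

lemma Q_eq (M : MC E) : ∀ (n : ℕ) (x y : E), Q M n x y = pn M n x y := by
  intro n
  induction n with
  | zero =>
    intro x y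
    rw [Q, ← (Equiv.funUnique (Fin 1) E).symm.tsum_eq]
    simp only [Equiv.funUnique_symm_apply]
    rw [tsum_eq_single x]
    · by_cases h : x = y <;> simp [pn, h, eq_comm]
    · intro z hz; simp [hz]
  | succ n ih =>
    intro x y
    have step1 : Q M (n + 1) x y
        = ∑' (z : E) (f : Fin (n + 1) → E),
            (if z = x then 1 else 0) *
              ((if f (Fin.last n) = y then 1 else 0) *
                (M.p z (f 0) * ∏ i : Fin n, M.p (f i.castSucc) (f i.succ))) := by
      rw [Q, ← (Fin.consEquiv fun _ : Fin (n + 2) => E).tsum_eq, ENNReal.tsum_prod']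
      refine tsum_congr fun z => tsum_congr fun f => ?_
      have happ : (Fin.consEquiv fun _ : Fin (n + 2) => E) (z, f) = Fin.cons z f := rfl
      rw [happ]
      have h0 : (Fin.cons z f : Fin (n + 2) → E) 0 = z := rfl
      have hlast : (Fin.cons z f : Fin (n + 2) → E) (Fin.last (n + 1)) = f (Fin.last n) := by
        rw [← Fin.succ_last, Fin.cons_succ]
      have hprod : (∏ i : Fin (n + 1), M.p ((Fin.cons z f : Fin (n + 2) → E) i.castSucc) ((Fin.cons z f : Fin (n + 2) → E) i.succ))
          = M.p z (f 0) * ∏ i : Fin n, M.p (f i.castSucc) (f i.succ) := by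
        rw [Fin.prod_univ_succ]
        simp only [Fin.castSucc_zero, Fin.cons_zero, Fin.cons_succ, ← Fin.succ_castSucc]
      rw [h0, hlast, hprod]
    rw [step1]
    have step2 : (∑' (z : E) (f : Fin (n + 1) → E),
            (if z = x then 1 else 0) *
              ((if f (Fin.last n) = y then 1 else 0) *
                (M.p z (f 0) * ∏ i : Fin n, M.p (f i.castSucc) (f i.succ))))
        = ∑' f : Fin (n + 1) → E,
            (if f (Fin.last n) = y then 1 else 0) *
              (M.p x (f 0) * ∏ i : Fin n, M.p (f i.castSucc) (f i.succ)) := by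
      rw [tsum_eq_single x]
      · simp
      · intro z hz; simp [hz]
    rw [step2]
    show _ = ∑' w, M.p x w * pn M n w y
    calc (∑' f : Fin (n + 1) → E,
            (if f (Fin.last n) = y then 1 else 0) *
              (M.p x (f 0) * ∏ i : Fin n, M.p (f i.castSucc) (f i.succ)))
        = ∑' (f : Fin (n + 1) → E) (w : E),
            (if f 0 = w then 1 else 0) *
              (M.p x w * ((if f (Fin.last n) = y then 1 else 0) *
                ∏ i : Fin n, M.p (f i.castSucc) (f i.succ))) := by
          refine tsum_congr fun f => ?_
          rw [tsum_eq_single (f 0)]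
          · rw [if_pos rfl, one_mul]; ring
          · intro w hw
            rw [if_neg fun h => hw h.symm, zero_mul]
      _ = ∑' (w : E) (f : Fin (n + 1) → E),
            (if f 0 = w then 1 else 0) *
              (M.p x w * ((if f (Fin.last n) = y then 1 else 0) *
                ∏ i : Fin n, M.p (f i.castSucc) (f i.succ))) := ENNReal.tsum_comm
      _ = ∑' w, M.p x w * Q M n w y := by
          refine tsum_congr fun w => ?_
          rw [Q, ← ENNReal.tsum_mul_left]
          refine tsum_congr fun f => ?_
          ring
      _ = ∑' w, M.p x w * pn M n w y := by
          refine tsum_congr fun w => ?_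
          rw [ih]

/-- The key measure-theoretic bound: the law of the chain at time `n` is bounded by the
algebraic `n`-step sums. Needs only countable subadditivity (no measurability). -/
lemma measure_coord_le (M : MC E) (x y : E) (n : ℕ) :
    M.P x {ω | ω n = y} ≤ pn M n x y := by
  have hcover : {ω : ℕ → E | ω n = y} ⊆
      ⋃ xs : Fin (n + 1) → E,
        {ω : ℕ → E | (∀ i : Fin (n + 1), ω i = xs i) ∧ xs (Fin.last n) = y} := by
    intro ω hω
    exact Set.mem_iUnion.2 ⟨fun i => ω i, fun i => rfl, hω⟩
  calc M.P x {ω | ω n = y}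
      ≤ ∑' xs : Fin (n + 1) → E,
          M.P x {ω : ℕ → E | (∀ i : Fin (n + 1), ω i = xs i) ∧ xs (Fin.last n) = y} :=
        (measure_mono hcover).trans (measure_iUnion_le _)
    _ ≤ ∑' xs : Fin (n + 1) → E,
          (if xs 0 = x then 1 else 0) *
            ((if xs (Fin.last n) = y then 1 else 0) *
              ∏ i : Fin n, M.p (xs i.castSucc) (xs i.succ)) := by
        refine ENNReal.tsum_le_tsum fun xs => ?_
        by_cases h : xs (Fin.last n) = y
        · have hset : {ω : ℕ → E | (∀ i : Fin (n + 1), ω i = xs i) ∧ xs (Fin.last n) = y}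
              = {ω : ℕ → E | ∀ i : Fin (n + 1), ω i = xs i} := by
            ext ω; simp [h]
          rw [hset, M.fdd, if_pos h, one_mul]
        · have hset : {ω : ℕ → E | (∀ i : Fin (n + 1), ω i = xs i) ∧ xs (Fin.last n) = y}
              = (∅ : Set (ℕ → E)) := by
            ext ω; simp [h]
          simp [hset, h]
    _ = pn M n x y := Q_eq M n x y

lemma tsum_pn_self_top (M : MC E) (hrec : M.Recurrent) (x : E) :
    ∑' n, pn M n x x = ⊤ := by
  by_contra h
  have htail : ∀ N : ℕ, (1 : ℝ≥0∞) ≤ ∑' k : ℕ, pn M (k + N) x x := by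
    intro N
    have hsub : {ω : ℕ → E | ∀ L : ℕ, ∃ n, L ≤ n ∧ ω n = x} ⊆
        ⋃ k : ℕ, {ω : ℕ → E | ω (k + N) = x} := by
      intro ω hω
      obtain ⟨n, hn, hnx⟩ := hω N
      exact Set.mem_iUnion.2 ⟨n - N, by rwa [Nat.sub_add_cancel hn]⟩
    calc (1 : ℝ≥0∞) = M.P x {ω | ∀ L : ℕ, ∃ n, L ≤ n ∧ ω n = x} := (hrec x).symm
      _ ≤ M.P x (⋃ k : ℕ, {ω : ℕ → E | ω (k + N) = x}) := measure_mono hsub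
      _ ≤ ∑' k : ℕ, M.P x {ω : ℕ → E | ω (k + N) = x} := measure_iUnion_le _
      _ ≤ ∑' k : ℕ, pn M (k + N) x x :=
          ENNReal.tsum_le_tsum fun k => measure_coord_le M x x (k + N)
  have htend := ENNReal.tendsto_sum_nat_add (fun n => pn M n x x) h
  have h10 : (1 : ℝ≥0∞) ≤ 0 := ge_of_tendsto htend (Filter.Eventually.of_forall htail)
  simp at h10

lemma tsum_pn_top (M : MC E) (hirr : M.Irreducible) (hrec : M.Recurrent) (x y : E) :
    ∑' n, pn M n x y = ⊤ := by
  obtain ⟨m, hm⟩ := hirr x y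
  have hpos : 0 < pn M m x y := hm.trans_le (measure_coord_le M x y m)
  have key : ∀ k, pn M k x x * pn M m x y ≤ pn M (k + m) x y := by
    intro k
    rw [pn_add]
    exact ENNReal.le_tsum x
  have h1 : (⊤ : ℝ≥0∞) ≤ ∑' k, pn M (k + m) x y := by
    calc (⊤ : ℝ≥0∞) = (∑' k, pn M k x x) * pn M m x y := by
          rw [tsum_pn_self_top M hrec x, ENNReal.top_mul hpos.ne']
      _ = ∑' k, pn M k x x * pn M m x y := ENNReal.tsum_mul_right.symm
      _ ≤ ∑' k, pn M (k + m) x y := ENNReal.tsum_le_tsum key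
  have h2 : (∑' k, pn M (k + m) x y) ≤ ∑' n, pn M n x y :=
    tsum_comp_le_tsum_of_injective (add_left_injective m) _
  exact top_le_iff.mp (h1.trans h2)

end MCproof

open MCproof in
/-- For an irreducible recurrent Markov chain on a countable state space, every
nonnegative harmonic function is constant. -/
theorem nonneg_harmonic_constant_of_irreducible_recurrent
    {E : Type*} [Countable E] [MeasurableSpace E]
    (M : MC E) (hirr : M.Irreducible) (hrec : M.Recurrent)
    (ψ : E → ℝ≥0) (hharm : ∀ x : E, ∑' y, M.p x y * (ψ y : ℝ≥0∞) = (ψ x : ℝ≥0∞)) :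
    ∀ x y : E, ψ x = ψ y := by
  suffices hle : ∀ x y : E, ψ y ≤ ψ x by
    intro x y; exact le_antisymm (hle y x) (hle x y)
  intro x0 y0
  set φ : E → ℝ≥0∞ := fun z => (ψ z : ℝ≥0∞) with hφdef
  set g : E → ℝ≥0∞ := fun z => min (φ z) (φ x0) with hgdef
  have hφfin : ∀ z, φ z ≠ ⊤ := fun z => coe_ne_top
  have hgle : ∀ z, g z ≤ φ z := fun z => min_le_left _ _
  have hglex0 : ∀ z, g z ≤ φ x0 := fun z => min_le_right _ _
  have hgfin : ∀ z, g z ≠ ⊤ := fun z => ((hglex0 z).trans_lt (lt_top_iff_ne_top.2 (hφfin x0))).ne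
  set Pg : E → ℝ≥0∞ := fun z => ∑' w, M.p z w * g w with hPgdef
  have hPg_le : ∀ z, Pg z ≤ g z := by
    intro z
    refine le_min ?_ ?_
    · calc Pg z ≤ ∑' w, M.p z w * φ w :=
            ENNReal.tsum_le_tsum fun w => mul_le_mul_right (hgle w) _
        _ = φ z := hharm z
    · calc Pg z ≤ ∑' w, M.p z w * φ x0 :=
            ENNReal.tsum_le_tsum fun w => mul_le_mul_right (hglex0 w) _
        _ = (∑' w, M.p z w) * φ x0 := ENNReal.tsum_mul_right
        _ = φ x0 := by rw [M.stochastic z, one_mul]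
  set h : E → ℝ≥0∞ := fun z => g z - Pg z with hhdef
  have hPgh : ∀ z, Pg z + h z = g z := fun z => add_tsub_cancel_of_le (hPg_le z)
  -- the telescoping iterate bound
  have hiter : ∀ n : ℕ,
      (∑' w, pn M n x0 w * g w) + ∑ k ∈ Finset.range n, ∑' w, pn M k x0 w * h w ≤ g x0 := by
    intro n
    induction n with
    | zero => simp [tsum_pn_zero]
    | succ n ih =>
      have e1 : (∑' w, pn M (n + 1) x0 w * g w) + ∑' w, pn M n x0 w * h w
          = ∑' w, pn M n x0 w * g w := by
        have e2 : (∑' w, pn M (n + 1) x0 w * g w) = ∑' z, pn M n x0 z * Pg z := by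
          calc ∑' w, pn M (n + 1) x0 w * g w
              = ∑' w, ∑' z, pn M n x0 z * M.p z w * g w := by
                refine tsum_congr fun w => ?_
                rw [pn_succ_right, ← ENNReal.tsum_mul_right]
            _ = ∑' z, ∑' w, pn M n x0 z * (M.p z w * g w) := by
                rw [← ENNReal.tsum_comm]
                exact tsum_congr fun w => tsum_congr fun z => mul_assoc _ _ _
            _ = ∑' z, pn M n x0 z * Pg z := tsum_congr fun z => ENNReal.tsum_mul_left
        rw [e2, ← ENNReal.tsum_add]
        refine tsum_congr fun z => ?_
        rw [← mul_add, hPgh]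
      calc (∑' w, pn M (n + 1) x0 w * g w)
            + ∑ k ∈ Finset.range (n + 1), ∑' w, pn M k x0 w * h w
          = ((∑' w, pn M (n + 1) x0 w * g w) + ∑' w, pn M n x0 w * h w)
            + ∑ k ∈ Finset.range n, ∑' w, pn M k x0 w * h w := by
            rw [Finset.sum_range_succ]; ring
        _ = (∑' w, pn M n x0 w * g w) + ∑ k ∈ Finset.range n, ∑' w, pn M k x0 w * h w := by
            rw [e1]
        _ ≤ g x0 := ih
  have hsum_h : ∀ n : ℕ, ∑ k ∈ Finset.range n, ∑' w, pn M k x0 w * h w ≤ g x0 :=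
    fun n => le_add_self.trans (hiter n)
  -- h vanishes identically
  have hzero : ∀ y, h y = 0 := by
    intro y
    by_contra hy
    have hS : (∑' k : ℕ, pn M k x0 y * h y) = ⊤ := by
      rw [ENNReal.tsum_mul_right, tsum_pn_top M hirr hrec x0 y, ENNReal.top_mul hy]
    have hle2 : (∑' k : ℕ, pn M k x0 y * h y) ≤ g x0 := by
      rw [ENNReal.tsum_eq_iSup_sum]
      refine iSup_le fun s => ?_
      obtain ⟨n, hn⟩ : ∃ n : ℕ, s ⊆ Finset.range n :=
        ⟨s.sup id + 1, fun a ha => Finset.mem_range.2 (Nat.lt_succ_of_le (Finset.le_sup (f := id) ha))⟩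
      calc ∑ k ∈ s, pn M k x0 y * h y
          ≤ ∑ k ∈ Finset.range n, pn M k x0 y * h y := Finset.sum_le_sum_of_subset hn
        _ ≤ ∑ k ∈ Finset.range n, ∑' w, pn M k x0 w * h w :=
            Finset.sum_le_sum fun k _ => ENNReal.le_tsum y
        _ ≤ g x0 := hsum_h n
    rw [hS] at hle2
    exact hgfin x0 (top_le_iff.mp hle2)
  have hgh : ∀ z, Pg z = g z := by
    intro z
    have := hPgh z
    rwa [hzero z, add_zero] at this
  -- d := φ - g is nonnegative harmonic, vanishing at x0
  set d : E → ℝ≥0∞ := fun z => φ z - g z with hddef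
  have hple : ∀ z w, M.p z w ≠ ⊤ := by
    intro z w
    have : M.p z w ≤ 1 := by
      rw [← M.stochastic z]; exact ENNReal.le_tsum w
    exact (this.trans_lt ENNReal.one_lt_top).ne
  have hPd : ∀ z, (∑' w, M.p z w * d w) = d z := by
    intro z
    have h1 : ∀ w, M.p z w * d w = M.p z w * φ w - M.p z w * g w := fun w =>
      ENNReal.mul_sub fun _ _ => hple z w
    rw [tsum_congr h1]
    have hadd : (∑' w, (M.p z w * φ w - M.p z w * g w)) + Pg z = φ z := by
      rw [← ENNReal.tsum_add]
      calc (∑' w, ((M.p z w * φ w - M.p z w * g w) + M.p z w * g w))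
          = ∑' w, M.p z w * φ w :=
            tsum_congr fun w => tsub_add_cancel_of_le (mul_le_mul_right (hgle w) _)
        _ = φ z := hharm z
    have hPgfin : Pg z ≠ ⊤ := by rw [hgh z]; exact hgfin z
    have := ENNReal.eq_sub_of_add_eq hPgfin hadd
    rw [this]
    show φ z - Pg z = φ z - g z
    rw [hgh z]
  have hditer : ∀ n : ℕ, (∑' w, pn M n x0 w * d w) = d x0 := by
    intro n
    induction n with
    | zero => exact tsum_pn_zero M d x0
    | succ n ih =>
      calc ∑' w, pn M (n + 1) x0 w * d w
          = ∑' w, ∑' z, pn M n x0 z * M.p z w * d w := by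
            refine tsum_congr fun w => ?_
            rw [pn_succ_right, ← ENNReal.tsum_mul_right]
        _ = ∑' z, ∑' w, pn M n x0 z * (M.p z w * d w) := by
            rw [← ENNReal.tsum_comm]
            exact tsum_congr fun w => tsum_congr fun z => mul_assoc _ _ _
        _ = ∑' z, pn M n x0 z * (∑' w, M.p z w * d w) := tsum_congr fun z => ENNReal.tsum_mul_left
        _ = ∑' z, pn M n x0 z * d z := by
            refine tsum_congr fun z => ?_; rw [hPd z]
        _ = d x0 := ih
  have hd0 : d x0 = 0 := by
    show φ x0 - min (φ x0) (φ x0) = 0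
    rw [min_self, tsub_self]
  obtain ⟨m, hm⟩ := hirr x0 y0
  have hpos : 0 < pn M m x0 y0 := hm.trans_le (measure_coord_le M x0 y0 m)
  have hterm0 : pn M m x0 y0 * d y0 = 0 := by
    have hle3 := ENNReal.le_tsum (f := fun w => pn M m x0 w * d w) y0
    rw [hditer m, hd0] at hle3
    exact le_antisymm hle3 zero_le
  have hdy : d y0 = 0 := by
    rcases mul_eq_zero.mp hterm0 with h' | h'
    · exact absurd h' hpos.ne'
    · exact h'
  have hfinal : φ y0 ≤ φ x0 := (tsub_eq_zero_iff_le.mp hdy).trans (hglex0 y0)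
  simp only [hφdef] at hfinal
  exact_mod_cast hfinal
end

section
/- For an irreducible recurrent Markov chain, the Green function of the chain killed just before the first return time to x0 is finite: G_{x0}(x,y) := E_x[L^y_{T'_{x0}-1}] < ∞ for all x, y ∈ E, where T'_{x0} = inf{n ≥ 1 : X_n = x0}. Moreover G_{x0}(x0, y) > 0 for all y ∈ E. -/
open MeasureTheory ENNReal
open scoped Classical NNReal

/-- Green function of the chain killed just before the first return time `T'_{x0}`:
`G_{x0}(x,y) = E_x[L^y_{T'_{x0} - 1}]`, the expected number of visits to `y` at times `n`
such that `x0` has not been visited at any time `1 ≤ k ≤ n`. -/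
noncomputable def MC.green {E : Type*} [MeasurableSpace E] (M : MC E) (x0 x y : E) : ℝ≥0∞ :=
  ∫⁻ ω, (∑' n : ℕ, if ω n = y ∧ ∀ k, 1 ≤ k → k ≤ n → ω k ≠ x0 then (1 : ℝ≥0∞) else 0) ∂ M.P x

set_option linter.unusedSectionVars false

/-- A countable partition whose outer measures sum to the total mass consists of
null-measurable pieces. -/
lemma nullMeasurable_of_partition {α ι : Type*} [MeasurableSpace α] [Countable ι]
    (μ : Measure α) [IsProbabilityMeasure μ] (A : ι → Set α)
    (hdisj : Pairwise (Function.onFun Disjoint A)) (hcover : (⋃ i, A i) = Set.univ)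
    (hsum : ∑' i, μ (A i) = 1) : ∀ i, NullMeasurableSet (A i) μ := by
  intro i
  set B : ι → Set α := fun j => MeasureTheory.toMeasurable μ (A j) with hB
  have hBmeas : ∀ j, MeasurableSet (B j) := fun j => measurableSet_toMeasurable μ (A j)
  have hABsub : ∀ j, A j ⊆ B j := fun j => subset_toMeasurable μ (A j)
  have hBμ : ∀ j, μ (B j) = μ (A j) := fun j => measure_toMeasurable (A j)
  set U : Set α := ⋃ j, if j = i then ∅ else B j with hU
  have hUmeas : MeasurableSet U := MeasurableSet.iUnion (fun j => by
    by_cases h : j = i <;> simp [h, hBmeas j])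
  have hUle : μ U ≤ ∑' j, if j = i then 0 else μ (A j) := by
    refine le_trans (measure_iUnion_le _) ?_
    refine ENNReal.tsum_le_tsum (fun j => ?_)
    by_cases h : j = i <;> simp [h, (hBμ j).le]
  -- μ univ ≤ μ (B i \ U) + μ U
  have hcov2 : (Set.univ : Set α) ⊆ (B i \ U) ∪ U := by
    rw [← hcover]
    intro ω hω
    by_cases hU' : ω ∈ U
    · exact Or.inr hU'
    · left
      refine ⟨?_, hU'⟩
      rcases Set.mem_iUnion.1 hω with ⟨j, hj⟩
      by_cases h : j = i
      · exact hABsub i (h ▸ hj)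
      · exfalso
        exact hU' (Set.mem_iUnion.2 ⟨j, by simp [h, hABsub j hj]⟩)
  have h1 : 1 ≤ μ (B i \ U) + μ U := by
    calc (1:ℝ≥0∞) = μ Set.univ := (measure_univ).symm
      _ ≤ μ ((B i \ U) ∪ U) := measure_mono hcov2
      _ ≤ μ (B i \ U) + μ U := measure_union_le _ _
  have h2 : μ (B i \ U) + μ (B i ∩ U) = μ (B i) := measure_diff_add_inter (B i) hUmeas
  have h3 : μ (B i) + μ U ≤ 1 := by
    calc μ (B i) + μ U ≤ μ (A i) + ∑' j, if j = i then 0 else μ (A j) := by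
          exact add_le_add (hBμ i).le hUle
      _ = ∑' j, μ (A j) := (ENNReal.tsum_eq_add_tsum_ite (f := fun j => μ (A j)) i).symm
      _ = 1 := hsum
  -- conclude μ (B i ∩ U) = 0
  have hfin : μ (B i \ U) + μ U ≠ ⊤ := by
    refine ne_top_of_le_ne_top (by norm_num : (1:ℝ≥0∞) ≠ ⊤) ?_
    calc μ (B i \ U) + μ U ≤ μ (B i) + μ U := add_le_add (measure_mono Set.diff_subset) le_rfl
      _ ≤ 1 := h3
  have hBU0 : μ (B i ∩ U) = 0 := by
    have hle : (μ (B i \ U) + μ U) + μ (B i ∩ U) ≤ (μ (B i \ U) + μ U) + 0 := by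
      rw [add_zero]
      calc (μ (B i \ U) + μ U) + μ (B i ∩ U) = (μ (B i \ U) + μ (B i ∩ U)) + μ U := by ring
        _ = μ (B i) + μ U := by rw [h2]
        _ ≤ 1 := h3
        _ ≤ μ (B i \ U) + μ U := h1
    exact nonpos_iff_eq_zero.1 ((ENNReal.add_le_add_iff_left hfin).1 hle)
  -- B i \ A i is null
  have hdiffnull : μ (B i \ A i) = 0 := by
    refine measure_mono_null ?_ hBU0
    intro ω hω
    refine ⟨hω.1, ?_⟩
    have hωmem : ω ∈ ⋃ j, A j := hcover ▸ Set.mem_univ ω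
    rcases Set.mem_iUnion.1 hωmem with ⟨j, hj⟩
    have hji : j ≠ i := fun h => hω.2 (h ▸ hj)
    exact Set.mem_iUnion.2 ⟨j, by simp [hji, hABsub j hj]⟩
  refine ⟨B i, hBmeas i, ?_⟩
  rw [MeasureTheory.ae_eq_set]
  constructor
  · rw [Set.diff_eq_empty.2 (hABsub i)]; exact measure_empty
  · exact hdiffnull

namespace MCAux

variable {E : Type*} [Countable E] [MeasurableSpace E] (M : MC E)

/-- Cylinder set. -/
def cyl (n : ℕ) (xs : Fin (n + 1) → E) : Set (ℕ → E) := {ω | ∀ i : Fin (n + 1), ω i = xs i}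

/-- Weight of a path. -/
noncomputable def wt (n : ℕ) (xs : Fin (n + 1) → E) : ℝ≥0∞ :=
  ∏ i : Fin n, M.p (xs i.castSucc) (xs i.succ)

lemma measure_cyl (x : E) (n : ℕ) (xs : Fin (n + 1) → E) :
    M.P x (cyl n xs) = (if xs 0 = x then 1 else 0) * wt M n xs := M.fdd x n xs

lemma wt_cons (n : ℕ) (w : E) (ys : Fin (n + 1) → E) :
    wt M (n + 1) (Fin.cons w ys) = M.p w (ys 0) * wt M n ys := by
  rw [wt, Fin.prod_univ_succ]
  rfl

/-- Fiberwise regrouping of a tsum. -/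
lemma tsum_fiber {α β : Type*} [Countable α] [Countable β] (g : β → α) (f : β → ℝ≥0∞) :
    ∑' a : α, ∑' b : β, (if g b = a then f b else 0) = ∑' b, f b := by
  rw [ENNReal.tsum_comm]
  congr 1
  funext b
  calc ∑' a, (if g b = a then f b else 0) = ∑' a, (if a = g b then f b else 0) := by
        congr 1; funext a; by_cases h : a = g b <;> simp [h, eq_comm]
    _ = f b := tsum_ite_eq (g b) (fun _ => f b)

lemma sum_wt (n : ℕ) : ∀ x : E, ∑' xs : Fin (n + 1) → E, (if xs 0 = x then wt M n xs else 0) = 1 := by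
  induction n with
  | zero =>
    intro x
    rw [← ((Equiv.funUnique (Fin 1) E).symm).tsum_eq]
    have h : ∀ y : E, (if ((Equiv.funUnique (Fin 1) E).symm y) 0 = x
        then wt M 0 ((Equiv.funUnique (Fin 1) E).symm y) else 0) = if y = x then (1:ℝ≥0∞) else 0 := by
      intro y
      have : wt M 0 ((Equiv.funUnique (Fin 1) E).symm y) = 1 := by simp [wt]
      rw [this]
      rfl
    rw [tsum_congr h]
    exact tsum_ite_eq x 1
  | succ n ih =>
    intro x
    rw [← (Fin.consEquiv (fun _ : Fin (n + 2) => E)).tsum_eq]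
    have hp : ∀ (a : E) (ys : Fin (n+1) → E),
        (Fin.consEquiv (fun _ : Fin (n + 2) => E)) (a, ys) = Fin.cons a ys := fun _ _ => rfl
    calc ∑' q : E × (Fin (n+1) → E),
          (if (Fin.consEquiv (fun _ : Fin (n + 2) => E)) q 0 = x then
            wt M (n+1) ((Fin.consEquiv (fun _ : Fin (n + 2) => E)) q) else 0)
        = ∑' (a : E) (ys : Fin (n+1) → E),
            (if a = x then M.p a (ys 0) * wt M n ys else 0) := by
          rw [← ENNReal.tsum_prod]
          congr 1; funext q
          rw [hp q.1 q.2, wt_cons]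
          simp [Fin.cons_zero]
      _ = ∑' ys : Fin (n+1) → E, M.p x (ys 0) * wt M n ys := by
          calc ∑' (a : E) (ys : Fin (n+1) → E), (if a = x then M.p a (ys 0) * wt M n ys else 0)
              = ∑' (a : E), (if a = x then ∑' ys : Fin (n+1) → E, M.p x (ys 0) * wt M n ys else 0) := by
                congr 1; funext a
                by_cases h : a = x
                · subst h; simp
                · simp [h]
            _ = _ := tsum_ite_eq x _
      _ = 1 := by
          rw [← tsum_fiber (fun ys : Fin (n+1) → E => ys 0) (fun ys => M.p x (ys 0) * wt M n ys)]
          calc ∑' (a : E) (ys : Fin (n+1) → E), (if ys 0 = a then M.p x (ys 0) * wt M n ys else 0)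
              = ∑' (a : E), M.p x a * ∑' ys : Fin (n+1) → E, (if ys 0 = a then wt M n ys else 0) := by
                congr 1; funext a
                rw [← ENNReal.tsum_mul_left]
                congr 1; funext ys
                by_cases h : ys 0 = a <;> simp [h]
            _ = ∑' a : E, M.p x a := by
                congr 1; funext a; rw [ih a, mul_one]
            _ = 1 := M.stochastic x



lemma cyl_disjoint {n : ℕ} {xs ys : Fin (n + 1) → E} (h : xs ≠ ys) :
    Disjoint (cyl n xs) (cyl n ys) := by
  rw [Set.disjoint_left]
  intro ω hω hω'
  exact h (funext fun i => (hω i).symm.trans (hω' i))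

lemma cyl_cover (n : ℕ) : (⋃ xs : Fin (n + 1) → E, cyl n xs) = Set.univ := by
  refine Set.eq_univ_of_forall fun ω => Set.mem_iUnion.2 ⟨fun i => ω i, fun i => rfl⟩

lemma cyl_pairwise (n : ℕ) :
    Pairwise (Function.onFun Disjoint (fun xs : Fin (n + 1) → E => cyl n xs)) :=
  fun _ _ h => cyl_disjoint h


variable (M : MC E)

lemma sum_measure_cyl (x : E) (n : ℕ) :
    ∑' xs : Fin (n + 1) → E, M.P x (cyl n xs) = 1 := by
  calc ∑' xs : Fin (n + 1) → E, M.P x (cyl n xs)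
      = ∑' xs : Fin (n + 1) → E, (if xs 0 = x then wt M n xs else 0) := by
        congr 1; funext xs
        rw [measure_cyl]
        by_cases h : xs 0 = x <;> simp [h]
    _ = 1 := sum_wt M n x

lemma cyl_nullMeasurable (x : E) (n : ℕ) (xs : Fin (n + 1) → E) :
    NullMeasurableSet (cyl n xs) (M.P x) := by
  haveI := M.prob x
  exact nullMeasurable_of_partition (M.P x) (fun xs => cyl n xs) (cyl_pairwise n)
    (cyl_cover n) (sum_measure_cyl M x n) xs

/-- Measure of a union of cylinders over a set of paths. -/
lemma measure_iUnion_cyl (x : E) (n : ℕ) (S : Set (Fin (n + 1) → E)) :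
    M.P x (⋃ xs : S, cyl n (xs : Fin (n + 1) → E)) =
      ∑' xs : S, M.P x (cyl n (xs : Fin (n + 1) → E)) := by
  haveI := M.prob x
  refine measure_iUnion₀ ?_ (fun xs => cyl_nullMeasurable M x n xs)
  intro xs ys h
  exact (cyl_disjoint (fun hh => h (Subtype.ext hh))).aedisjoint

lemma nullMeasurable_iUnion_cyl (x : E) (n : ℕ) (S : Set (Fin (n + 1) → E)) :
    NullMeasurableSet (⋃ xs : S, cyl n (xs : Fin (n + 1) → E)) (M.P x) :=
  NullMeasurableSet.iUnion (fun xs => cyl_nullMeasurable M x n xs)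

/-- The event: at time `n` we are at `y`, not having touched `x0` at times `1..n`. -/
def av (x0 y : E) (n : ℕ) : Set (ℕ → E) :=
  {ω | ω n = y ∧ ∀ k, 1 ≤ k → k ≤ n → ω k ≠ x0}

/-- The corresponding set of good finite paths. -/
def Gd (x0 y : E) (n : ℕ) : Set (Fin (n + 1) → E) :=
  {xs | xs (Fin.last n) = y ∧ ∀ k : Fin (n + 1), 1 ≤ (k : ℕ) → xs k ≠ x0}

lemma av_eq (x0 y : E) (n : ℕ) :
    av x0 y n = ⋃ xs : Gd x0 y n, cyl n (xs : Fin (n + 1) → E) := by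
  ext ω
  constructor
  · rintro ⟨hy, hav⟩
    refine Set.mem_iUnion.2 ⟨⟨fun i => ω i, ?_, ?_⟩, fun i => rfl⟩
    · show ω ((Fin.last n : ℕ)) = y
      simpa using hy
    · intro k hk
      exact hav k hk (by omega : (k:ℕ) ≤ n)
  · intro h
    rcases Set.mem_iUnion.1 h with ⟨⟨xs, hxs1, hxs2⟩, hω⟩
    constructor
    · have h2 := hω (Fin.last n)
      simp only [Fin.val_last] at h2
      rw [h2]; exact hxs1
    · intro k hk1 hk2
      have hk : k < n + 1 := by omega
      have := hω ⟨k, hk⟩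
      rw [show ((⟨k, hk⟩ : Fin (n+1)) : ℕ) = k from rfl] at this
      rw [this]
      exact hxs2 ⟨k, hk⟩ hk1

lemma av_nullMeasurable (x0 y x : E) (n : ℕ) :
    NullMeasurableSet (av x0 y n) (M.P x) := by
  rw [av_eq]
  exact nullMeasurable_iUnion_cyl M x n (Gd x0 y n)

lemma measure_av (x0 y x : E) (n : ℕ) :
    M.P x (av x0 y n) = ∑' xs : Gd x0 y n, M.P x (cyl n (xs : Fin (n + 1) → E)) := by
  rw [av_eq]
  exact measure_iUnion_cyl M x n (Gd x0 y n)

lemma aemeasurable_indicator_nm {μ : Measure (ℕ → E)} {A : Set (ℕ → E)}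
    (h : NullMeasurableSet A μ) :
    AEMeasurable (A.indicator (fun _ => (1:ℝ≥0∞))) μ := by
  refine AEMeasurable.congr
    (measurable_one.indicator (measurableSet_toMeasurable μ A)).aemeasurable ?_
  have hae : MeasureTheory.toMeasurable μ A =ᵐ[μ] A := h.toMeasurable_ae_eq
  have := Filter.eventuallyEq_set.1 hae
  filter_upwards [this] with ω hω
  by_cases hA : ω ∈ A
  · simp [Set.indicator_apply, hA, hω.2 hA]
  · simp only [Set.indicator_apply, hA, if_false]
    have : ω ∉ toMeasurable μ A := fun hh => hA (hω.1 hh)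
    simp [this]

lemma green_eq (x0 x y : E) :
    M.green x0 x y = ∑' n, M.P x (av x0 y n) := by
  have h1 : ∀ ω : ℕ → E,
      (∑' n : ℕ, if ω n = y ∧ ∀ k, 1 ≤ k → k ≤ n → ω k ≠ x0 then (1:ℝ≥0∞) else 0)
        = ∑' n : ℕ, (av x0 y n).indicator (fun _ => (1:ℝ≥0∞)) ω := by
    intro ω
    congr 1; funext n
    simp only [Set.indicator_apply, av, Set.mem_setOf_eq]
    congr
  rw [MC.green, lintegral_congr h1, lintegral_tsum
    (fun n => aemeasurable_indicator_nm (av_nullMeasurable M x0 y x n))]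
  congr 1; funext n
  rw [lintegral_indicator_const₀ (av_nullMeasurable M x0 y x n), one_mul]

def ofFin (n : ℕ) (xs : Fin (n + 1) → E) : ℕ → E := fun k => xs ⟨min k n, by omega⟩

lemma ofFin_eq {n k : ℕ} (hk : k ≤ n) (xs : Fin (n + 1) → E) :
    ofFin n xs k = xs ⟨k, by omega⟩ := by
  unfold ofFin
  congr 1
  exact Fin.ext (by simp [Nat.min_eq_left hk])

lemma wt_eq_prod_range (n : ℕ) (xs : Fin (n + 1) → E) :
    wt M n xs = ∏ k ∈ Finset.range n, M.p (ofFin n xs k) (ofFin n xs (k + 1)) := by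
  rw [← Fin.prod_univ_eq_prod_range (fun k => M.p (ofFin n xs k) (ofFin n xs (k + 1))) n]
  refine Finset.prod_congr rfl (fun i _ => ?_)
  have h1 : ofFin n xs (i : ℕ) = xs i.castSucc := by
    rw [ofFin_eq (by omega : (i : ℕ) ≤ n)]
    exact congrArg xs (Fin.ext rfl)
  have h2 : ofFin n xs ((i : ℕ) + 1) = xs i.succ := by
    rw [ofFin_eq (by omega : (i : ℕ) + 1 ≤ n)]
    exact congrArg xs (Fin.ext rfl)
  rw [h1, h2]

lemma wt_factor_ne {n : ℕ} {xs : Fin (n + 1) → E} (h : wt M n xs ≠ 0) (i : Fin n) :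
    M.p (xs i.castSucc) (xs i.succ) ≠ 0 :=
  Finset.prod_ne_zero_iff.1 h i (Finset.mem_univ i)

/-- Subpath from index `a` to index `b`. -/
def subpath (n a b : ℕ) (xs : Fin (n + 1) → E) : Fin (b - a + 1) → E :=
  fun i => xs ⟨min (a + i) n, by omega⟩

lemma subpath_apply {n a b : ℕ} (hab : a ≤ b) (hb : b ≤ n) (xs : Fin (n + 1) → E) (i : Fin (b - a + 1)) :
    subpath n a b xs i = xs ⟨a + i, by have := i.isLt; omega⟩ := by
  unfold subpath
  exact congrArg xs (Fin.ext (by have := i.isLt; simp; omega))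

lemma wt_subpath_ne {n a b : ℕ} (hab : a ≤ b) (hb : b ≤ n) {xs : Fin (n + 1) → E}
    (h : wt M n xs ≠ 0) : wt M (b - a) (subpath n a b xs) ≠ 0 := by
  rw [wt]
  rw [Finset.prod_ne_zero_iff]
  intro j _
  have h1 : subpath n a b xs j.castSucc = xs (⟨a + j, by have := j.isLt; omega⟩ : Fin n).castSucc := by
    rw [subpath_apply hab hb]
    exact congrArg xs (Fin.ext (by simp))
  have h2 : subpath n a b xs j.succ = xs (⟨a + j, by have := j.isLt; omega⟩ : Fin n).succ := by
    rw [subpath_apply hab hb]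
    exact congrArg xs (Fin.ext (by simp; omega))
  rw [h1, h2]
  exact wt_factor_ne M h _

/-- Concatenation of two paths, as a function on `ℕ`. -/
def catN (n m : ℕ) (xs : Fin (n + 1) → E) (zs : Fin (m + 1) → E) : ℕ → E :=
  fun k => if k ≤ n then ofFin n xs k else ofFin m zs (k - n)

/-- Concatenation of two paths. -/
def cat (n m : ℕ) (xs : Fin (n + 1) → E) (zs : Fin (m + 1) → E) : Fin (n + m + 1) → E :=
  fun i => catN n m xs zs i

lemma catN_low {n m k : ℕ} (hk : k ≤ n) (xs : Fin (n + 1) → E) (zs : Fin (m + 1) → E) :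
    catN n m xs zs k = xs ⟨k, by omega⟩ := by
  unfold catN
  rw [if_pos hk, ofFin_eq hk]

lemma catN_high {n m k : ℕ} (hk : n ≤ k) (hk2 : k ≤ n + m) (xs : Fin (n + 1) → E)
    (zs : Fin (m + 1) → E) (hlink : zs 0 = xs (Fin.last n)) :
    catN n m xs zs k = zs ⟨k - n, by omega⟩ := by
  unfold catN
  by_cases h : k ≤ n
  · have hkn : k = n := le_antisymm h hk
    rw [if_pos h, ofFin_eq h]
    subst hkn
    rw [show xs ⟨k, by omega⟩ = xs (Fin.last k) from congrArg xs (Fin.ext rfl)]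
    rw [← hlink]
    exact congrArg zs (Fin.ext (by simp))
  · rw [if_neg h, ofFin_eq (by omega : k - n ≤ m)]

lemma wt_cat {n m : ℕ} (xs : Fin (n + 1) → E) (zs : Fin (m + 1) → E)
    (hlink : zs 0 = xs (Fin.last n)) :
    wt M (n + m) (cat n m xs zs) = wt M n xs * wt M m zs := by
  have hterm : ∀ i : Fin (n + m),
      M.p ((cat n m xs zs) i.castSucc) ((cat n m xs zs) i.succ)
        = M.p (catN n m xs zs i) (catN n m xs zs ((i : ℕ) + 1)) := by
    intro i
    rfl
  calc wt M (n + m) (cat n m xs zs)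
      = ∏ i : Fin (n + m), M.p (catN n m xs zs i) (catN n m xs zs ((i : ℕ) + 1)) :=
        Finset.prod_congr rfl (fun i _ => hterm i)
    _ = ∏ k ∈ Finset.range (n + m), M.p (catN n m xs zs k) (catN n m xs zs (k + 1)) :=
        Fin.prod_univ_eq_prod_range (fun k => M.p (catN n m xs zs k) (catN n m xs zs (k + 1))) (n + m)
    _ = (∏ k ∈ Finset.range n, M.p (catN n m xs zs k) (catN n m xs zs (k + 1))) *
        (∏ j ∈ Finset.range m, M.p (catN n m xs zs (n + j)) (catN n m xs zs (n + j + 1))) :=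
        Finset.prod_range_add _ n m
    _ = wt M n xs * wt M m zs := by
        congr 1
        · rw [wt_eq_prod_range]
          refine Finset.prod_congr rfl (fun k hk => ?_)
          have hk' : k < n := Finset.mem_range.1 hk
          rw [catN_low (by omega) xs zs, catN_low (by omega) xs zs,
            ofFin_eq (by omega : k ≤ n), ofFin_eq (by omega : k + 1 ≤ n)]
        · rw [wt_eq_prod_range]
          refine Finset.prod_congr rfl (fun j hj => ?_)
          have hj' : j < m := Finset.mem_range.1 hj
          rw [catN_high (by omega) (by omega) xs zs hlink,
            catN_high (by omega) (by omega) xs zs hlink,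
            ofFin_eq (by omega : j ≤ m), ofFin_eq (by omega : j + 1 ≤ m)]
          congr 2
          · exact Fin.ext (show n + j - n = j by omega)
          · exact Fin.ext (show n + j + 1 - n = j + 1 by omega)

lemma cat_zero {n m : ℕ} (xs : Fin (n + 1) → E) (zs : Fin (m + 1) → E) :
    cat n m xs zs 0 = xs 0 := by
  show catN n m xs zs ((0 : Fin (n + m + 1)) : ℕ) = xs 0
  rw [show (((0 : Fin (n + m + 1))) : ℕ) = 0 from rfl, catN_low (by omega) xs zs]
  exact congrArg xs (Fin.ext rfl)

lemma cat_low {n m k : ℕ} (hk : k ≤ n) (xs : Fin (n + 1) → E) (zs : Fin (m + 1) → E) :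
    cat n m xs zs ⟨k, by omega⟩ = xs ⟨k, by omega⟩ := catN_low hk xs zs

lemma cat_inj {n m : ℕ} (zs : Fin (m + 1) → E) {xs xs' : Fin (n + 1) → E}
    (h : cat n m xs zs = cat n m xs' zs) : xs = xs' := by
  funext i
  have h2 := congrFun h ⟨(i : ℕ), by have := i.isLt; omega⟩
  rw [cat_low (by have := i.isLt; omega : (i:ℕ) ≤ n) xs zs,
      cat_low (by have := i.isLt; omega : (i:ℕ) ≤ n) xs' zs] at h2
  calc xs i = xs ⟨i, by have := i.isLt; omega⟩ := congrArg xs (Fin.ext rfl)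
    _ = xs' ⟨i, by have := i.isLt; omega⟩ := h2
    _ = xs' i := congrArg xs' (Fin.ext rfl)


lemma hit_subset (y : E) (n : ℕ) :
    {ω : ℕ → E | ω n = y} = ⋃ xs : {xs : Fin (n + 1) → E | xs (Fin.last n) = y},
      cyl n (xs : Fin (n + 1) → E) := by
  ext ω
  constructor
  · intro hω
    refine Set.mem_iUnion.2 ⟨⟨fun i => ω i, ?_⟩, fun i => rfl⟩
    show ω ((Fin.last n : ℕ)) = y
    simpa using hω
  · intro h
    rcases Set.mem_iUnion.1 h with ⟨⟨xs, hxs⟩, hω⟩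
    show ω n = y
    have := hω (Fin.last n)
    simp only [Fin.val_last] at this
    rw [this]
    exact hxs

lemma exists_pos_path {x y : E} {n : ℕ} (h : 0 < M.P x {ω | ω n = y}) :
    ∃ xs : Fin (n + 1) → E, xs 0 = x ∧ xs (Fin.last n) = y ∧ wt M n xs ≠ 0 := by
  by_contra hno
  push_neg at hno
  have hzero : ∀ xs : {xs : Fin (n + 1) → E | xs (Fin.last n) = y},
      M.P x (cyl n (xs : Fin (n + 1) → E)) = 0 := by
    rintro ⟨xs, hxs⟩
    rw [measure_cyl]
    by_cases h0 : xs 0 = x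
    · rw [hno xs h0 hxs]
      simp
    · simp [h0]
  have hle : M.P x {ω | ω n = y} ≤ 0 := by
    calc M.P x {ω | ω n = y}
        = M.P x (⋃ xs : {xs : Fin (n + 1) → E | xs (Fin.last n) = y},
            cyl n (xs : Fin (n + 1) → E)) := by rw [hit_subset]
      _ ≤ ∑' xs : {xs : Fin (n + 1) → E | xs (Fin.last n) = y},
            M.P x (cyl n (xs : Fin (n + 1) → E)) := measure_iUnion_le _
      _ = 0 := by
          rw [show (0:ℝ≥0∞) = ∑' _ : {xs : Fin (n + 1) → E | xs (Fin.last n) = y}, (0:ℝ≥0∞) by simp]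
          exact tsum_congr hzero
  exact absurd h (by simpa using hle)

lemma pos_av_self (x0 : E) : 0 < M.P x0 (av x0 x0 0) := by
  have hsub : cyl 0 (fun _ => x0) ⊆ av x0 x0 0 := by
    intro ω hω
    exact ⟨hω 0, fun k hk1 hk2 => by omega⟩
  have hval : M.P x0 (cyl 0 (fun _ : Fin 1 => x0)) = 1 := by
    rw [measure_cyl]
    simp [wt]
  calc (0:ℝ≥0∞) < 1 := by norm_num
    _ = M.P x0 (cyl 0 (fun _ : Fin 1 => x0)) := hval.symm
    _ ≤ M.P x0 (av x0 x0 0) := measure_mono hsub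

lemma pos_av (x0 y : E) (hy : y ≠ x0) :
    ∀ n, ∀ xs : Fin (n + 1) → E, xs 0 = x0 → xs (Fin.last n) = y → wt M n xs ≠ 0 →
      ∃ n', 0 < M.P x0 (av x0 y n') := by
  intro n
  induction n using Nat.strong_induction_on with
  | _ n ih =>
    intro xs h0 hl hw
    by_cases hgood : ∀ k : Fin (n + 1), 1 ≤ (k : ℕ) → xs k ≠ x0
    · refine ⟨n, ?_⟩
      have hmem : xs ∈ Gd x0 y n := ⟨hl, hgood⟩
      have hsub : cyl n xs ⊆ av x0 y n := by
        rw [av_eq]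
        exact Set.subset_iUnion (fun q : Gd x0 y n => cyl n (q : Fin (n + 1) → E)) ⟨xs, hmem⟩
      have hpos : 0 < M.P x0 (cyl n xs) := by
        rw [measure_cyl, h0, if_pos rfl, one_mul]
        exact pos_iff_ne_zero.2 hw
      exact lt_of_lt_of_le hpos (measure_mono hsub)
    · push_neg at hgood
      rcases hgood with ⟨k, hk1, hk2⟩
      have hkn : (k : ℕ) < n := by
        rcases lt_or_eq_of_le (by omega : (k:ℕ) ≤ n) with h | h
        · exact h
        · exfalso
          have : xs k = xs (Fin.last n) := congrArg xs (Fin.ext (by simp [h]))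
          rw [hl] at this
          exact hy (this ▸ hk2)
      set sub := subpath n (k : ℕ) n xs with hsubdef
      have hs0 : sub 0 = x0 := by
        rw [hsubdef, subpath_apply (by omega) le_rfl]
        rw [← hk2]
        exact congrArg xs (Fin.ext (by simp))
      have hsl : sub (Fin.last (n - (k:ℕ))) = y := by
        rw [hsubdef, subpath_apply (by omega) le_rfl]
        rw [← hl]
        exact congrArg xs (Fin.ext (by simp; omega))
      have hsw : wt M (n - (k:ℕ)) sub ≠ 0 := wt_subpath_ne M (by omega) le_rfl hw
      exact ih (n - (k:ℕ)) (by omega) sub hs0 hsl hsw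

lemma first_hit (x0 y : E) :
    ∀ n, 1 ≤ n → ∀ ws : Fin (n + 1) → E, ws 0 = y → ws (Fin.last n) = x0 → wt M n ws ≠ 0 →
      ∃ m, 1 ≤ m ∧ ∃ zs : Fin (m + 1) → E, zs 0 = y ∧ zs (Fin.last m) = x0 ∧
        (∀ j : Fin (m + 1), 1 ≤ (j : ℕ) → (j : ℕ) < m → zs j ≠ x0) ∧ wt M m zs ≠ 0 := by
  intro n
  induction n using Nat.strong_induction_on with
  | _ n ih =>
    intro hn ws h0 hl hw
    by_cases hgood : ∀ j : Fin (n + 1), 1 ≤ (j : ℕ) → (j : ℕ) < n → ws j ≠ x0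
    · exact ⟨n, hn, ws, h0, hl, hgood, hw⟩
    · push_neg at hgood
      rcases hgood with ⟨j, hj1, hjn, hj2⟩
      set sub := subpath n 0 (j : ℕ) ws with hsubdef
      have hs0 : sub 0 = y := by
        rw [hsubdef, subpath_apply (by omega) (by omega)]
        rw [← h0]
        exact congrArg ws (Fin.ext (by simp))
      have hsl : sub (Fin.last ((j : ℕ) - 0)) = x0 := by
        rw [hsubdef, subpath_apply (by omega) (by omega)]
        rw [← hj2]
        exact congrArg ws (Fin.ext (by simp))
      have hsw : wt M ((j : ℕ) - 0) sub ≠ 0 := wt_subpath_ne M (by omega) (by omega) hw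
      exact ih ((j : ℕ) - 0) (by omega) (by omega) sub hs0 hsl hsw

/-- Paths realizing the first return to `x0` at time exactly `t`. -/
def Dset (x0 : E) (t : ℕ) : Set (Fin (t + 1) → E) :=
  {vs | vs (Fin.last t) = x0 ∧ ∀ k : Fin (t + 1), 1 ≤ (k : ℕ) → (k : ℕ) < t → vs k ≠ x0}

/-- The event that the first return to `x0` happens at time exactly `t`. -/
def Dev (x0 : E) (t : ℕ) : Set (ℕ → E) := ⋃ vs : Dset x0 t, cyl t (vs : Fin (t + 1) → E)

lemma Dev_aux (x0 : E) {t t' : ℕ} (h : t < t') {ω : ℕ → E}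
    (h1 : ω ∈ Dev x0 (t + 1)) (h2 : ω ∈ Dev x0 (t' + 1)) : False := by
  rcases Set.mem_iUnion.1 h1 with ⟨⟨vs, hvl, _⟩, hv⟩
  rcases Set.mem_iUnion.1 h2 with ⟨⟨ws, _, hwint⟩, hw⟩
  have e1 : ω (t + 1) = x0 := by
    have := hv (Fin.last (t + 1))
    simp only [Fin.val_last] at this
    rw [this]; exact hvl
  have e2 : ω (t + 1) ≠ x0 := by
    have := hw ⟨t + 1, by omega⟩
    rw [show ((⟨t + 1, by omega⟩ : Fin (t' + 1 + 1)) : ℕ) = t + 1 from rfl] at this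
    rw [this]
    exact hwint ⟨t + 1, by omega⟩ (by simp) (by simp; omega)
  exact e2 e1

lemma Dev_disj (x0 : E) :
    Pairwise (Function.onFun Disjoint (fun t => Dev x0 (t + 1))) := by
  intro t t' hne
  rcases Nat.lt_or_ge t t' with h | h
  · exact Set.disjoint_left.2 (fun ω hω hω' => Dev_aux x0 h hω hω')
  · have h' : t' < t := by omega
    exact Set.disjoint_left.2 (fun ω hω hω' => Dev_aux x0 h' hω' hω)

lemma sum_Dev_le_one (x0 x : E) : ∑' t, M.P x (Dev x0 (t + 1)) ≤ 1 := by
  haveI := M.prob x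
  rw [← measure_iUnion₀ (fun t t' h => ((Dev_disj x0) h).aedisjoint)
    (fun t => nullMeasurable_iUnion_cyl M x (t + 1) (Dset x0 (t + 1)))]
  exact prob_le_one

lemma key_ineq (x0 x y : E) {m : ℕ} (hm : 1 ≤ m) (zs : Fin (m + 1) → E)
    (hz0 : zs 0 = y) (hzl : zs (Fin.last m) = x0)
    (hzint : ∀ j : Fin (m + 1), 1 ≤ (j : ℕ) → (j : ℕ) < m → zs j ≠ x0) (n : ℕ) :
    wt M m zs * M.P x (av x0 y n) ≤ M.P x (Dev x0 (n + m)) := by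
  have hlink : ∀ q : Gd x0 y n, zs 0 = (q : Fin (n + 1) → E) (Fin.last n) := by
    rintro ⟨xs, hxl, _⟩
    rw [hz0]; exact hxl.symm
  -- each concatenated cylinder
  have hCmeas : ∀ q : Gd x0 y n,
      M.P x (cyl (n + m) (cat n m (q : Fin (n + 1) → E) zs))
        = wt M m zs * M.P x (cyl n (q : Fin (n + 1) → E)) := by
    intro q
    rw [measure_cyl, measure_cyl, cat_zero, wt_cat M _ _ (hlink q)]
    ring
  have hCsub : ∀ q : Gd x0 y n,
      cyl (n + m) (cat n m (q : Fin (n + 1) → E) zs) ⊆ Dev x0 (n + m) := by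
    rintro ⟨xs, hxl, hxint⟩
    refine Set.subset_iUnion_of_subset ⟨cat n m xs zs, ?_, ?_⟩ (by exact le_rfl)
    · show catN n m xs zs ((Fin.last (n + m) : ℕ)) = x0
      rw [Fin.val_last, catN_high le_self_add le_rfl xs zs (hlink ⟨xs, hxl, hxint⟩)]
      rw [← hzl]
      exact congrArg zs (Fin.ext (by simp))
    · intro k hk1 hk2
      show catN n m xs zs ((k : ℕ)) ≠ x0
      by_cases hkn : (k : ℕ) ≤ n
      · rw [catN_low hkn xs zs]
        exact hxint ⟨(k : ℕ), by omega⟩ hk1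
      · rw [catN_high (by omega) (by omega) xs zs (hlink ⟨xs, hxl, hxint⟩)]
        exact hzint ⟨(k : ℕ) - n, by omega⟩ (by simp; omega) (by simp; omega)
  have hCdisj : ∀ (q q' : Gd x0 y n), q ≠ q' →
      Disjoint (cyl (n + m) (cat n m (q : Fin (n + 1) → E) zs))
        (cyl (n + m) (cat n m (q' : Fin (n + 1) → E) zs)) := by
    intro q q' hne
    refine cyl_disjoint (fun hc => hne (Subtype.ext (cat_inj zs hc)))
  calc wt M m zs * M.P x (av x0 y n)
      = wt M m zs * ∑' q : Gd x0 y n, M.P x (cyl n (q : Fin (n + 1) → E)) := by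
        rw [measure_av]
    _ = ∑' q : Gd x0 y n, M.P x (cyl (n + m) (cat n m (q : Fin (n + 1) → E) zs)) := by
        rw [← ENNReal.tsum_mul_left]
        exact (tsum_congr hCmeas).symm
    _ = M.P x (⋃ q : Gd x0 y n, cyl (n + m) (cat n m (q : Fin (n + 1) → E) zs)) := by
        haveI := M.prob x
        refine (measure_iUnion₀ (fun q q' h => (hCdisj q q' h).aedisjoint)
          (fun q => cyl_nullMeasurable M x (n + m) _)).symm
    _ ≤ M.P x (Dev x0 (n + m)) := measure_mono (Set.iUnion_subset hCsub)

lemma av_self_empty (x0 : E) {n : ℕ} (hn : 1 ≤ n) : av x0 x0 n = (∅ : Set (ℕ → E)) := by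
  ext ω
  simp only [av, Set.mem_setOf_eq, Set.mem_empty_iff_false, iff_false, not_and]
  intro h1 h2
  exact h2 n hn le_rfl h1

lemma green_finite (x0 : E) (hirr : M.Irreducible) (x y : E) : M.green x0 x y < ⊤ := by
  haveI := M.prob x
  rw [green_eq]
  by_cases hy : y = x0
  · subst hy
    rw [tsum_eq_single 0 (fun n hn => by
      rw [av_self_empty _ (by omega : 1 ≤ n)]; exact measure_empty)]
    exact lt_of_le_of_lt prob_le_one (by norm_num)
  · -- get a first-hitting path from y to x0
    obtain ⟨n₀, hpos⟩ := hirr y x0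
    have hn₀ : 1 ≤ n₀ := by
      by_contra hc
      have h0 : n₀ = 0 := by omega
      subst h0
      have : {ω : ℕ → E | ω 0 = x0} = cyl 0 (fun _ => x0) := by
        ext ω
        constructor
        · intro h i
          have : i = 0 := Fin.ext (by omega)
          rw [this]; exact h
        · intro h; exact h 0
      rw [this, measure_cyl] at hpos
      rw [if_neg (fun h => hy h.symm), zero_mul] at hpos
      exact lt_irrefl _ hpos
    obtain ⟨ws, hw0, hwl, hww⟩ := exists_pos_path M hpos
    obtain ⟨m, hm, zs, hz0, hzl, hzint, hzw⟩ := first_hit M x0 y n₀ hn₀ ws hw0 hwl hww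
    set δ := wt M m zs with hδ
    have hkey : ∀ n, δ * M.P x (av x0 y n) ≤ M.P x (Dev x0 (n + m)) :=
      key_ineq M x0 x y hm zs hz0 hzl hzint
    have hbound : δ * ∑' n, M.P x (av x0 y n) ≤ 1 := by
      calc δ * ∑' n, M.P x (av x0 y n)
          = ∑' n, δ * M.P x (av x0 y n) := ENNReal.tsum_mul_left.symm
        _ ≤ ∑' n, M.P x (Dev x0 (n + m)) := ENNReal.tsum_le_tsum hkey
        _ = ∑' n, M.P x (Dev x0 ((n + (m - 1)) + 1)) := by
            refine tsum_congr (fun n => ?_)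
            have he : n + m = n + (m - 1) + 1 := by omega
            rw [he]
        _ ≤ ∑' t, M.P x (Dev x0 (t + 1)) :=
            ENNReal.tsum_comp_le_tsum_of_injective
              (add_left_injective (m - 1))
              (fun t => M.P x (Dev x0 (t + 1)))
        _ ≤ 1 := sum_Dev_le_one M x0 x
    by_contra hc
    have htop : ∑' n, M.P x (av x0 y n) = ⊤ := by
      simpa [lt_top_iff_ne_top] using hc
    rw [htop, ENNReal.mul_top hzw] at hbound
    exact absurd hbound (by simp)

lemma green_pos (x0 : E) (hirr : M.Irreducible) (y : E) : 0 < M.green x0 x0 y := by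
  rw [green_eq]
  by_cases hy : y = x0
  · subst hy
    exact lt_of_lt_of_le (pos_av_self M _) (ENNReal.le_tsum 0)
  · obtain ⟨n, hpos⟩ := hirr x0 y
    obtain ⟨xs, h0, hl, hw⟩ := exists_pos_path M hpos
    obtain ⟨n', hpos'⟩ := pos_av M x0 y hy n xs h0 hl hw
    exact lt_of_lt_of_le hpos' (ENNReal.le_tsum n')

end MCAux


/-- For an irreducible recurrent Markov chain, the Green function of the chain killed just
before the first return time to `x0` is finite, and `G_{x0}(x0, y) > 0` for all `y`. -/
theorem green_killed_finite_and_positive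
    {E : Type*} [Countable E] [MeasurableSpace E]
    (M : MC E) (hirr : M.Irreducible) (hrec : M.Recurrent) (x0 : E) :
    (∀ x y : E, M.green x0 x y < ⊤) ∧ (∀ y : E, 0 < M.green x0 x0 y) :=
  ⟨fun x y => MCAux.green_finite M x0 hirr x y, fun y => MCAux.green_pos M x0 hirr y⟩
end

section
/- For an irreducible recurrent Markov chain with stationary measure β, the Green function of the chain killed just before returning to x0 satisfies G_{x0}(x0, y) = β(y)/β(x0) for all y ∈ E. -/
open MeasureTheory ENNReal
open scoped Classical NNReal

namespace GreenAux

set_option linter.unusedSectionVars false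

variable {E : Type*} [Countable E] [MeasurableSpace E]

/-- weight of a cylinder -/
noncomputable def cylW (M : MC E) (x : E) (n : ℕ) (xs : Fin (n+1) → E) : ℝ≥0∞ :=
  (if xs 0 = x then 1 else 0) * ∏ i : Fin n, M.p (xs i.castSucc) (xs i.succ)

lemma p_le_one (M : MC E) (x y : E) : M.p x y ≤ 1 := by
  rw [← M.stochastic x]; exact ENNReal.le_tsum y

def snocE (E : Type*) (n : ℕ) : ((Fin (n+1) → E) × E) ≃ (Fin (n+2) → E) where
  toFun q := Fin.snoc q.1 q.2
  invFun xs := (Fin.init xs, xs (Fin.last (n+1)))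
  left_inv := by rintro ⟨ys, z⟩; simp
  right_inv := by intro xs; simp

lemma cylW_snoc (M : MC E) (x : E) (n : ℕ) (ys : Fin (n+1) → E) (z : E) :
    cylW M x (n+1) (Fin.snoc ys z) = cylW M x n ys * M.p (ys (Fin.last n)) z := by
  unfold cylW
  have h0 : (Fin.snoc ys z : Fin (n+2) → E) 0 = ys 0 := by
    have : ((0 : Fin (n+1)).castSucc : Fin (n+2)) = 0 := by simp
    rw [← this, Fin.snoc_castSucc]
  rw [h0, Fin.prod_univ_castSucc]
  have hlast : (Fin.snoc ys z : Fin (n+2) → E) ((Fin.last n).castSucc) = ys (Fin.last n) :=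
    Fin.snoc_castSucc _ _ _
  have hlast2 : (Fin.snoc ys z : Fin (n+2) → E) ((Fin.last n).succ) = z := by
    rw [Fin.succ_last, Fin.snoc_last]
  rw [hlast, hlast2]
  have hterm : ∀ i : Fin n,
      M.p ((Fin.snoc ys z : Fin (n+2) → E) (i.castSucc.castSucc))
        ((Fin.snoc ys z : Fin (n+2) → E) (i.castSucc.succ))
      = M.p (ys i.castSucc) (ys i.succ) := by
    intro i
    rw [Fin.snoc_castSucc, Fin.succ_castSucc, Fin.snoc_castSucc]
  rw [Finset.prod_congr rfl (fun i _ => hterm i)]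
  ring

lemma tsum_snoc (M : MC E) (x : E) (n : ℕ) (G : (Fin (n+1) → E) → E → Prop) :
    ∑' xs : Fin (n+2) → E,
        (if G (Fin.init xs) (xs (Fin.last (n+1))) then cylW M x (n+1) xs else 0)
    = ∑' (ys : Fin (n+1) → E) (z : E),
        (if G ys z then cylW M x n ys * M.p (ys (Fin.last n)) z else 0) := by
  rw [← Equiv.tsum_eq (snocE E n)
    (fun xs => if G (Fin.init xs) (xs (Fin.last (n+1))) then cylW M x (n+1) xs else 0)]
  rw [← ENNReal.tsum_prod]
  congr 1
  funext q
  obtain ⟨ys, z⟩ := q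
  have h1 : Fin.init (snocE E n (ys, z)) = ys := by simp [snocE]
  have h2 : (snocE E n (ys, z)) (Fin.last (n+1)) = z := by simp [snocE]
  have h3 : cylW M x (n+1) (snocE E n (ys, z)) = cylW M x n ys * M.p (ys (Fin.last n)) z := by
    simpa [snocE] using cylW_snoc M x n ys z
  rw [h1, h2, h3]

lemma tsum_cylW (M : MC E) (x : E) (n : ℕ) :
    ∑' xs : Fin (n+1) → E, cylW M x n xs = 1 := by
  induction n with
  | zero =>
    rw [← Equiv.tsum_eq (Equiv.funUnique (Fin 1) E).symm (fun xs => cylW M x 0 xs)]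
    have : ∀ e : E, cylW M x 0 ((Equiv.funUnique (Fin 1) E).symm e) = if e = x then 1 else 0 := by
      intro e; simp [cylW, Equiv.funUnique]
    rw [tsum_congr this, tsum_ite_eq]
  | succ n ih =>
    have h := tsum_snoc M x n (fun _ _ => True)
    simp only [if_true] at h
    rw [h]
    calc ∑' (ys : Fin (n+1) → E) (z : E), cylW M x n ys * M.p (ys (Fin.last n)) z
        = ∑' ys : Fin (n+1) → E, cylW M x n ys * ∑' z, M.p (ys (Fin.last n)) z := by
          congr 1; funext ys; rw [ENNReal.tsum_mul_left]
      _ = 1 := by simp only [M.stochastic, mul_one]; exact ih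


/-- measure of an event depending on the first n+1 coordinates -/
lemma measure_prefix (M : MC E) (x : E) (n : ℕ) (F : (Fin (n+1) → E) → Prop) :
    M.P x {ω | F (fun i : Fin (n+1) => ω i)}
      = ∑' xs : Fin (n+1) → E, (if F xs then cylW M x n xs else 0) := by
  haveI := M.prob x
  set A : Set (ℕ → E) := {ω | F (fun i : Fin (n+1) => ω i)} with hA
  have key : ∀ (G : (Fin (n+1) → E) → Prop),
      M.P x {ω | G (fun i : Fin (n+1) => ω i)}
        ≤ ∑' xs : Fin (n+1) → E, (if G xs then cylW M x n xs else 0) := by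
    intro G
    have hcover : {ω : ℕ → E | G (fun i : Fin (n+1) => ω i)}
        ⊆ ⋃ xs : {xs : Fin (n+1) → E // G xs}, {ω : ℕ → E | ∀ i : Fin (n+1), ω i = xs.1 i} := by
      intro ω hω
      exact Set.mem_iUnion.2 ⟨⟨fun i => ω i, hω⟩, fun i => rfl⟩
    calc M.P x {ω | G (fun i : Fin (n+1) => ω i)}
        ≤ ∑' xs : {xs : Fin (n+1) → E // G xs},
            M.P x {ω : ℕ → E | ∀ i : Fin (n+1), ω i = xs.1 i} :=
          le_trans (measure_mono hcover) (measure_iUnion_le _)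
      _ = ∑' xs : {xs : Fin (n+1) → E // G xs}, cylW M x n xs.1 := by
          congr 1; funext xs; exact M.fdd x n xs.1
      _ = ∑' xs : Fin (n+1) → E, (if G xs then cylW M x n xs else 0) := by
          refine Eq.trans (tsum_subtype {t : Fin (n+1) → E | G t} (cylW M x n)) ?_
          exact tsum_congr fun xs => by by_cases h : G xs <;> simp [Set.indicator, h]
  have hle := key F
  have hcle : M.P x Aᶜ ≤ ∑' xs : Fin (n+1) → E, (if F xs then 0 else cylW M x n xs) := by
    refine le_trans (key (fun xs => ¬ F xs)) (le_of_eq ?_)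
    exact tsum_congr fun xs => by by_cases h : F xs <;> simp [h]
  have hsum : (∑' xs : Fin (n+1) → E, (if F xs then cylW M x n xs else 0))
      + (∑' xs : Fin (n+1) → E, (if F xs then 0 else cylW M x n xs)) = 1 := by
    rw [← ENNReal.tsum_add, ← tsum_cylW M x n]
    exact tsum_congr fun xs => by by_cases h : F xs <;> simp [h]
  have hone : (1 : ℝ≥0∞) ≤ M.P x A + M.P x Aᶜ := by
    have := measure_union_le (μ := M.P x) A Aᶜ
    rw [Set.union_compl_self] at this
    simpa using this
  refine le_antisymm hle ?_
  have hfin : (∑' xs : Fin (n+1) → E, (if F xs then 0 else cylW M x n xs)) ≤ 1 := by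
    rw [← hsum]; exact le_add_self
  have h3 : (1 : ℝ≥0∞) - (∑' xs : Fin (n+1) → E, (if F xs then 0 else cylW M x n xs))
      ≤ M.P x A := by
    rw [tsub_le_iff_right]
    exact le_trans hone (add_le_add_right hcle _)
  refine le_trans (le_of_eq ?_) h3
  rw [← hsum, ENNReal.add_sub_cancel_right]
  exact ne_top_of_le_ne_top one_ne_top hfin

/-- killed-path condition -/
def KK (x0 : E) {n : ℕ} (xs : Fin (n+1) → E) : Prop :=
  ∀ k : Fin (n+1), 1 ≤ (k : ℕ) → xs k ≠ x0

noncomputable def uu (M : MC E) (x0 : E) (n : ℕ) (y : E) : ℝ≥0∞ :=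
  ∑' xs : Fin (n+1) → E,
    (if xs (Fin.last n) = y ∧ KK x0 xs then cylW M x0 n xs else 0)

noncomputable def qq (M : MC E) (n : ℕ) (x y : E) : ℝ≥0∞ :=
  ∑' xs : Fin (n+1) → E, (if xs (Fin.last n) = y then cylW M x n xs else 0)

lemma tsum_ite_ite (y c : E) :
    ∑' e : E, (if e = y then (if e = c then (1:ℝ≥0∞) else 0) else 0) = if y = c then 1 else 0 := by
  have h : ∀ e : E, (if e = y then (if e = c then (1:ℝ≥0∞) else 0) else 0)
      = if e = y then (if y = c then (1:ℝ≥0∞) else 0) else 0 := by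
    intro e; by_cases h : e = y <;> simp [h]
  rw [tsum_congr h, tsum_ite_eq]

lemma uu_zero (M : MC E) (x0 y : E) : uu M x0 0 y = if y = x0 then 1 else 0 := by
  unfold uu
  rw [← Equiv.tsum_eq (Equiv.funUnique (Fin 1) E).symm]
  have h : ∀ e : E,
      (if ((Equiv.funUnique (Fin 1) E).symm e) (Fin.last 0) = y ∧
          KK x0 ((Equiv.funUnique (Fin 1) E).symm e)
        then cylW M x0 0 ((Equiv.funUnique (Fin 1) E).symm e) else 0)
      = if e = y then (if e = x0 then 1 else 0) else 0 := by
    intro e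
    have hsymm : ((Equiv.funUnique (Fin 1) E).symm e) = fun _ => e := rfl
    have hK : ∀ a : E, KK x0 (fun _ : Fin 1 => a) := by
      intro a k hk
      have : (k : ℕ) < 1 := k.isLt
      omega
    rw [hsymm]
    by_cases h1 : e = y <;> by_cases h2 : e = x0 <;> simp [cylW, hK, h1, h2]
  rw [tsum_congr h, tsum_ite_ite]

lemma qq_zero (M : MC E) (x y : E) : qq M 0 x y = if y = x then 1 else 0 := by
  unfold qq
  rw [← Equiv.tsum_eq (Equiv.funUnique (Fin 1) E).symm]
  have h : ∀ e : E,
      (if ((Equiv.funUnique (Fin 1) E).symm e) (Fin.last 0) = y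
        then cylW M x 0 ((Equiv.funUnique (Fin 1) E).symm e) else 0)
      = if e = y then (if e = x then 1 else 0) else 0 := by
    intro e
    have hsymm : ((Equiv.funUnique (Fin 1) E).symm e) = fun _ => e := rfl
    rw [hsymm]
    by_cases h1 : e = y <;> by_cases h2 : e = x <;> simp [cylW, h1, h2]
  rw [tsum_congr h, tsum_ite_ite]


lemma tsum_if_eq (c : E) (f : E → ℝ≥0∞) : ∑' x : E, (if c = x then f x else 0) = f c := by
  rw [tsum_eq_single c (fun b hb => by simp [Ne.symm hb])]
  simp

lemma tsum_if_eq' (c : E) (f : E → ℝ≥0∞) : ∑' x : E, (if x = c then f x else 0) = f c := by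
  rw [tsum_eq_single c (fun b hb => by simp [hb])]
  simp

lemma KK_snoc (x0 : E) (n : ℕ) (ys : Fin (n+1) → E) (z : E) :
    KK x0 (Fin.snoc ys z : Fin (n+2) → E) ↔ KK x0 ys ∧ z ≠ x0 := by
  constructor
  · intro h
    refine ⟨fun j hj => ?_, ?_⟩
    · have := h j.castSucc (by simpa using hj)
      rwa [Fin.snoc_castSucc] at this
    · have := h (Fin.last (n+1)) (by simp)
      rwa [Fin.snoc_last] at this
  · rintro ⟨h1, h2⟩ k
    refine Fin.lastCases (motive := fun k => 1 ≤ (k : ℕ) → (Fin.snoc ys z : Fin (n+2) → E) k ≠ x0)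
      ?_ ?_ k
    · intro _; rw [Fin.snoc_last]; exact h2
    · intro j hj; rw [Fin.snoc_castSucc]; exact h1 j (by simpa using hj)

lemma tsum_last_mul (M : MC E) (x0 : E) (n : ℕ) (Q : (Fin (n+1) → E) → Prop) (h : E → ℝ≥0∞) :
    ∑' x : E, (∑' ys : Fin (n+1) → E,
        (if ys (Fin.last n) = x ∧ Q ys then cylW M x0 n ys else 0)) * h x
    = ∑' ys : Fin (n+1) → E, (if Q ys then cylW M x0 n ys * h (ys (Fin.last n)) else 0) := by
  have h1 : ∀ x : E, (∑' ys : Fin (n+1) → E,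
        (if ys (Fin.last n) = x ∧ Q ys then cylW M x0 n ys else 0)) * h x
      = ∑' ys : Fin (n+1) → E,
        (if ys (Fin.last n) = x ∧ Q ys then cylW M x0 n ys * h x else 0) := by
    intro x
    rw [← ENNReal.tsum_mul_right]
    exact tsum_congr fun ys => by
      by_cases hc : ys (Fin.last n) = x ∧ Q ys <;> simp [hc]
  rw [tsum_congr h1, ENNReal.tsum_comm]
  refine tsum_congr fun ys => ?_
  by_cases hQ : Q ys
  · have : ∀ x : E, (if ys (Fin.last n) = x ∧ Q ys then cylW M x0 n ys * h x else 0)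
        = if ys (Fin.last n) = x then cylW M x0 n ys * h x else 0 := by
      intro x; by_cases hc : ys (Fin.last n) = x <;> simp [hc, hQ]
    rw [tsum_congr this, tsum_if_eq (ys (Fin.last n)) (fun x => cylW M x0 n ys * h x), if_pos hQ]
  · simp [hQ]

lemma uu_mul_p (M : MC E) (x0 : E) (n : ℕ) (h : E → ℝ≥0∞) :
    ∑' x : E, uu M x0 n x * h x
    = ∑' ys : Fin (n+1) → E, (if KK x0 ys then cylW M x0 n ys * h (ys (Fin.last n)) else 0) := by
  exact tsum_last_mul M x0 n (KK x0) h

lemma uu_succ (M : MC E) (x0 : E) (n : ℕ) (y : E) :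
    uu M x0 (n+1) y = if y = x0 then 0 else ∑' x, uu M x0 n x * M.p x y := by
  have hcond : ∀ xs : Fin (n+2) → E,
      (xs (Fin.last (n+1)) = y ∧ KK x0 xs)
        ↔ ((fun ys z => z = y ∧ z ≠ x0 ∧ KK x0 ys) (Fin.init xs) (xs (Fin.last (n+1)))) := by
    intro xs
    have hx : xs = Fin.snoc (Fin.init xs) (xs (Fin.last (n+1))) := (Fin.snoc_init_self xs).symm
    constructor
    · rintro ⟨ha, hb⟩
      rw [hx, KK_snoc] at hb
      exact ⟨ha, hb.2, hb.1⟩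
    · rintro ⟨ha, hb, hc⟩
      refine ⟨ha, ?_⟩
      rw [hx, KK_snoc]
      exact ⟨hc, hb⟩
  have hcongr : ∀ xs : Fin (n+2) → E,
      (if xs (Fin.last (n+1)) = y ∧ KK x0 xs then cylW M x0 (n+1) xs else 0)
      = @ite ℝ≥0∞ ((fun ys z => z = y ∧ z ≠ x0 ∧ KK x0 ys) (Fin.init xs) (xs (Fin.last (n+1))))
          (Classical.propDecidable _) (cylW M x0 (n+1) xs) 0 := by
    intro xs
    by_cases h : xs (Fin.last (n+1)) = y ∧ KK x0 xs
    · rw [if_pos h, if_pos ((hcond xs).1 h)]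
    · rw [if_neg h, if_neg (fun hh => h ((hcond xs).2 hh))]
  unfold uu
  rw [tsum_congr hcongr]
  refine (tsum_snoc M x0 n (fun ys z => z = y ∧ z ≠ x0 ∧ KK x0 ys)).trans ?_
  by_cases hy : y = x0
  · subst hy
    rw [if_pos rfl]
    refine (tsum_congr fun ys => ?_).trans tsum_zero
    refine (tsum_congr fun z => ?_).trans tsum_zero
    by_cases hz : z = y
    · subst hz; simp
    · simp [hz]
  · rw [if_neg hy]
    refine Eq.trans ?_ (tsum_last_mul M x0 n (KK x0) (fun x => M.p x y)).symm
    refine tsum_congr fun ys => ?_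
    have h5 : ∀ z : E, (@ite ℝ≥0∞ (z = y ∧ z ≠ x0 ∧ KK x0 ys) (Classical.propDecidable _)
          (cylW M x0 n ys * M.p (ys (Fin.last n)) z) 0)
        = if z = y then (if KK x0 ys then cylW M x0 n ys * M.p (ys (Fin.last n)) y else 0)
          else 0 := by
      intro z
      by_cases hz : z = y
      · subst hz
        by_cases hK : KK x0 ys <;> simp [hy, hK]
      · simp [hz]
    rw [tsum_congr h5, tsum_ite_eq]

lemma qq_succ (M : MC E) (x : E) (n : ℕ) (y : E) :
    qq M (n+1) x y = ∑' z, qq M n x z * M.p z y := by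
  have h1 : qq M (n+1) x y
      = ∑' ys : Fin (n+1) → E, cylW M x n ys * M.p (ys (Fin.last n)) y := by
    unfold qq
    refine (tsum_snoc M x n (fun ys z => z = y)).trans ?_
    refine tsum_congr fun ys => ?_
    have h2 : ∀ z : E, (if z = y then cylW M x n ys * M.p (ys (Fin.last n)) z else 0)
        = if z = y then cylW M x n ys * M.p (ys (Fin.last n)) y else 0 := by
      intro z; by_cases hz : z = y <;> simp [hz]
    rw [tsum_congr h2, tsum_ite_eq]
  have h3 : ∑' z, qq M n x z * M.p z y
      = ∑' ys : Fin (n+1) → E, cylW M x n ys * M.p (ys (Fin.last n)) y := by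
    unfold qq
    have h4 : ∀ z : E, (∑' ys : Fin (n+1) → E,
          (if ys (Fin.last n) = z then cylW M x n ys else 0)) * M.p z y
        = ∑' ys : Fin (n+1) → E,
          (if ys (Fin.last n) = z then cylW M x n ys * M.p (ys (Fin.last n)) y else 0) := by
      intro z
      rw [← ENNReal.tsum_mul_right]
      refine tsum_congr fun ys => ?_
      by_cases hc : ys (Fin.last n) = z
      · rw [if_pos hc, if_pos hc, hc]
      · simp [hc]
    rw [tsum_congr h4, ENNReal.tsum_comm]
    refine tsum_congr fun ys => ?_
    exact tsum_if_eq (ys (Fin.last n)) (fun _ => cylW M x n ys * M.p (ys (Fin.last n)) y)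
  rw [h1, h3]

noncomputable def NR (M : MC E) (x0 : E) (n : ℕ) : ℝ≥0∞ := ∑' x, uu M x0 n x

/-- probability of first return to `x0` at time `n+1` -/
noncomputable def FRn (M : MC E) (x0 : E) (n : ℕ) : ℝ≥0∞ := ∑' x, uu M x0 n x * M.p x x0

lemma NR_zero (M : MC E) (x0 : E) : NR M x0 0 = 1 := by
  unfold NR
  rw [tsum_congr (fun x => uu_zero M x0 x), tsum_ite_eq]

lemma FR_add_NR (M : MC E) (x0 : E) (n : ℕ) :
    FRn M x0 n + NR M x0 (n+1) = NR M x0 n := by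
  have hsplit : ∀ x : E, M.p x x0 + ∑' y, (if y = x0 then 0 else M.p x y) = 1 := by
    intro x
    rw [← ENNReal.tsum_eq_add_tsum_ite x0, M.stochastic x]
  have h1 : NR M x0 (n+1) = ∑' x, uu M x0 n x * ∑' y, (if y = x0 then 0 else M.p x y) := by
    unfold NR
    rw [tsum_congr (fun y => uu_succ M x0 n y)]
    have : ∀ y : E, (if y = x0 then 0 else ∑' x, uu M x0 n x * M.p x y)
        = ∑' x, uu M x0 n x * (if y = x0 then 0 else M.p x y) := by
      intro y
      by_cases hy : y = x0 <;> simp [hy]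
    rw [tsum_congr this, ENNReal.tsum_comm]
    exact tsum_congr fun x => ENNReal.tsum_mul_left
  rw [h1]
  unfold FRn
  rw [← ENNReal.tsum_add]
  have : ∀ x : E, uu M x0 n x * M.p x x0
        + uu M x0 n x * ∑' y, (if y = x0 then 0 else M.p x y)
      = uu M x0 n x := by
    intro x
    rw [← mul_add, hsplit x, mul_one]
  rw [tsum_congr this]
  rfl

lemma sum_FR_add_NR (M : MC E) (x0 : E) (N : ℕ) :
    (∑ m ∈ Finset.range N, FRn M x0 m) + NR M x0 N = 1 := by
  induction N with
  | zero => simpa using NR_zero M x0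
  | succ N ih =>
    rw [Finset.sum_range_succ, add_assoc, FR_add_NR]
    exact ih

lemma tsum_FR_le_one (M : MC E) (x0 : E) : ∑' n, FRn M x0 n ≤ 1 := by
  rw [ENNReal.tsum_eq_iSup_nat]
  refine iSup_le fun N => ?_
  rw [← sum_FR_add_NR M x0 N]
  exact le_self_add


lemma meas_A (M : MC E) (x0 y : E) (n : ℕ) :
    M.P x0 {ω : ℕ → E | ω n = y ∧ ∀ k, 1 ≤ k → k ≤ n → ω k ≠ x0} = uu M x0 n y := by
  have hset : {ω : ℕ → E | ω n = y ∧ ∀ k, 1 ≤ k → k ≤ n → ω k ≠ x0}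
      = {ω : ℕ → E | (fun xs : Fin (n+1) → E => xs (Fin.last n) = y ∧ KK x0 xs)
          (fun i : Fin (n+1) => ω i)} := by
    ext ω
    simp only [Set.mem_setOf_eq]
    constructor
    · rintro ⟨h1, h2⟩
      refine ⟨?_, ?_⟩
      · show ω ((Fin.last n : Fin (n+1)) : ℕ) = y
        rwa [Fin.val_last]
      · intro k hk
        exact h2 k hk (by omega)
    · rintro ⟨h1, h2⟩
      refine ⟨?_, ?_⟩
      · have h1' : ω ((Fin.last n : Fin (n+1)) : ℕ) = y := h1
        rwa [Fin.val_last] at h1'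
      · intro k hk1 hk2
        have := h2 ⟨k, by omega⟩ (by simpa using hk1)
        simpa using this
  rw [hset, measure_prefix M x0 n (fun xs => xs (Fin.last n) = y ∧ KK x0 xs)]
  exact tsum_congr fun xs => by
    by_cases h : xs (Fin.last n) = y ∧ KK x0 xs <;> simp [h, uu]

lemma uu_add_compl (M : MC E) (x0 y : E) (n : ℕ) :
    uu M x0 n y + (∑' xs : Fin (n+1) → E,
      (if ¬ (xs (Fin.last n) = y ∧ KK x0 xs) then cylW M x0 n xs else 0)) = 1 := by
  unfold uu
  rw [← ENNReal.tsum_add, ← tsum_cylW M x0 n]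
  exact tsum_congr fun xs => by
    by_cases h : xs (Fin.last n) = y ∧ KK x0 xs <;> simp [h]

lemma uu_le_one (M : MC E) (x0 y : E) (n : ℕ) : uu M x0 n y ≤ 1 := by
  rw [← uu_add_compl M x0 y n]
  exact le_self_add

lemma meas_A_compl (M : MC E) (x0 y : E) (n : ℕ) :
    M.P x0 ({ω : ℕ → E | ω n = y ∧ ∀ k, 1 ≤ k → k ≤ n → ω k ≠ x0}ᶜ)
      = 1 - uu M x0 n y := by
  have hset : {ω : ℕ → E | ω n = y ∧ ∀ k, 1 ≤ k → k ≤ n → ω k ≠ x0}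
      = {ω : ℕ → E | (fun xs : Fin (n+1) → E => xs (Fin.last n) = y ∧ KK x0 xs)
          (fun i : Fin (n+1) => ω i)} := by
    ext ω
    simp only [Set.mem_setOf_eq]
    constructor
    · rintro ⟨h1, h2⟩
      refine ⟨?_, ?_⟩
      · show ω ((Fin.last n : Fin (n+1)) : ℕ) = y
        rwa [Fin.val_last]
      · intro k hk
        exact h2 k hk (by omega)
    · rintro ⟨h1, h2⟩
      refine ⟨?_, ?_⟩
      · have h1' : ω ((Fin.last n : Fin (n+1)) : ℕ) = y := h1
        rwa [Fin.val_last] at h1'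
      · intro k hk1 hk2
        have := h2 ⟨k, by omega⟩ (by simpa using hk1)
        simpa using this
  have hcompl : {ω : ℕ → E | ω n = y ∧ ∀ k, 1 ≤ k → k ≤ n → ω k ≠ x0}ᶜ
      = {ω : ℕ → E | (fun xs : Fin (n+1) → E => ¬ (xs (Fin.last n) = y ∧ KK x0 xs))
          (fun i : Fin (n+1) => ω i)} := by
    rw [hset]
    rfl
  rw [hcompl, measure_prefix M x0 n (fun xs => ¬ (xs (Fin.last n) = y ∧ KK x0 xs))]
  have hc := uu_add_compl M x0 y n
  have hle := uu_le_one M x0 y n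
  have : (∑' xs : Fin (n+1) → E,
      (if ¬ (xs (Fin.last n) = y ∧ KK x0 xs) then cylW M x0 n xs else 0)) = 1 - uu M x0 n y := by
    rw [add_comm] at hc
    exact ENNReal.eq_sub_of_add_eq (ne_top_of_le_ne_top one_ne_top hle) hc
  rw [← this]
  exact tsum_congr fun xs => by
    by_cases h : xs (Fin.last n) = y ∧ KK x0 xs <;> simp [h]

lemma green_eq (M : MC E) (x0 y : E) :
    M.green x0 x0 y = ∑' n, uu M x0 n y := by
  haveI := M.prob x0
  set A : ℕ → Set (ℕ → E) :=
    fun n => {ω | ω n = y ∧ ∀ k, 1 ≤ k → k ≤ n → ω k ≠ x0} with hA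
  have hmeas : ∀ n, M.P x0 (A n) = uu M x0 n y := fun n => meas_A M x0 y n
  have hmeasc : ∀ n, M.P x0 ((A n)ᶜ) = 1 - uu M x0 n y := fun n => meas_A_compl M x0 y n
  have hule : ∀ n, uu M x0 n y ≤ 1 := fun n => uu_le_one M x0 y n
  have hint : M.green x0 x0 y
      = ∫⁻ ω, ∑' n, Set.indicator (A n) (1 : (ℕ → E) → ℝ≥0∞) ω ∂ M.P x0 := by
    unfold MC.green
    congr 1
    funext ω
    refine tsum_congr fun n => ?_
    by_cases h : ω ∈ A n
    · rw [Set.indicator_of_mem h]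
      exact if_pos h
    · rw [Set.indicator_of_notMem h]
      exact if_neg h
  rw [hint]
  refine le_antisymm ?_ ?_
  · choose U hU1 hU2 hU3 using fun n => exists_measurable_superset (M.P x0) (A n)
    calc ∫⁻ ω, ∑' n, Set.indicator (A n) (1 : (ℕ → E) → ℝ≥0∞) ω ∂ M.P x0
        ≤ ∫⁻ ω, ∑' n, Set.indicator (U n) (1 : (ℕ → E) → ℝ≥0∞) ω ∂ M.P x0 := by
          refine lintegral_mono fun ω => ?_
          refine ENNReal.tsum_le_tsum fun n => ?_
          exact Set.indicator_le_indicator_of_subset (hU1 n) (fun _ => zero_le) ω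
      _ = ∑' n, M.P x0 (U n) := by
          rw [lintegral_tsum fun n => ((measurable_one).indicator (hU2 n)).aemeasurable]
          exact tsum_congr fun n => lintegral_indicator_one (hU2 n)
      _ = ∑' n, uu M x0 n y := by
          refine tsum_congr fun n => ?_
          rw [hU3 n, hmeas n]
  · have hB : ∀ n, ∃ B : Set (ℕ → E),
        MeasurableSet B ∧ B ⊆ A n ∧ M.P x0 B = uu M x0 n y := by
      intro n
      obtain ⟨V, hV1, hV2, hV3⟩ := exists_measurable_superset (M.P x0) ((A n)ᶜ)
      refine ⟨Vᶜ, hV2.compl, ?_, ?_⟩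
      · exact Set.compl_subset_comm.1 hV1
      · rw [measure_compl hV2 (measure_ne_top _ _), measure_univ, hV3, hmeasc n]
        exact ENNReal.sub_sub_cancel one_ne_top (hule n)
    choose B hB1 hB2 hB3 using hB
    rw [ENNReal.tsum_eq_iSup_nat]
    refine iSup_le fun N => ?_
    calc ∑ n ∈ Finset.range N, uu M x0 n y
        = ∑ n ∈ Finset.range N, M.P x0 (B n) := by
          exact Finset.sum_congr rfl fun n _ => (hB3 n).symm
      _ = ∫⁻ ω, ∑ n ∈ Finset.range N, Set.indicator (B n) (1 : (ℕ → E) → ℝ≥0∞) ω ∂ M.P x0 := by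
          rw [lintegral_finset_sum _ fun n _ => (measurable_one).indicator (hB1 n)]
          exact (Finset.sum_congr rfl fun n _ => lintegral_indicator_one (hB1 n)).symm
      _ ≤ ∫⁻ ω, ∑' n, Set.indicator (A n) (1 : (ℕ → E) → ℝ≥0∞) ω ∂ M.P x0 := by
          refine lintegral_mono fun ω => ?_
          calc ∑ n ∈ Finset.range N, Set.indicator (B n) (1 : (ℕ → E) → ℝ≥0∞) ω
              ≤ ∑ n ∈ Finset.range N, Set.indicator (A n) (1 : (ℕ → E) → ℝ≥0∞) ω :=
                Finset.sum_le_sum fun n _ =>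
                  Set.indicator_le_indicator_of_subset (hB2 n) (fun _ => zero_le) ω
            _ ≤ ∑' n, Set.indicator (A n) (1 : (ℕ → E) → ℝ≥0∞) ω :=
                ENNReal.sum_le_tsum _

lemma meas_B (M : MC E) (x0 : E) (n : ℕ) :
    M.P x0 {ω : ℕ → E | ω (n+1) = x0 ∧ ∀ k, 1 ≤ k → k ≤ n → ω k ≠ x0} = FRn M x0 n := by
  have hset : {ω : ℕ → E | ω (n+1) = x0 ∧ ∀ k, 1 ≤ k → k ≤ n → ω k ≠ x0}
      = {ω : ℕ → E | (fun xs : Fin (n+2) → E =>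
          xs (Fin.last (n+1)) = x0 ∧ KK x0 (Fin.init xs)) (fun i : Fin (n+2) => ω i)} := by
    ext ω
    simp only [Set.mem_setOf_eq]
    constructor
    · rintro ⟨h1, h2⟩
      refine ⟨?_, ?_⟩
      · show ω ((Fin.last (n+1) : Fin (n+2)) : ℕ) = x0
        rwa [Fin.val_last]
      · intro j hj
        show ω ((j.castSucc : Fin (n+2)) : ℕ) ≠ x0
        rw [Fin.coe_castSucc]
        exact h2 j hj (by omega)
    · rintro ⟨h1, h2⟩
      refine ⟨?_, ?_⟩
      · have h1' : ω ((Fin.last (n+1) : Fin (n+2)) : ℕ) = x0 := h1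
        rwa [Fin.val_last] at h1'
      · intro k hk1 hk2
        have := h2 ⟨k, by omega⟩ (by simpa using hk1)
        have h3 : ((⟨k, by omega⟩ : Fin (n+1)).castSucc : Fin (n+2)) = ⟨k, by omega⟩ := by
          ext
          simp
        rw [show Fin.init (fun i : Fin (n+2) => ω i) = fun j : Fin (n+1) => ω (j.castSucc : Fin (n+2)) from rfl] at this
        simp only [h3] at this
        simpa using this
  rw [hset, measure_prefix M x0 (n+1)
    (fun xs => xs (Fin.last (n+1)) = x0 ∧ KK x0 (Fin.init xs))]
  refine ((tsum_snoc M x0 n (fun ys z => z = x0 ∧ KK x0 ys)).trans ?_)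
  refine Eq.trans ?_ (tsum_last_mul M x0 n (KK x0) (fun x => M.p x x0)).symm
  refine tsum_congr fun ys => ?_
  have h5 : ∀ z : E, (@ite ℝ≥0∞ (z = x0 ∧ KK x0 ys) (Classical.propDecidable _)
        (cylW M x0 n ys * M.p (ys (Fin.last n)) z) 0)
      = if z = x0 then (if KK x0 ys then cylW M x0 n ys * M.p (ys (Fin.last n)) x0 else 0)
        else 0 := by
    intro z
    by_cases hz : z = x0
    · by_cases hK : KK x0 ys <;> simp [hz, hK]
    · simp [hz]
  rw [tsum_congr h5, tsum_ite_eq]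

lemma meas_coord (M : MC E) (x : E) (n : ℕ) (z : E) :
    M.P x {ω : ℕ → E | ω n = z} = qq M n x z := by
  have hset : {ω : ℕ → E | ω n = z}
      = {ω : ℕ → E | (fun xs : Fin (n+1) → E => xs (Fin.last n) = z)
          (fun i : Fin (n+1) => ω i)} := by
    ext ω
    simp only [Set.mem_setOf_eq]
    constructor
    · intro h1
      show ω ((Fin.last n : Fin (n+1)) : ℕ) = z
      rwa [Fin.val_last]
    · intro h1
      have h1' : ω ((Fin.last n : Fin (n+1)) : ℕ) = z := h1
      rwa [Fin.val_last] at h1'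
  rw [hset, measure_prefix M x n (fun xs => xs (Fin.last n) = z)]
  rfl

lemma tsum_FR_eq_one (M : MC E) (x0 : E) (hrec : ∀ x : E,
    M.P x {ω | ∀ N : ℕ, ∃ n, N ≤ n ∧ ω n = x} = 1) :
    ∑' n, FRn M x0 n = 1 := by
  haveI := M.prob x0
  refine le_antisymm (tsum_FR_le_one M x0) ?_
  have hsub : {ω : ℕ → E | ∀ N : ℕ, ∃ n, N ≤ n ∧ ω n = x0}
      ⊆ ⋃ n : ℕ, {ω : ℕ → E | ω (n+1) = x0 ∧ ∀ k, 1 ≤ k → k ≤ n → ω k ≠ x0} := by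
    intro ω hω
    obtain ⟨m, hm1, hm2⟩ := hω 1
    have hex : ∃ j : ℕ, ω (j+1) = x0 := ⟨m - 1, by rw [show m - 1 + 1 = m by omega]; exact hm2⟩
    refine Set.mem_iUnion.2 ⟨Nat.find hex, Nat.find_spec hex, ?_⟩
    intro k hk1 hk2 hc
    have hlt : k - 1 < Nat.find hex := by omega
    exact Nat.find_min hex hlt (by rw [show k - 1 + 1 = k by omega]; exact hc)
  calc (1 : ℝ≥0∞) = M.P x0 {ω : ℕ → E | ∀ N : ℕ, ∃ n, N ≤ n ∧ ω n = x0} := (hrec x0).symm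
    _ ≤ M.P x0 (⋃ n : ℕ, {ω : ℕ → E | ω (n+1) = x0 ∧ ∀ k, 1 ≤ k → k ≤ n → ω k ≠ x0}) :=
        measure_mono hsub
    _ ≤ ∑' n, M.P x0 {ω : ℕ → E | ω (n+1) = x0 ∧ ∀ k, 1 ≤ k → k ≤ n → ω k ≠ x0} :=
        measure_iUnion_le _
    _ = ∑' n, FRn M x0 n := tsum_congr fun n => meas_B M x0 n


lemma tsum_sub' {ι : Type*} (f g : ι → ℝ≥0∞) (hle : ∀ i, g i ≤ f i) (hfin : ∑' i, g i ≠ ⊤) :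
    ∑' i, (f i - g i) = ∑' i, f i - ∑' i, g i := by
  have h1 : ∑' i, f i = ∑' i, ((f i - g i) + g i) :=
    tsum_congr fun i => (tsub_add_cancel_of_le (hle i)).symm
  rw [ENNReal.tsum_add] at h1
  exact ENNReal.eq_sub_of_add_eq hfin h1.symm

end GreenAux

open GreenAux

/-- For an irreducible recurrent Markov chain with stationary measure `β`, the Green
function of the chain killed just before returning to `x0` satisfies
`G_{x0}(x0, y) = β(y) / β(x0)`. -/
theorem green_killed_diag_eq_stationary_ratio
    {E : Type*} [Countable E] [MeasurableSpace E]
    (M : MC E) (hirr : M.Irreducible) (hrec : M.Recurrent)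
    (β : E → ℝ≥0∞) (hβpos : ∀ x, 0 < β x) (hβfin : ∀ x, β x < ⊤)
    (hβstat : ∀ y, β y = ∑' x, β x * M.p x y)
    (x0 y : E) :
    M.green x0 x0 y = β y / β x0 := by
  classical
  set μt : E → ℝ≥0∞ := fun z => ∑' n, uu M x0 n z with hμt
  have hgreen : M.green x0 x0 y = μt y := green_eq M x0 y
  have huux0 : ∀ n, uu M x0 (n+1) x0 = 0 := fun n => by rw [uu_succ]; simp
  have hμx0 : μt x0 = 1 := by
    show (∑' n, uu M x0 n x0) = 1
    rw [tsum_eq_zero_add' ENNReal.summable]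
    simp [huux0, uu_zero]
  have hstat : ∀ z, ∑' x, μt x * M.p x z = μt z := by
    intro z
    have h1 : ∑' x, μt x * M.p x z = ∑' n, ∑' x, uu M x0 n x * M.p x z := by
      calc ∑' x, μt x * M.p x z
          = ∑' x, ∑' n, uu M x0 n x * M.p x z := by
            refine tsum_congr fun x => ?_
            show (∑' n, uu M x0 n x) * M.p x z = _
            rw [ENNReal.tsum_mul_right]
        _ = ∑' n, ∑' x, uu M x0 n x * M.p x z := ENNReal.tsum_comm
    rw [h1]
    by_cases hz : z = x0
    · rw [hz]
      have h2 : ∀ n, ∑' x, uu M x0 n x * M.p x x0 = FRn M x0 n := fun n => rfl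
      rw [tsum_congr h2, tsum_FR_eq_one M x0 hrec, hμx0]
    · have h2 : ∀ n, ∑' x, uu M x0 n x * M.p x z = uu M x0 (n+1) z := by
        intro n
        rw [uu_succ, if_neg hz]
      rw [tsum_congr h2]
      show _ = (∑' n, uu M x0 n z)
      rw [tsum_eq_zero_add' (f := fun n => uu M x0 n z) ENNReal.summable,
        uu_zero, if_neg hz, zero_add]
  have hpartial : ∀ N, ∀ z, β x0 * (∑ n ∈ Finset.range (N+1), uu M x0 n z) ≤ β z := by
    intro N
    induction N with
    | zero =>
      intro z
      rw [Finset.sum_range_one, uu_zero]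
      by_cases hz : z = x0
      · rw [hz]; simp
      · simp [hz]
    | succ N ih =>
      intro z
      by_cases hz : z = x0
      · have hsum1 : ∑ n ∈ Finset.range (N+2), uu M x0 n x0 = 1 := by
          rw [Finset.sum_range_succ']
          simp [huux0, uu_zero]
        rw [hz, hsum1, mul_one]
      · have hstep : ∑ n ∈ Finset.range (N+2), uu M x0 n z
            = ∑' x, (∑ n ∈ Finset.range (N+1), uu M x0 n x) * M.p x z := by
          rw [Finset.sum_range_succ', uu_zero, if_neg hz, add_zero]
          have h3 : ∀ i ∈ Finset.range (N+1),
              uu M x0 (i+1) z = ∑' x, uu M x0 i x * M.p x z := fun i _ => by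
            rw [uu_succ, if_neg hz]
          rw [Finset.sum_congr rfl h3]
          calc ∑ i ∈ Finset.range (N+1), ∑' x, uu M x0 i x * M.p x z
              = ∑' x, ∑ i ∈ Finset.range (N+1), uu M x0 i x * M.p x z :=
                (Summable.tsum_finsetSum (fun i _ => ENNReal.summable)).symm
            _ = ∑' x, (∑ i ∈ Finset.range (N+1), uu M x0 i x) * M.p x z :=
                tsum_congr fun x => (Finset.sum_mul _ _ _).symm
        rw [hstep, ← ENNReal.tsum_mul_left]
        calc ∑' x, β x0 * ((∑ n ∈ Finset.range (N+1), uu M x0 n x) * M.p x z)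
            ≤ ∑' x, β x * M.p x z := by
              refine ENNReal.tsum_le_tsum fun x => ?_
              rw [← mul_assoc]
              exact mul_le_mul_left (ih x) _
          _ = β z := (hβstat z).symm
  have hmin : ∀ z, β x0 * μt z ≤ β z := by
    intro z
    show β x0 * (∑' n, uu M x0 n z) ≤ β z
    rw [ENNReal.tsum_eq_iSup_nat, ENNReal.mul_iSup]
    refine iSup_le fun N => ?_
    cases N with
    | zero => simp
    | succ N => exact hpartial N z
  set ν : E → ℝ≥0∞ := fun z => β z - β x0 * μt z with hν
  have hν0 : ν x0 = 0 := by
    show β x0 - β x0 * μt x0 = 0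
    rw [hμx0, mul_one, tsub_self]
  have hνstat : ∀ z, ∑' x, ν x * M.p x z = ν z := by
    intro z
    have hsub : ∀ x, ν x * M.p x z = β x * M.p x z - β x0 * μt x * M.p x z := by
      intro x
      exact ENNReal.sub_mul fun _ _ => ne_top_of_le_ne_top one_ne_top (p_le_one M x z)
    rw [tsum_congr hsub]
    have hgle : ∀ x, β x0 * μt x * M.p x z ≤ β x * M.p x z := fun x =>
      mul_le_mul_left (hmin x) _
    have hgfin : ∑' x, β x0 * μt x * M.p x z ≠ ⊤ := by
      refine ne_top_of_le_ne_top ?_ (ENNReal.tsum_le_tsum hgle)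
      rw [← hβstat z]
      exact (hβfin z).ne
    rw [tsum_sub' _ _ hgle hgfin]
    have e1 : ∑' x, β x * M.p x z = β z := (hβstat z).symm
    have e2 : ∑' x, β x0 * μt x * M.p x z = β x0 * μt z := by
      calc ∑' x, β x0 * μt x * M.p x z
          = ∑' x, β x0 * (μt x * M.p x z) := tsum_congr fun x => by rw [mul_assoc]
        _ = β x0 * ∑' x, μt x * M.p x z := ENNReal.tsum_mul_left
        _ = β x0 * μt z := by rw [hstat z]
    rw [e1, e2]
  have hνiter : ∀ n, ∀ z, ∑' x, ν x * qq M n x z = ν z := by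
    intro n
    induction n with
    | zero =>
      intro z
      rw [tsum_congr (fun x => by rw [qq_zero] :
        ∀ x, ν x * qq M 0 x z = ν x * (if z = x then 1 else 0))]
      have h4 : ∀ x, ν x * (if z = x then 1 else 0) = if z = x then ν x else 0 := by
        intro x
        by_cases h : z = x <;> simp [h]
      rw [tsum_congr h4, tsum_if_eq z ν]
    | succ n ih =>
      intro z
      have h1 : ∀ x, ν x * qq M (n+1) x z = ∑' w, ν x * (qq M n x w * M.p w z) := by
        intro x
        rw [qq_succ, ENNReal.tsum_mul_left]
      rw [tsum_congr h1, ENNReal.tsum_comm]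
      have h2 : ∀ w, ∑' x, ν x * (qq M n x w * M.p w z) = ν w * M.p w z := by
        intro w
        calc ∑' x, ν x * (qq M n x w * M.p w z)
            = ∑' x, (ν x * qq M n x w) * M.p w z := tsum_congr fun x => by ring
          _ = (∑' x, ν x * qq M n x w) * M.p w z := ENNReal.tsum_mul_right
          _ = ν w * M.p w z := by rw [ih w]
      rw [tsum_congr h2, hνstat z]
  have hνy : ν y = 0 := by
    obtain ⟨n, hn⟩ := hirr y x0
    rw [meas_coord M y n x0] at hn
    have hle2 : ν y * qq M n y x0 ≤ ∑' x, ν x * qq M n x x0 := ENNReal.le_tsum y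
    rw [hνiter n x0, hν0] at hle2
    have h0 := le_antisymm hle2 zero_le
    rcases mul_eq_zero.1 h0 with h | h
    · exact h
    · exact absurd h hn.ne'
  have heq : β y = β x0 * μt y := by
    refine le_antisymm ?_ (hmin y)
    have : β y - β x0 * μt y = 0 := hνy
    exact tsub_eq_zero_iff_le.1 this
  rw [hgreen, ENNReal.eq_div_iff (hβpos x0).ne' (hβfin x0).ne]
  exact heq.symm
end

section
/- For three distinct states x0, x1, y of an irreducible recurrent Markov chain and x ∉ {x0, x1}, the Green functions satisfy G_{x0}(x,y) = G_{x0,x1}(x,y) + G_{x0,x1}(x1,y) · G_{x0}(x,x1), where G_{x0,x1} is the Green function of the chain killed just before the first positive hitting time of the set {x0, x1}. -/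
open MeasureTheory ENNReal
open scoped Classical NNReal

/-- Green function of the chain killed just before the first positive hitting time of the
set `{x0, x1}`: `G_{x0,x1}(x,y) = E_x[L^y_{(T'_{x0} ∧ T'_{x1}) - 1}]`. -/
noncomputable def MC.green2 {E : Type*} [MeasurableSpace E] (M : MC E) (x0 x1 x y : E) : ℝ≥0∞ :=
  ∫⁻ ω, (∑' n : ℕ,
    if ω n = y ∧ ∀ k, 1 ≤ k → k ≤ n → (ω k ≠ x0 ∧ ω k ≠ x1) then (1 : ℝ≥0∞) else 0) ∂ M.P x

namespace MCaux

set_option linter.unusedSectionVars false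

variable {E : Type*} [MeasurableSpace E]

/-- weight of a path starting at `a` and continuing along `l` -/
noncomputable def wt (M : MC E) : E → List E → ℝ≥0∞
  | _, [] => 1
  | a, b :: l => M.p a b * wt M b l

@[simp] lemma wt_nil (M : MC E) (a : E) : wt M a [] = 1 := rfl
@[simp] lemma wt_cons (M : MC E) (a b : E) (l : List E) :
    wt M a (b :: l) = M.p a b * wt M b l := rfl

lemma wt_append (M : MC E) (a : E) (l1 l2 : List E) :
    wt M a (l1 ++ l2) = wt M a l1 * wt M (l1.getLastD a) l2 := by
  induction l1 generalizing a with
  | nil => simp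
  | cons b l ih =>
      rw [List.cons_append, wt_cons, wt_cons, ih, mul_assoc, List.getLastD_cons]

/-- the list `[ω 1, ..., ω n]` -/
def seg (ω : ℕ → E) (n : ℕ) : List E := (List.range n).map fun i => ω (i + 1)

@[simp] lemma seg_length (ω : ℕ → E) (n : ℕ) : (seg ω n).length = n := by
  simp [seg]

lemma seg_getD (ω : ℕ → E) (n : ℕ) {i : ℕ} (h : i < n) (d : E) :
    (seg ω n).getD i d = ω (i + 1) := by
  simp [seg, List.getD_eq_getElem?_getD, h]

lemma mem_seg {ω : ℕ → E} {n : ℕ} {b : E} :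
    b ∈ seg ω n ↔ ∃ k, 1 ≤ k ∧ k ≤ n ∧ ω k = b := by
  simp only [seg, List.mem_map, List.mem_range]
  constructor
  · rintro ⟨i, hi, rfl⟩; exact ⟨i + 1, by omega, by omega, rfl⟩
  · rintro ⟨k, h1, h2, rfl⟩
    exact ⟨k - 1, by omega, by congr 1; omega⟩

lemma getLastD_seg (ω : ℕ → E) (n : ℕ) : (seg ω n).getLastD (ω 0) = ω n := by
  induction n with
  | zero => simp [seg]
  | succ n ih =>
      have : seg ω (n + 1) = seg ω n ++ [ω (n + 1)] := by
        simp [seg, List.range_succ]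
      simp [this]

lemma seg_succ (ω : ℕ → E) (n : ℕ) : seg ω (n + 1) = ω 1 :: seg (fun i => ω (i+1)) n := by
  simp [seg, List.range_succ_eq_map, List.map_map, Function.comp]

/-- cylinder set -/
def cyl (a : E) (l : List E) : Set (ℕ → E) :=
  {ω | ω 0 = a ∧ ∀ i < l.length, ω (i + 1) = l.getD i a}

lemma mem_cyl_self (ω : ℕ → E) (n : ℕ) : ω ∈ cyl (ω 0) (seg ω n) := by
  refine ⟨rfl, fun i hi => ?_⟩
  rw [seg_getD ω n (by simpa using hi)]

lemma eq_of_mem_cyl {ω : ℕ → E} {a : E} {l : List E} (h : ω ∈ cyl a l) :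
    a = ω 0 ∧ l = seg ω l.length := by
  obtain ⟨h0, h1⟩ := h
  refine ⟨h0.symm, ?_⟩
  apply List.ext_getElem (by simp)
  intro i hi hi'
  have := h1 i hi
  rw [List.getD_eq_getElem?_getD] at this
  simp only [List.getElem?_eq_getElem hi, Option.getD_some] at this
  simpa [seg] using this.symm

lemma prod_p (M : MC E) : ∀ (l : List E) (a d : E),
    (∏ i : Fin l.length, M.p ((a :: l).getD i d) ((a :: l).getD (i + 1) d)) = wt M a l := by
  intro l
  induction l with
  | nil => intro a d; simp
  | cons b l ih =>
      intro a d
      rw [show (b :: l).length = l.length + 1 from rfl, Fin.prod_univ_succ]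
      simp only [Fin.val_zero, Fin.val_succ, zero_add, List.getD_cons_succ,
        List.getD_cons_zero]
      have ih' : ∏ i : Fin l.length, M.p ((b :: l).getD (↑i) d) (l.getD (↑i) d) = wt M b l := by
        rw [← ih b d]
        exact Finset.prod_congr rfl fun i _ => by simp [List.getD_cons_succ]
      rw [ih', wt_cons]

lemma meas_cyl (M : MC E) (x a : E) (l : List E) :
    M.P x (cyl a l) = (if a = x then 1 else 0) * wt M a l := by
  have h := M.fdd x l.length (fun i => (a :: l).getD i a)
  have hset : {ω : ℕ → E | ∀ i : Fin (l.length + 1), ω i = (a :: l).getD i a} = cyl a l := by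
    ext ω
    constructor
    · intro h
      refine ⟨by simpa using h 0, fun i hi => ?_⟩
      have := h ⟨i + 1, by omega⟩
      simpa [List.getD] using this
    · rintro ⟨h0, h1⟩ i
      rcases i with ⟨i, hi⟩
      match i, hi with
      | 0, _ => simpa using h0
      | (j+1), hj =>
          have := h1 j (by omega)
          simpa [List.getD] using this
  rw [hset] at h
  rw [h]
  simp only [Fin.coe_castSucc, Fin.val_succ]
  rw [prod_p]
  simp

variable [Countable E]

lemma sum_wt_len (M : MC E) : ∀ (n : ℕ) (x : E),
    ∑' l : List E, (if l.length = n then wt M x l else 0) = 1 := by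
  intro n
  induction n with
  | zero =>
      intro x
      rw [tsum_eq_single ([] : List E)]
      · simp
      · intro l hl
        simp only [List.length_eq_zero_iff]
        rw [if_neg hl]
  | succ n ih =>
      intro x
      have key : ∑' l : List E, (if l.length = n + 1 then wt M x l else 0)
          = ∑' q : E × List E, (if q.2.length = n then M.p x q.1 * wt M q.1 q.2 else 0) := by
        apply tsum_eq_tsum_of_ne_zero_bij (fun q => q.val.1 :: q.val.2)
        · rintro ⟨⟨b, l⟩, hm⟩ ⟨⟨b', l'⟩, hm'⟩ h
          simp only [List.cons.injEq] at h
          exact Subtype.ext (by simp [Prod.ext_iff, h.1, h.2])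
        · rintro l hl
          rcases l with _ | ⟨b, l⟩
          · simp at hl
          · refine ⟨⟨(b, l), ?_⟩, rfl⟩
            simp only [Function.mem_support, ne_eq] at hl ⊢
            rw [List.length_cons] at hl
            split at hl
            · rename_i hlen
              rw [if_pos (show l.length = n by omega)]
              simpa [wt] using hl
            · exact absurd rfl hl
        · rintro ⟨⟨b, l⟩, hq⟩
          simp only [Function.mem_support, ne_eq] at hq
          by_cases hlen : l.length = n
          · simp [hlen, wt]
          · simp [hlen] at hq
      rw [key, ENNReal.tsum_prod']
      calc ∑' (b : E) (l : List E), (if (b, l).2.length = n then M.p x (b, l).1 * wt M (b, l).1 (b, l).2 else 0)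
          = ∑' (b : E), M.p x b * ∑' l : List E, (if l.length = n then wt M b l else 0) := by
            congr 1; ext b
            rw [← ENNReal.tsum_mul_left]
            congr 1; ext l
            split <;> simp
        _ = ∑' (b : E), M.p x b := by simp [ih]
        _ = 1 := M.stochastic x

/-- the event that the path up to time `n` satisfies `Cnd` -/
def evt (Cnd : E → List E → Prop) (n : ℕ) : Set (ℕ → E) := {ω | Cnd (ω 0) (seg ω n)}

/-- the path-sum associated to `Cnd` at level `n`, started at `x` -/
noncomputable def lvl (M : MC E) (x : E) (Cnd : E → List E → Prop) (n : ℕ) : ℝ≥0∞ :=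
  ∑' l : List E, if l.length = n ∧ Cnd x l then wt M x l else 0

lemma meas_evt_le (M : MC E) (x : E) (Cnd : E → List E → Prop) (n : ℕ) :
    M.P x (evt Cnd n) ≤ lvl M x Cnd n := by
  classical
  set T : Set (E × List E) := {q | q.2.length = n ∧ Cnd q.1 q.2} with hT
  have hsub : evt Cnd n ⊆ ⋃ q : T, cyl q.1.1 q.1.2 := by
    intro ω hω
    exact Set.mem_iUnion.2 ⟨⟨(ω 0, seg ω n), by simp [hT], hω⟩, mem_cyl_self ω n⟩
  calc M.P x (evt Cnd n) ≤ M.P x (⋃ q : T, cyl q.1.1 q.1.2) := measure_mono hsub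
    _ ≤ ∑' q : T, M.P x (cyl q.1.1 q.1.2) := measure_iUnion_le _
    _ = ∑' q : T, (if q.1.1 = x then 1 else 0) * wt M q.1.1 q.1.2 := by
        congr 1; ext q; exact meas_cyl M x q.1.1 q.1.2
    _ = ∑' q : E × List E,
          T.indicator (fun q => (if q.1 = x then 1 else 0) * wt M q.1 q.2) q :=
        tsum_subtype T (fun q => (if q.1 = x then 1 else 0) * wt M q.1 q.2)
    _ = ∑' (a : E) (l : List E),
          Set.indicator T (fun q => (if q.1 = x then 1 else 0) * wt M q.1 q.2) (a, l) :=
        ENNReal.tsum_prod'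
    _ = ∑' (a : E) (l : List E),
          (if a = x then 1 else 0) * (if l.length = n ∧ Cnd a l then wt M a l else 0) := by
        congr 1; ext a; congr 1; ext l
        by_cases hq : (a, l) ∈ T
        · rw [Set.indicator_of_mem hq]
          rw [hT] at hq
          simp only [Set.mem_setOf_eq] at hq
          rw [if_pos hq]
        · rw [Set.indicator_of_notMem hq]
          rw [hT] at hq
          simp only [Set.mem_setOf_eq] at hq
          rw [if_neg hq, mul_zero]
    _ = lvl M x Cnd n := by
        rw [tsum_eq_single x]
        · simp [lvl]
        · intro a ha
          simp [ha]

lemma lvl_add_lvl_not (M : MC E) (x : E) (Cnd : E → List E → Prop) (n : ℕ) :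
    lvl M x Cnd n + lvl M x (fun a l => ¬ Cnd a l) n = 1 := by
  classical
  unfold lvl
  rw [← ENNReal.tsum_add]
  rw [← sum_wt_len M n x]
  congr 1; ext l
  by_cases h1 : l.length = n
  · by_cases h2 : Cnd x l <;> simp [h1, h2]
  · simp [h1]

lemma evt_not (Cnd : E → List E → Prop) (n : ℕ) :
    evt (fun a l => ¬ Cnd a l) n = (evt Cnd n)ᶜ := rfl

lemma meas_evt (M : MC E) (x : E) (Cnd : E → List E → Prop) (n : ℕ) :
    M.P x (evt Cnd n) = lvl M x Cnd n := by
  haveI := M.prob x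
  have h1 := meas_evt_le M x Cnd n
  have h2 := meas_evt_le M x (fun a l => ¬ Cnd a l) n
  rw [evt_not] at h2
  have htot : lvl M x Cnd n + lvl M x (fun a l => ¬ Cnd a l) n = 1 :=
    lvl_add_lvl_not M x Cnd n
  have hge : (1 : ℝ≥0∞) ≤ M.P x (evt Cnd n) + M.P x (evt Cnd n)ᶜ := by
    rw [show (1 : ℝ≥0∞) = M.P x Set.univ from (measure_univ).symm]
    rw [← Set.union_compl_self (evt Cnd n)]
    exact measure_union_le _ _
  by_contra hne
  have hlt : M.P x (evt Cnd n) < lvl M x Cnd n := lt_of_le_of_ne h1 hne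
  have : M.P x (evt Cnd n) + M.P x (evt Cnd n)ᶜ
      < lvl M x Cnd n + lvl M x (fun a l => ¬ Cnd a l) n := by
    exact ENNReal.add_lt_add_of_lt_of_le (measure_ne_top _ _) hlt h2
  rw [htot] at this
  exact absurd (lt_of_le_of_lt hge this) (lt_irrefl _)

lemma exists_sandwich (M : MC E) (x : E) (Cnd : E → List E → Prop) (n : ℕ) :
    ∃ B B' : Set (ℕ → E), MeasurableSet B ∧ MeasurableSet B' ∧
      B ⊆ evt Cnd n ∧ evt Cnd n ⊆ B' ∧
      M.P x B = lvl M x Cnd n ∧ M.P x B' = lvl M x Cnd n := by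
  haveI := M.prob x
  obtain ⟨B', hsub', hmeas', hB'⟩ := exists_measurable_superset (M.P x) (evt Cnd n)
  obtain ⟨H, hsubH, hmeasH, hH⟩ := exists_measurable_superset (M.P x) (evt Cnd n)ᶜ
  refine ⟨Hᶜ, B', hmeasH.compl, hmeas', ?_, hsub', ?_, ?_⟩
  · rw [← compl_compl (evt Cnd n)]
    exact Set.compl_subset_compl.2 hsubH
  · rw [measure_compl hmeasH (measure_ne_top _ _), hH,
      ← evt_not, meas_evt M x _ n, measure_univ]
    have := lvl_add_lvl_not M x Cnd n
    rw [← this]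
    rw [ENNReal.add_sub_cancel_right]
    intro hc
    rw [hc] at this
    simp at this
  · rw [hB', meas_evt]

noncomputable def pathSum (M : MC E) (x : E) (Cnd : E → List E → Prop) : ℝ≥0∞ :=
  ∑' l : List E, if Cnd x l then wt M x l else 0

lemma tsum_lvl (M : MC E) (x : E) (Cnd : E → List E → Prop) :
    ∑' n, lvl M x Cnd n = pathSum M x Cnd := by
  classical
  unfold lvl pathSum
  rw [ENNReal.tsum_comm]
  congr 1; ext l
  rw [tsum_eq_single l.length]
  · simp
  · intro n hn
    rw [if_neg]
    rintro ⟨h, -⟩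
    exact hn h.symm

lemma lintegral_evt (M : MC E) (x : E) (Cnd : E → List E → Prop) :
    ∫⁻ ω, (∑' n, if Cnd (ω 0) (seg ω n) then (1 : ℝ≥0∞) else 0) ∂ M.P x
      = ∑' n, lvl M x Cnd n := by
  classical
  choose B B' hB hB' hBsub hsubB' hμB hμB' using fun n => exists_sandwich M x Cnd n
  apply le_antisymm
  · calc ∫⁻ ω, (∑' n, if Cnd (ω 0) (seg ω n) then (1 : ℝ≥0∞) else 0) ∂ M.P x
        ≤ ∫⁻ ω, (∑' n, (B' n).indicator (fun _ => (1 : ℝ≥0∞)) ω) ∂ M.P x := by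
          apply lintegral_mono
          intro ω
          apply ENNReal.tsum_le_tsum
          intro n
          by_cases h : Cnd (ω 0) (seg ω n)
          · rw [if_pos h, Set.indicator_of_mem (hsubB' n h)]
          · rw [if_neg h]; exact zero_le
      _ = ∑' n, M.P x (B' n) := by
          rw [lintegral_tsum fun n => ((measurable_const.indicator (hB' n)).aemeasurable)]
          congr 1; ext n
          rw [lintegral_indicator_const (hB' n), one_mul]
      _ = ∑' n, lvl M x Cnd n := by congr 1; ext n; exact hμB' n
  · calc ∑' n, lvl M x Cnd n = ∑' n, M.P x (B n) := by
          congr 1; ext n; exact (hμB n).symm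
      _ = ∫⁻ ω, (∑' n, (B n).indicator (fun _ => (1 : ℝ≥0∞)) ω) ∂ M.P x := by
          rw [lintegral_tsum fun n => ((measurable_const.indicator (hB n)).aemeasurable)]
          congr 1; ext n
          rw [lintegral_indicator_const (hB n), one_mul]
      _ ≤ ∫⁻ ω, (∑' n, if Cnd (ω 0) (seg ω n) then (1 : ℝ≥0∞) else 0) ∂ M.P x := by
          apply lintegral_mono
          intro ω
          apply ENNReal.tsum_le_tsum
          intro n
          by_cases h : ω ∈ B n
          · have hc : Cnd (ω 0) (seg ω n) := hBsub n h
            rw [Set.indicator_of_mem h, if_pos hc]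
          · rw [Set.indicator_of_notMem h]; exact zero_le

lemma lintegral_eq_pathSum (M : MC E) (x : E) (Cnd : E → List E → Prop) :
    ∫⁻ ω, (∑' n, if Cnd (ω 0) (seg ω n) then (1 : ℝ≥0∞) else 0) ∂ M.P x
      = pathSum M x Cnd := by
  rw [lintegral_evt, tsum_lvl]

lemma getLastD_append' (u v : List E) (d : E) :
    (u ++ v).getLastD d = v.getLastD (u.getLastD d) := by
  induction u generalizing d with
  | nil => rfl
  | cons a u ih => rw [List.cons_append, List.getLastD_cons, ih, List.getLastD_cons]

lemma getLastD_mem_of_ne_nil {l : List E} (h : l ≠ []) (d : E) : l.getLastD d ∈ l := by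
  induction l generalizing d with
  | nil => exact absurd rfl h
  | cons a l ih =>
      rw [List.getLastD_cons]
      rcases eq_or_ne l [] with rfl | hl
      · simp
      · exact List.mem_cons_of_mem a (ih hl a)

lemma ne_nil_of_getLastD {l : List E} {d c : E} (h : l.getLastD d = c) (hdc : d ≠ c) :
    l ≠ [] := by
  rintro rfl
  exact hdc h

lemma exists_split (x1 : E) : ∀ l : List E, x1 ∈ l →
    ∃ u v : List E, l = u ++ v ∧ u ≠ [] ∧ (∀ d, u.getLastD d = x1) ∧ x1 ∉ v := by
  intro l
  induction l using List.reverseRecOn with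
  | nil => intro h; simp at h
  | append_singleton l a ih =>
      intro h
      rcases eq_or_ne a x1 with rfl | ha
      · exact ⟨l ++ [a], [], by simp, by simp, fun d => by
          rw [getLastD_append']; rfl, by simp⟩
      · have hx1 : x1 ∈ l := by
          rcases List.mem_append.1 h with h' | h'
          · exact h'
          · simp only [List.mem_singleton] at h'
            exact absurd h'.symm ha
        obtain ⟨u, v, rfl, hu, hlast, hnv⟩ := ih hx1
        exact ⟨u, v ++ [a], by simp, hu, hlast, by
          simp only [List.mem_append, List.mem_singleton]
          rintro (h' | rfl) <;> [exact hnv h'; exact ha rfl]⟩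

lemma split_unique {u v u' v' : List E} {x1 : E} (h : u ++ v = u' ++ v')
    (hu : ∀ d, u.getLastD d = x1) (hu' : ∀ d, u'.getLastD d = x1)
    (hv : x1 ∉ v) (hv' : x1 ∉ v') : u = u' ∧ v = v' := by
  rcases List.append_eq_append_iff.1 h with ⟨w, hw1, hw2⟩ | ⟨w, hw1, hw2⟩
  · rcases eq_or_ne w [] with rfl | hw
    · constructor
      · rw [hw1, List.append_nil]
      · rw [hw2, List.nil_append]
    · exfalso
      have : x1 ∈ w := by
        have := hu' x1
        rw [hw1, getLastD_append'] at this
        rw [← this]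
        exact getLastD_mem_of_ne_nil hw _
      exact hv (by rw [hw2]; exact List.mem_append.2 (Or.inl this))
  · rcases eq_or_ne w [] with rfl | hw
    · constructor
      · rw [hw1, List.append_nil]
      · rw [hw2, List.nil_append]
    · exfalso
      have : x1 ∈ w := by
        have := hu x1
        rw [hw1, getLastD_append'] at this
        rw [← this]
        exact getLastD_mem_of_ne_nil hw _
      exact hv' (by rw [hw2]; exact List.mem_append.2 (Or.inl this))

/-- condition for `green x0 · y`: path ends at `y` avoiding `x0` -/
def C1 (x0 y : E) : E → List E → Prop :=
  fun a l => l.getLastD a = y ∧ ∀ b ∈ l, b ≠ x0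

/-- condition for `green2 x0 x1 · y` -/
def C2 (x0 x1 y : E) : E → List E → Prop :=
  fun a l => l.getLastD a = y ∧ ∀ b ∈ l, b ≠ x0 ∧ b ≠ x1

lemma green_eq_pathSum (M : MC E) (x0 x y : E) :
    M.green x0 x y = pathSum M x (C1 x0 y) := by
  rw [MC.green, ← lintegral_eq_pathSum M x (C1 x0 y)]
  apply lintegral_congr
  intro ω
  apply tsum_congr
  intro n
  have hiff : (ω n = y ∧ ∀ k, 1 ≤ k → k ≤ n → ω k ≠ x0) ↔ C1 x0 y (ω 0) (seg ω n) := by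
    unfold C1
    rw [getLastD_seg]
    apply and_congr Iff.rfl
    constructor
    · intro h b hb
      obtain ⟨k, h1, h2, rfl⟩ := mem_seg.1 hb
      exact h k h1 h2
    · intro h k h1 h2
      exact h (ω k) (mem_seg.2 ⟨k, h1, h2, rfl⟩)
  by_cases hb : C1 x0 y (ω 0) (seg ω n)
  · rw [if_pos (hiff.2 hb), if_pos hb]
  · rw [if_neg (fun hc => hb (hiff.1 hc)), if_neg hb]

lemma green2_eq_pathSum (M : MC E) (x0 x1 x y : E) :
    M.green2 x0 x1 x y = pathSum M x (C2 x0 x1 y) := by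
  rw [MC.green2, ← lintegral_eq_pathSum M x (C2 x0 x1 y)]
  apply lintegral_congr
  intro ω
  apply tsum_congr
  intro n
  have hiff : (ω n = y ∧ ∀ k, 1 ≤ k → k ≤ n → (ω k ≠ x0 ∧ ω k ≠ x1))
      ↔ C2 x0 x1 y (ω 0) (seg ω n) := by
    unfold C2
    rw [getLastD_seg]
    apply and_congr Iff.rfl
    constructor
    · intro h b hb
      obtain ⟨k, h1, h2, rfl⟩ := mem_seg.1 hb
      exact h k h1 h2
    · intro h k h1 h2
      exact h (ω k) (mem_seg.2 ⟨k, h1, h2, rfl⟩)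
  by_cases hb : C2 x0 x1 y (ω 0) (seg ω n)
  · rw [if_pos (hiff.2 hb), if_pos hb]
  · rw [if_neg (fun hc => hb (hiff.1 hc)), if_neg hb]

lemma pathSum_split (M : MC E) (x0 x1 x y : E) (h1y : x1 ≠ y) (hx1 : x ≠ x1) :
    pathSum M x (C1 x0 y)
      = pathSum M x (C2 x0 x1 y) + pathSum M x1 (C2 x0 x1 y) * pathSum M x (C1 x0 x1) := by
  classical
  -- pointwise split of the indicator
  have hsplit : ∀ l : List E,
      (if C1 x0 y x l then wt M x l else 0)
        = (if C2 x0 x1 y x l then wt M x l else 0)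
          + (if C1 x0 y x l ∧ x1 ∈ l then wt M x l else 0) := by
    intro l
    have hC2 : C2 x0 x1 y x l ↔ C1 x0 y x l ∧ x1 ∉ l := by
      unfold C1 C2
      constructor
      · rintro ⟨hl, hb⟩
        exact ⟨⟨hl, fun b hbl => (hb b hbl).1⟩, fun hmem => (hb x1 hmem).2 rfl⟩
      · rintro ⟨⟨hl, hb⟩, hmem⟩
        exact ⟨hl, fun b hbl => ⟨hb b hbl, fun hbx => hmem (hbx ▸ hbl)⟩⟩
    by_cases h : C1 x0 y x l
    · by_cases hm : x1 ∈ l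
      · rw [if_pos h, if_pos (And.intro h hm), if_neg (fun hc => (hC2.1 hc).2 hm), zero_add]
      · rw [if_pos h, if_pos (hC2.2 ⟨h, hm⟩), if_neg (fun hc => hm hc.2), add_zero]
    · rw [if_neg h, if_neg (fun hc => h (hC2.1 hc).1), if_neg (fun hc => h hc.1), add_zero]
  have step1 : pathSum M x (C1 x0 y)
      = pathSum M x (C2 x0 x1 y) + ∑' l : List E, (if C1 x0 y x l ∧ x1 ∈ l then wt M x l else 0) := by
    unfold pathSum
    rw [← ENNReal.tsum_add]
    exact tsum_congr hsplit
  rw [step1]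
  congr 1
  -- the cross term: split each path at the last visit to x1
  have key : (∑' l : List E, (if C1 x0 y x l ∧ x1 ∈ l then wt M x l else 0))
      = ∑' q : List E × List E,
          (if C1 x0 x1 x q.1 ∧ C2 x0 x1 y x1 q.2 then wt M x q.1 * wt M x1 q.2 else 0) := by
    apply tsum_eq_tsum_of_ne_zero_bij (fun q => q.val.1 ++ q.val.2)
    · -- injectivity
      rintro ⟨⟨u, v⟩, hq⟩ ⟨⟨u', v'⟩, hq'⟩ h
      simp only [Function.mem_support, ne_eq] at hq hq'
      have hcond : C1 x0 x1 x u ∧ C2 x0 x1 y x1 v := by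
        by_contra hc; exact hq (if_neg hc)
      have hcond' : C1 x0 x1 x u' ∧ C2 x0 x1 y x1 v' := by
        by_contra hc; exact hq' (if_neg hc)
      have huu : u ≠ [] := ne_nil_of_getLastD hcond.1.1 hx1
      have huu' : u' ≠ [] := ne_nil_of_getLastD hcond'.1.1 hx1
      have hgu : ∀ d, u.getLastD d = x1 := by
        intro d
        have := hcond.1.1
        rcases u with _ | ⟨a, u⟩
        · exact absurd rfl huu
        · rw [List.getLastD_cons] at this ⊢; exact this
      have hgu' : ∀ d, u'.getLastD d = x1 := by
        intro d
        have := hcond'.1.1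
        rcases u' with _ | ⟨a, u'⟩
        · exact absurd rfl huu'
        · rw [List.getLastD_cons] at this ⊢; exact this
      have hnv : x1 ∉ v := fun hm => (hcond.2.2 x1 hm).2 rfl
      have hnv' : x1 ∉ v' := fun hm => (hcond'.2.2 x1 hm).2 rfl
      have h' : u ++ v = u' ++ v' := h
      obtain ⟨e1, e2⟩ := split_unique h' hgu hgu' hnv hnv'
      exact Subtype.ext (by simp [e1, e2])
    · -- support f ⊆ range
      intro l hl
      simp only [Function.mem_support, ne_eq] at hl
      have hcond : (C1 x0 y x l ∧ x1 ∈ l) ∧ wt M x l ≠ 0 := by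
        by_cases hc : C1 x0 y x l ∧ x1 ∈ l
        · refine ⟨hc, ?_⟩; rw [if_pos hc] at hl; exact hl
        · exact absurd (if_neg hc) hl
      obtain ⟨⟨⟨hlast, havoid⟩, hmem⟩, hwt⟩ := hcond
      obtain ⟨u, v, rfl, hu, hulast, hnv⟩ := exists_split x1 l hmem
      have hC1u : C1 x0 x1 x u := ⟨hulast x, fun b hb => havoid b (List.mem_append.2 (Or.inl hb))⟩
      have hC2v : C2 x0 x1 y x1 v := by
        refine ⟨?_, fun b hb => ⟨havoid b (List.mem_append.2 (Or.inr hb)),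
          fun hbx => hnv (hbx ▸ hb)⟩⟩
        rw [getLastD_append', hulast x] at hlast
        exact hlast
      have hwt2 : wt M x u * wt M x1 v ≠ 0 := by
        rw [← hulast x, ← wt_append]
        exact hwt
      refine ⟨⟨(u, v), ?_⟩, rfl⟩
      simp only [Function.mem_support, ne_eq]
      rw [if_pos (And.intro hC1u hC2v)]
      exact hwt2
    · -- pointwise equality on support
      rintro ⟨⟨u, v⟩, hq⟩
      simp only [Function.mem_support, ne_eq] at hq
      have hcond : (C1 x0 x1 x u ∧ C2 x0 x1 y x1 v) ∧ wt M x u * wt M x1 v ≠ 0 := by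
        by_cases hc : C1 x0 x1 x u ∧ C2 x0 x1 y x1 v
        · refine ⟨hc, ?_⟩; rw [if_pos hc] at hq; exact hq
        · exact absurd (if_neg hc) hq
      obtain ⟨⟨⟨hulast, huavoid⟩, hvlast, hvavoid⟩, hwt⟩ := hcond
      have hu : u ≠ [] := ne_nil_of_getLastD hulast hx1
      have hC1 : C1 x0 y x (u ++ v) ∧ x1 ∈ u ++ v := by
        refine ⟨⟨?_, ?_⟩, List.mem_append.2 (Or.inl ?_)⟩
        · rw [getLastD_append', hulast]
          exact hvlast
        · intro b hb
          rcases List.mem_append.1 hb with hb' | hb'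
          · exact huavoid b hb'
          · exact (hvavoid b hb').1
        · rw [← hulast]
          exact getLastD_mem_of_ne_nil hu x
      have hC1' : C1 x0 y x (u ++ v) ∧ x1 ∈ u ++ v := hC1
      simp only
      rw [if_pos hC1', if_pos (And.intro (show C1 x0 x1 x u from ⟨hulast, huavoid⟩) (show C2 x0 x1 y x1 v from ⟨hvlast, hvavoid⟩))]
      rw [wt_append, hulast]
  rw [key, ENNReal.tsum_prod']
  have hfac : ∀ u : List E,
      (∑' v : List E, if C1 x0 x1 x u ∧ C2 x0 x1 y x1 v then wt M x u * wt M x1 v else 0)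
        = (if C1 x0 x1 x u then wt M x u else 0) * pathSum M x1 (C2 x0 x1 y) := by
    intro u
    by_cases hu : C1 x0 x1 x u
    · rw [if_pos hu]
      unfold pathSum
      rw [← ENNReal.tsum_mul_left]
      apply tsum_congr
      intro v
      by_cases hv : C2 x0 x1 y x1 v
      · rw [if_pos (And.intro hu hv), if_pos hv]
      · rw [if_neg (fun hc => hv hc.2), if_neg hv, mul_zero]
    · rw [if_neg hu, zero_mul]
      calc (∑' v : List E, if C1 x0 x1 x u ∧ C2 x0 x1 y x1 v then wt M x u * wt M x1 v else 0)
          = ∑' _ : List E, (0 : ℝ≥0∞) := tsum_congr fun v => if_neg (fun hc => hu hc.1)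
        _ = 0 := tsum_zero
  calc (∑' (u : List E) (v : List E),
        if C1 x0 x1 x (u, v).1 ∧ C2 x0 x1 y x1 (u, v).2 then wt M x (u, v).1 * wt M x1 (u, v).2 else 0)
      = ∑' u : List E, (if C1 x0 x1 x u then wt M x u else 0) * pathSum M x1 (C2 x0 x1 y) :=
        tsum_congr hfac
    _ = pathSum M x (C1 x0 x1) * pathSum M x1 (C2 x0 x1 y) := by
        rw [ENNReal.tsum_mul_right]; rfl
    _ = pathSum M x1 (C2 x0 x1 y) * pathSum M x (C1 x0 x1) := mul_comm _ _

end MCaux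

/-- For distinct states `x0, x1, y` of an irreducible recurrent Markov chain and
`x ∉ {x0, x1}`: `G_{x0}(x,y) = G_{x0,x1}(x,y) + G_{x0,x1}(x1,y) · G_{x0}(x,x1)`. -/
theorem green_decomposition_two_killing_points
    {E : Type*} [Countable E] [MeasurableSpace E]
    (M : MC E) (hirr : M.Irreducible) (hrec : M.Recurrent)
    (x0 x1 x y : E) (h01 : x0 ≠ x1) (h0y : x0 ≠ y) (h1y : x1 ≠ y)
    (hx0 : x ≠ x0) (hx1 : x ≠ x1) :
    M.green x0 x y = M.green2 x0 x1 x y + M.green2 x0 x1 x1 y * M.green x0 x x1 := by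
  rw [MCaux.green_eq_pathSum M x0 x y, MCaux.green2_eq_pathSum M x0 x1 x y,
    MCaux.green2_eq_pathSum M x0 x1 x1 y, MCaux.green_eq_pathSum M x0 x x1]
  exact MCaux.pathSum_split M x0 x1 x y h1y hx1
end

section
/- Suppose (Q_x)_{x∈E} is a family of finite measures on the path space E^{ℕ} satisfying Q_x(F_n · 1_{X_n = y}) = E_x[F_n 1_{X_n=y}] · (total mass of Q_y) for all n, y and bounded nonnegative F_n measurable with respect to the first n coordinates, where (P_x) is an irreducible recurrent Markov chain. Then there exists c ≥ 0 such that Q_x = c · P_x for all x ∈ E. -/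
set_option linter.unusedSectionVars false
set_option maxHeartbeats 1000000


open MeasureTheory ENNReal
open scoped Classical NNReal

namespace MCAux

variable {E : Type*} [Countable E] [MeasurableSpace E] (M : MC E)

noncomputable def V {n : ℕ} (xs : Fin (n + 1) → E) : ℝ≥0∞ :=
  ∏ i : Fin n, M.p (xs i.castSucc) (xs i.succ)

noncomputable def W (x : E) {n : ℕ} (xs : Fin (n + 1) → E) : ℝ≥0∞ :=
  (if xs 0 = x then 1 else 0) * V M xs

def Cyl {n : ℕ} (xs : Fin (n + 1) → E) : Set (ℕ → E) :=
  {ω | ∀ i : Fin (n + 1), ω i = xs i}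

def Ev (n : ℕ) (B : Set (Fin (n + 1) → E)) : Set (ℕ → E) :=
  {ω | (fun i : Fin (n + 1) => ω i) ∈ B}

lemma mem_Cyl {n : ℕ} {xs : Fin (n + 1) → E} {ω : ℕ → E} :
    ω ∈ Cyl xs ↔ (fun i : Fin (n + 1) => ω i) = xs := by
  constructor
  · intro h; funext i; exact h i
  · intro h i; exact congrFun h i

lemma Ev_eq_iUnion (n : ℕ) (B : Set (Fin (n + 1) → E)) :
    Ev n B = ⋃ xs ∈ B, Cyl xs := by
  ext ω
  simp only [Ev, Set.mem_setOf_eq, Set.mem_iUnion]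
  constructor
  · intro h; exact ⟨_, h, fun i => rfl⟩
  · rintro ⟨xs, hxs, h⟩; rwa [mem_Cyl.1 h]

lemma V_snoc {n : ℕ} (ys : Fin (n + 1) → E) (z : E) :
    V M (Fin.snoc ys z) = V M ys * M.p (ys (Fin.last n)) z := by
  unfold V
  rw [Fin.prod_univ_castSucc]
  congr 1
  · apply Finset.prod_congr rfl
    intro i _
    congr 1
    · exact Fin.snoc_castSucc ..
    · rw [Fin.succ_castSucc]; exact Fin.snoc_castSucc ..
  · congr 1
    · exact Fin.snoc_castSucc ..
    · rw [Fin.succ_last]; exact Fin.snoc_last ..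

lemma W_snoc (x : E) {n : ℕ} (ys : Fin (n + 1) → E) (z : E) :
    W M x (Fin.snoc ys z) = W M x ys * M.p (ys (Fin.last n)) z := by
  unfold W
  rw [V_snoc]
  have h0 : (Fin.snoc ys z : Fin (n + 2) → E) 0 = ys 0 := by
    rw [show (0 : Fin (n + 2)) = Fin.castSucc 0 by rfl]
    exact Fin.snoc_castSucc ..
  rw [h0]; ring

/-- sum over tuples via snoc splitting -/
lemma tsum_snoc {n : ℕ} (f : (Fin (n + 2) → E) → ℝ≥0∞) :
    ∑' zs : Fin (n + 2) → E, f zs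
      = ∑' ys : Fin (n + 1) → E, ∑' z : E, f (Fin.snoc ys z) := by
  rw [← (Fin.snocEquiv (fun _ => E)).tsum_eq f, ENNReal.tsum_prod', ENNReal.tsum_comm]
  rfl

lemma sum_W (x : E) (n : ℕ) : ∑' xs : Fin (n + 1) → E, W M x xs = 1 := by
  induction n with
  | zero =>
      rw [← (Equiv.funUnique (Fin 1) E).symm.tsum_eq (W M x)]
      have : ∀ z : E, W M x ((Equiv.funUnique (Fin 1) E).symm z) = if z = x then 1 else 0 := by
        intro z
        simp [W, V, Equiv.funUnique]
      simp only [this]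
      exact tsum_ite_eq x 1
  | succ n ih =>
      rw [tsum_snoc]
      have : ∀ ys : Fin (n + 1) → E, ∑' z : E, W M x (Fin.snoc ys z) = W M x ys := by
        intro ys
        simp only [W_snoc]
        rw [ENNReal.tsum_mul_left, M.stochastic, mul_one]
      simp only [this, ih]


lemma P_Cyl (x : E) {n : ℕ} (xs : Fin (n + 1) → E) : M.P x (Cyl xs) = W M x xs :=
  M.fdd x n xs

lemma Cyl_disjoint {n : ℕ} {xs ys : Fin (n + 1) → E} (h : xs ≠ ys) :
    Disjoint (Cyl xs) (Cyl ys) := by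
  rw [Set.disjoint_left]
  intro ω hx hy
  exact h ((mem_Cyl.1 hx).symm.trans (mem_Cyl.1 hy))

lemma exists_inner (x : E) (n : ℕ) :
    ∃ G : (Fin (n + 1) → E) → Set (ℕ → E),
      (∀ xs, MeasurableSet (G xs)) ∧ (∀ xs, G xs ⊆ Cyl xs) ∧
      (∀ xs, M.P x (G xs) = W M x xs) := by
  haveI := M.prob x
  set μ := M.P x with hμ
  set H : (Fin (n + 1) → E) → Set (ℕ → E) := fun xs => toMeasurable μ (Cyl xs) with hH
  have h1 : ∀ ys : (Fin (n+1) → E), μ (H ys) = W M x ys := fun ys => by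
    rw [hH, measure_toMeasurable]; exact P_Cyl M x ys
  have htot := sum_W M x n
  have hUm : ∀ xs : Fin (n+1) → E,
      MeasurableSet (⋃ ys ∈ ({xs}ᶜ : Set (Fin (n+1) → E)), H ys) := fun xs =>
    MeasurableSet.biUnion (Set.to_countable _) (fun ys _ => measurableSet_toMeasurable μ _)
  refine ⟨fun xs => (⋃ ys ∈ ({xs}ᶜ : Set (Fin (n+1) → E)), H ys)ᶜ, fun xs => (hUm xs).compl,
    ?_, ?_⟩
  · intro xs ω hω
    simp only [Set.mem_compl_iff, Set.mem_iUnion] at hω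
    push_neg at hω
    have hself : ω ∈ Cyl (fun i : Fin (n + 1) => ω i) := fun i => rfl
    by_cases hbeq : (fun i : Fin (n + 1) => ω i) = xs
    · rw [mem_Cyl]; exact hbeq
    · exact absurd (subset_toMeasurable μ _ hself) (hω _ hbeq)
  · intro xs
    have hsub : (⋃ ys ∈ ({xs}ᶜ : Set (Fin (n+1) → E)), H ys)ᶜ ⊆ Cyl xs := by
      intro ω hω
      simp only [Set.mem_compl_iff, Set.mem_iUnion] at hω
      push_neg at hω
      have hself : ω ∈ Cyl (fun i : Fin (n + 1) => ω i) := fun i => rfl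
      by_cases hbeq : (fun i : Fin (n + 1) => ω i) = xs
      · rw [mem_Cyl]; exact hbeq
      · exact absurd (subset_toMeasurable μ _ hself) (hω _ hbeq)
    refine le_antisymm (le_trans (measure_mono hsub) (le_of_eq (P_Cyl M x xs))) ?_
    set s : ℝ≥0∞ := ∑' ys : Fin (n+1) → E, (if ys = xs then 0 else W M x ys) with hs
    have hsplit : W M x xs + s = 1 := by
      rw [← htot, ENNReal.tsum_eq_add_tsum_ite xs, hs]
      congr 1
      exact tsum_congr fun ys => by by_cases h : ys = xs <;> simp [h]
    have hsne : s ≠ ∞ := by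
      intro hcon
      rw [hcon, add_top] at hsplit
      exact (by norm_num : (⊤ : ℝ≥0∞) ≠ 1) hsplit
    have hcover : (1 : ℝ≥0∞) ≤ μ ((⋃ ys ∈ ({xs}ᶜ : Set (Fin (n+1) → E)), H ys)ᶜ) + s := by
      have huniv : (Set.univ : Set (ℕ → E))
          ⊆ (⋃ ys ∈ ({xs}ᶜ : Set (Fin (n+1) → E)), H ys)ᶜ
            ∪ (⋃ ys ∈ ({xs}ᶜ : Set (Fin (n+1) → E)), H ys) := by
        rw [Set.compl_union_self]
      have hUb : μ (⋃ ys ∈ ({xs}ᶜ : Set (Fin (n+1) → E)), H ys) ≤ s := by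
        refine le_trans (measure_biUnion_le μ (Set.to_countable _) _) ?_
        have e1 : ∀ ys : ({xs}ᶜ : Set (Fin (n+1) → E)), μ (H (ys : Fin (n+1) → E))
            = W M x (ys : Fin (n+1) → E) := fun ys => h1 _
        rw [tsum_congr e1, tsum_subtype ({xs}ᶜ : Set (Fin (n+1) → E)) (fun ys => W M x ys)]
        refine le_of_eq (tsum_congr fun ys => ?_)
        by_cases h : ys = xs <;> simp [h, Set.indicator]
      calc (1:ℝ≥0∞) = μ Set.univ := (measure_univ).symm
        _ ≤ μ ((⋃ ys ∈ ({xs}ᶜ : Set (Fin (n+1) → E)), H ys)ᶜ)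
            + μ (⋃ ys ∈ ({xs}ᶜ : Set (Fin (n+1) → E)), H ys) :=
          le_trans (measure_mono huniv) (measure_union_le _ _)
        _ ≤ _ := by gcongr
    rw [← hsplit] at hcover
    exact ENNReal.le_of_add_le_add_right hsne hcover

lemma P_Ev (x : E) (n : ℕ) (B : Set (Fin (n + 1) → E)) :
    M.P x (Ev n B) = ∑' xs : Fin (n + 1) → E, (if xs ∈ B then W M x xs else 0) := by
  haveI := M.prob x
  set μ := M.P x with hμ
  obtain ⟨G, hGm, hGsub, hGmeas⟩ := exists_inner M x n
  apply le_antisymm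
  · rw [Ev_eq_iUnion]
    refine le_trans (measure_biUnion_le _ (Set.to_countable _) _) ?_
    have h2 : ∀ i : B, μ (Cyl (i : Fin (n+1) → E)) = W M x (i : Fin (n+1) → E) :=
      fun i => P_Cyl M x _
    rw [tsum_congr h2, tsum_subtype B (fun xs => W M x xs)]
    refine le_of_eq (tsum_congr fun xs => ?_)
    by_cases h : xs ∈ B <;> simp [h, Set.indicator]
  · have hEsub : (⋃ xs ∈ B, G xs) ⊆ Ev n B := by
      rw [Ev_eq_iUnion]
      exact Set.iUnion₂_mono fun xs _ => hGsub xs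
    refine le_trans ?_ (measure_mono hEsub)
    have hdis : Pairwise (Function.onFun Disjoint fun xs : B => G (xs : Fin (n+1) → E)) := by
      intro a b hne
      have hne' : (a : Fin (n+1) → E) ≠ (b : Fin (n+1) → E) := by
        simpa [Subtype.ext_iff] using hne
      exact Set.disjoint_of_subset (hGsub _) (hGsub _) (Cyl_disjoint hne')
    rw [Set.biUnion_eq_iUnion,
      measure_iUnion hdis (fun xs : B => hGm (xs : Fin (n+1) → E))]
    have h3 : ∀ xs : B, μ (G (xs : Fin (n+1) → E)) = W M x (xs : Fin (n+1) → E) :=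
      fun xs => hGmeas _
    rw [tsum_congr h3, tsum_subtype B (fun xs => W M x xs)]
    refine le_of_eq (tsum_congr fun xs => ?_).symm
    by_cases h : xs ∈ B <;> simp [h, Set.indicator]


lemma nullMeasurable_Ev (x : E) (n : ℕ) (B : Set (Fin (n + 1) → E)) :
    NullMeasurableSet (Ev n B) (M.P x) := by
  haveI := M.prob x
  set μ := M.P x with hμ
  obtain ⟨G, hGm, hGsub, hGmeas⟩ := exists_inner M x n
  have hdis : Pairwise (Function.onFun Disjoint G) := by
    intro a b hne
    exact Set.disjoint_of_subset (hGsub _) (hGsub _) (Cyl_disjoint hne)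
  set U : Set (ℕ → E) := ⋃ xs ∈ B, G xs with hU
  have hUm : MeasurableSet U := MeasurableSet.biUnion (Set.to_countable _) fun xs _ => hGm xs
  have hZ : μ ((⋃ xs, G xs)ᶜ) = 0 := by
    have : μ (⋃ xs, G xs) = 1 := by
      rw [measure_iUnion hdis hGm]
      rw [tsum_congr (fun xs => hGmeas xs)]
      exact sum_W M x n
    rw [measure_compl (MeasurableSet.iUnion hGm) (measure_ne_top μ _), this, measure_univ,
      tsub_self]
  have hEU : Ev n B \ U ⊆ (⋃ xs, G xs)ᶜ := by
    intro ω hω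
    rcases hω with ⟨hE, hnU⟩
    intro hcon
    simp only [Set.mem_iUnion] at hcon
    obtain ⟨xs, hxs⟩ := hcon
    have hωCyl : ω ∈ Cyl xs := hGsub xs hxs
    have : (fun i : Fin (n+1) => ω i) = xs := mem_Cyl.1 hωCyl
    apply hnU
    rw [hU]
    simp only [Set.mem_iUnion]
    exact ⟨xs, this ▸ hE, hxs⟩
  have hUE : U ⊆ Ev n B := by
    intro ω hω
    rw [hU] at hω
    simp only [Set.mem_iUnion] at hω
    obtain ⟨xs, hxsB, hωG⟩ := hω
    have := mem_Cyl.1 (hGsub xs hωG)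
    show (fun i : Fin (n+1) => ω i) ∈ B
    rw [this]; exact hxsB
  rw [← Set.union_diff_cancel hUE]
  exact (hUm.nullMeasurableSet).union
    (NullMeasurableSet.of_null (measure_mono_null hEU hZ))

/-- superadditivity of the lower Lebesgue integral (no measurability) -/
lemma tsum_lintegral_le {α ι : Type*} [Countable ι] [MeasurableSpace α] (μ : Measure α)
    (f : ι → α → ℝ≥0∞) :
    ∑' i, ∫⁻ a, f i a ∂μ ≤ ∫⁻ a, ∑' i, f i a ∂μ := by
  rw [ENNReal.tsum_eq_iSup_sum]
  refine iSup_le fun s => ?_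
  have h1 : ∀ s : Finset ι, ∑ i ∈ s, ∫⁻ a, f i a ∂μ ≤ ∫⁻ a, ∑ i ∈ s, f i a ∂μ := by
    intro s
    induction s using Finset.induction with
    | empty => simp
    | insert j t hnot ih =>
        rw [Finset.sum_insert hnot]
        refine le_trans (add_le_add_right ih _) ?_
        refine le_trans (le_lintegral_add _ _) (lintegral_mono fun a => ?_)
        exact le_of_eq (Finset.sum_insert (f := fun i => f i a) hnot).symm
  refine le_trans (h1 s) (lintegral_mono fun a => ?_)
  exact ENNReal.sum_le_tsum s

lemma lintegral_mem_ite₀ {α : Type*} [MeasurableSpace α] {μ : Measure α} {S : Set α}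
    (hS : NullMeasurableSet S μ) :
    ∫⁻ a, (if a ∈ S then (1:ℝ≥0∞) else 0) ∂μ = μ S := by
  have : (fun a => if a ∈ S then (1:ℝ≥0∞) else 0) = S.indicator 1 := by
    funext a; by_cases h : a ∈ S <;> simp [h]
  rw [this, lintegral_indicator_one₀ hS]

/-- exchange of a decreasing infimum with a countable sum -/
lemma iInf_tsum_antitone {ι : Type*} [Countable ι] (g : ι → ℕ → ℝ≥0∞)
    (hanti : ∀ i, Antitone (g i)) (hfin : ∑' i, g i 0 ≠ ∞) :
    ⨅ m, ∑' i, g i m = ∑' i, ⨅ m, g i m := by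
  letI : MeasurableSpace ι := ⊤
  have hmeas : ∀ m, Measurable (fun i => g i m) := fun m => measurable_from_top
  have h1 : ∀ m, ∑' i, g i m = ∫⁻ i, g i m ∂(Measure.count) := fun m =>
    (lintegral_count' (hmeas m)).symm
  have h2 : ∑' i, ⨅ m, g i m = ∫⁻ i, ⨅ m, g i m ∂(Measure.count) := by
    refine (lintegral_count' ?_).symm
    exact measurable_from_top
  rw [h2]
  simp only [h1]
  refine (MeasureTheory.lintegral_iInf hmeas ?_ ?_).symm
  · intro a b hab i
    exact hanti i hab
  · rw [← h1 0]; exact hfin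


noncomputable def bf (y : E) : ℕ → (E → ℝ≥0∞) → E → ℝ≥0∞
  | 0, f => f
  | (m+1), f => bf y m (fun w => ∑' u, if u = y then 0 else M.p w u * f u)

lemma sum_avoid (y x : E) (n : ℕ) (B : Set (Fin (n + 1) → E)) (m : ℕ) (f : E → ℝ≥0∞) :
    ∑' zs : Fin (n + m + 1) → E,
      (if ((fun i : Fin (n+1) => zs (Fin.castLE (Nat.succ_le_succ (Nat.le_add_right n m)) i)) ∈ B
           ∧ ∀ j : Fin (n + m + 1), n < (j : ℕ) → zs j ≠ y)
        then W M x zs * f (zs (Fin.last (n + m))) else 0)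
    = ∑' xs : Fin (n + 1) → E,
        (if xs ∈ B then W M x xs * bf M y m f (xs (Fin.last n)) else 0) := by
  induction m generalizing f with
  | zero =>
      refine tsum_congr fun zs => ?_
      have h1 : (fun i : Fin (n+1) =>
          zs (Fin.castLE (Nat.succ_le_succ (Nat.le_add_right n 0)) i)) = zs :=
        funext fun i => congrArg zs (Fin.ext rfl)
      have h2 : ∀ j : Fin (n+0+1), n < (j:ℕ) → zs j ≠ y := by
        intro j hj
        exact absurd j.isLt (by omega)
      rw [h1]
      by_cases hB : zs ∈ B
      · rw [if_pos ⟨hB, h2⟩, if_pos hB]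
        rfl
      · rw [if_neg (fun hc => hB hc.1), if_neg hB]
  | succ m ih =>
      have hkey : ∀ (ws : Fin (n+m+1) → E) (u : E),
          (if ((fun i : Fin (n+1) => (Fin.snoc ws u : Fin (n+m+2) → E)
                (Fin.castLE (Nat.succ_le_succ (Nat.le_add_right n (m+1))) i)) ∈ B
               ∧ ∀ j : Fin (n + m + 2), n < (j : ℕ) →
                  (Fin.snoc ws u : Fin (n+m+2) → E) j ≠ y)
            then W M x (Fin.snoc ws u)
              * f ((Fin.snoc ws u : Fin (n+m+2) → E) (Fin.last (n+m+1)))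
            else 0)
          = (if ((fun i : Fin (n+1) =>
                ws (Fin.castLE (Nat.succ_le_succ (Nat.le_add_right n m)) i)) ∈ B
               ∧ ∀ j : Fin (n + m + 1), n < (j : ℕ) → ws j ≠ y)
            then W M x ws * (if u = y then 0 else M.p (ws (Fin.last (n+m))) u * f u)
            else 0) := by
        intro ws u
        have hpre : (fun i : Fin (n+1) => (Fin.snoc ws u : Fin (n+m+2) → E)
              (Fin.castLE (Nat.succ_le_succ (Nat.le_add_right n (m+1))) i))
            = fun i : Fin (n+1) =>
                ws (Fin.castLE (Nat.succ_le_succ (Nat.le_add_right n m)) i) := by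
          funext i
          have hcast : (Fin.castLE (Nat.succ_le_succ (Nat.le_add_right n (m+1))) i)
              = Fin.castSucc (Fin.castLE (Nat.succ_le_succ (Nat.le_add_right n m)) i) :=
            Fin.ext rfl
          rw [hcast, Fin.snoc_castSucc]
        have hlast : (Fin.snoc ws u : Fin (n+m+2) → E) (Fin.last (n+m+1)) = u :=
          Fin.snoc_last ..
        have havoid : (∀ j : Fin (n + m + 2), n < (j : ℕ) →
              (Fin.snoc ws u : Fin (n+m+2) → E) j ≠ y)
            ↔ ((∀ j : Fin (n + m + 1), n < (j : ℕ) → ws j ≠ y) ∧ u ≠ y) := by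
          constructor
          · intro h
            refine ⟨fun j hj => ?_, ?_⟩
            · have := h (Fin.castSucc j) (by simpa using hj)
              rwa [Fin.snoc_castSucc] at this
            · have := h (Fin.last (n+m+1)) (by rw [Fin.val_last]; omega)
              rwa [hlast] at this
          · rintro ⟨h1, h2⟩ j hj
            rcases Fin.eq_castSucc_or_eq_last j with ⟨j', rfl⟩ | rfl
            · rw [Fin.snoc_castSucc]
              exact h1 j' (by simpa using hj)
            · rw [hlast]
              exact h2
        rw [hpre, hlast, W_snoc]
        by_cases hB : (fun i : Fin (n+1) =>
            ws (Fin.castLE (Nat.succ_le_succ (Nat.le_add_right n m)) i)) ∈ B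
        · by_cases hAv : ∀ j : Fin (n + m + 1), n < (j : ℕ) → ws j ≠ y
          · by_cases hu : u = y
            · rw [if_neg (fun hc => (havoid.1 hc.2).2 hu), if_pos ⟨hB, hAv⟩, if_pos hu,
                mul_zero]
            · rw [if_pos ⟨hB, havoid.2 ⟨hAv, hu⟩⟩, if_pos ⟨hB, hAv⟩, if_neg hu, mul_assoc]
          · rw [if_neg (fun hc => hAv (havoid.1 hc.2).1), if_neg (fun hc => hAv hc.2)]
        · rw [if_neg (fun hc => hB hc.1), if_neg (fun hc => hB hc.1)]
      calc ∑' zs : Fin (n + (m+1) + 1) → E,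
          (if ((fun i : Fin (n+1) =>
                zs (Fin.castLE (Nat.succ_le_succ (Nat.le_add_right n (m+1))) i)) ∈ B
             ∧ ∀ j : Fin (n + (m+1) + 1), n < (j : ℕ) → zs j ≠ y)
            then W M x zs * f (zs (Fin.last (n + (m+1)))) else 0)
          = ∑' ws : Fin (n+m+1) → E,
              (if ((fun i : Fin (n+1) =>
                    ws (Fin.castLE (Nat.succ_le_succ (Nat.le_add_right n m)) i)) ∈ B
                 ∧ ∀ j : Fin (n + m + 1), n < (j : ℕ) → ws j ≠ y)
                then W M x ws
                  * (∑' u, if u = y then 0 else M.p (ws (Fin.last (n+m))) u * f u)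
                else 0) := by
            refine (tsum_snoc (n := n + m) _).trans (tsum_congr fun ws => ?_)
            refine (tsum_congr fun u => hkey ws u).trans ?_
            by_cases hc : ((fun i : Fin (n+1) =>
                ws (Fin.castLE (Nat.succ_le_succ (Nat.le_add_right n m)) i)) ∈ B
              ∧ ∀ j : Fin (n + m + 1), n < (j : ℕ) → ws j ≠ y)
            · simp only [if_pos hc]
              exact ENNReal.tsum_mul_left
            · simp only [if_neg hc, tsum_zero]
        _ = ∑' xs : Fin (n + 1) → E,
            (if xs ∈ B then W M x xs * bf M y (m+1) f (xs (Fin.last n)) else 0) :=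
          ih (fun w => ∑' u, if u = y then 0 else M.p w u * f u)


lemma W_le_one (x : E) {n : ℕ} (xs : Fin (n + 1) → E) : W M x xs ≤ 1 := by
  rw [← sum_W M x n]
  exact ENNReal.le_tsum xs

def TailAvoid (y : E) (n : ℕ) : Set (ℕ → E) := {ω | ∀ j : ℕ, n < j → ω j ≠ y}

def AvoidBtw (y : E) (n m : ℕ) : Set (ℕ → E) := {ω | ∀ j : ℕ, n < j → j ≤ n + m → ω j ≠ y}

noncomputable def sN (y z : E) : ℝ≥0∞ := M.P z (TailAvoid y 0)

noncomputable def bN (y : E) (m : ℕ) (z : E) : ℝ≥0∞ := bf M y m (fun _ => 1) z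

lemma avoid_ev_eq (y : E) (n : ℕ) (B : Set (Fin (n + 1) → E)) (m : ℕ) :
    Ev n B ∩ AvoidBtw y n m
      = Ev (n + m) {zs : Fin (n + m + 1) → E |
          (fun i : Fin (n+1) => zs (Fin.castLE (Nat.succ_le_succ (Nat.le_add_right n m)) i)) ∈ B
          ∧ ∀ j : Fin (n + m + 1), n < (j : ℕ) → zs j ≠ y} := by
  ext ω
  simp only [Ev, AvoidBtw, Set.mem_inter_iff, Set.mem_setOf_eq]
  constructor
  · rintro ⟨hB, hAv⟩
    exact ⟨hB, fun j hj => hAv (j : ℕ) hj (by omega)⟩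
  · rintro ⟨hB, hAv⟩
    refine ⟨hB, fun j hj1 hj2 => ?_⟩
    exact hAv ⟨j, by omega⟩ hj1

lemma P_avoid (x y : E) (n : ℕ) (B : Set (Fin (n + 1) → E)) (m : ℕ) :
    M.P x (Ev n B ∩ AvoidBtw y n m)
      = ∑' xs : Fin (n + 1) → E,
          (if xs ∈ B then W M x xs * bN M y m (xs (Fin.last n)) else 0) := by
  rw [avoid_ev_eq, P_Ev]
  simp only [bN]
  rw [← sum_avoid M y x n B m (fun _ => 1)]
  refine tsum_congr fun zs => ?_
  simp only [Set.mem_setOf_eq]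
  by_cases hc : ((fun i : Fin (n+1) =>
      zs (Fin.castLE (Nat.succ_le_succ (Nat.le_add_right n m)) i)) ∈ B
    ∧ ∀ j : Fin (n + m + 1), n < (j : ℕ) → zs j ≠ y)
  · rw [if_pos hc, if_pos hc, mul_one]
  · rw [if_neg hc, if_neg hc]

lemma bN_eq_measure (y z : E) (m : ℕ) : bN M y m z = M.P z (AvoidBtw y 0 m) := by
  have h0 : Ev 0 (Set.univ : Set (Fin 1 → E)) ∩ AvoidBtw y 0 m = AvoidBtw y 0 m := by
    rw [Set.inter_eq_right]
    intro ω _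
    trivial
  have := P_avoid M z y 0 Set.univ m
  rw [h0] at this
  rw [this]
  refine (((Equiv.funUnique (Fin 1) E).symm.tsum_eq _).symm.trans ?_).symm
  simp only [Set.mem_univ, if_true]
  have hterm2 : ∀ a : E,
      W M z ((Equiv.funUnique (Fin 1) E).symm a)
        * bN M y m (((Equiv.funUnique (Fin 1) E).symm a) (Fin.last 0))
      = (if a = z then bN M y m z else 0) := by
    intro a
    have hW : W M z ((Equiv.funUnique (Fin 1) E).symm a) = if a = z then 1 else 0 := by
      simp [W, V, Equiv.funUnique]
    have hlast : ((Equiv.funUnique (Fin 1) E).symm a) (Fin.last 0) = a := rfl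
    rw [hW, hlast]
    by_cases h : a = z
    · rw [if_pos h, if_pos h, one_mul, h]
    · rw [if_neg h, if_neg h, zero_mul]
  refine (tsum_congr hterm2).trans ?_
  exact tsum_ite_eq z (fun _ => bN M y m z)

lemma bN_antitone (y z : E) : Antitone (fun m => bN M y m z) := by
  intro m m' hmm
  simp only [bN_eq_measure]
  apply measure_mono
  intro ω hω j hj1 hj2
  exact hω j hj1 (by omega)

lemma nullMeasurable_avoid (x y : E) (n : ℕ) (B : Set (Fin (n + 1) → E)) (m : ℕ) :
    NullMeasurableSet (Ev n B ∩ AvoidBtw y n m) (M.P x) := by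
  rw [avoid_ev_eq]
  exact nullMeasurable_Ev M x _ _

lemma sN_eq_iInf (y z : E) : sN M y z = ⨅ m, bN M y m z := by
  haveI := M.prob z
  have hset : TailAvoid y 0 = ⋂ m, AvoidBtw y 0 m := by
    ext ω
    simp only [TailAvoid, AvoidBtw, Set.mem_iInter, Set.mem_setOf_eq]
    constructor
    · intro h m j hj1 _
      exact h j hj1
    · intro h j hj
      exact h j j hj (by omega)
  rw [sN, hset]
  rw [Antitone.measure_iInter]
  · exact iInf_congr fun m => (bN_eq_measure M y z m).symm
  · intro m m' hmm ω hω j hj1 hj2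
    exact hω j hj1 (by omega)
  · intro m
    have := nullMeasurable_avoid M z y 0 Set.univ m
    have h0 : Ev 0 (Set.univ : Set (Fin 1 → E)) ∩ AvoidBtw y 0 m = AvoidBtw y 0 m := by
      rw [Set.inter_eq_right]; intro ω _; trivial
    rwa [h0] at this
  · exact ⟨0, measure_ne_top _ _⟩

lemma MLem1 (x y : E) (n : ℕ) (B : Set (Fin (n + 1) → E)) :
    M.P x (Ev n B ∩ TailAvoid y n)
      = ∑' xs : Fin (n + 1) → E,
          (if xs ∈ B then W M x xs * sN M y (xs (Fin.last n)) else 0) := by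
  haveI := M.prob x
  have hset : Ev n B ∩ TailAvoid y n = ⋂ m, (Ev n B ∩ AvoidBtw y n m) := by
    ext ω
    simp only [TailAvoid, AvoidBtw, Set.mem_iInter, Set.mem_inter_iff, Set.mem_setOf_eq]
    constructor
    · rintro ⟨hB, h⟩ m
      exact ⟨hB, fun j hj _ => h j hj⟩
    · intro h
      refine ⟨(h 0).1, fun j hj => ?_⟩
      exact (h j).2 j hj (by omega)
  rw [hset, Antitone.measure_iInter]
  · have h1 : ∀ m, M.P x (Ev n B ∩ AvoidBtw y n m)
        = ∑' xs : Fin (n + 1) → E,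
            (if xs ∈ B then W M x xs * bN M y m (xs (Fin.last n)) else 0) :=
      fun m => P_avoid M x y n B m
    rw [iInf_congr h1]
    rw [iInf_tsum_antitone (g := fun xs m =>
      if xs ∈ B then W M x xs * bN M y m (xs (Fin.last n)) else 0)]
    · refine tsum_congr fun xs => ?_
      by_cases hB : xs ∈ B
      · simp only [if_pos hB]
        rw [sN_eq_iInf]
        refine (ENNReal.mul_iInf' ?_ ?_).symm
        · intro hcon
          exact absurd hcon (by
            have := W_le_one M x xs
            intro h
            rw [h] at this
            exact absurd this (by simp))
        · intro _
          exact inferInstance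
      · simp only [if_neg hB, iInf_const]
    · intro xs m m' hmm
      by_cases hB : xs ∈ B
      · simp only [if_pos hB]
        exact mul_le_mul_right (bN_antitone M y _ hmm) _
      · simp only [if_neg hB, le_refl]
    · refine ne_top_of_le_ne_top (by simp : (1:ℝ≥0∞) ≠ ⊤) ?_
      rw [← sum_W M x n]
      refine Summable.tsum_le_tsum (fun xs => ?_) ENNReal.summable ENNReal.summable
      by_cases hB : xs ∈ B
      · simp only [if_pos hB]
        exact le_of_eq (by rw [show bN M y 0 (xs (Fin.last n)) = 1 from rfl, mul_one])
      · simp only [if_neg hB]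
        exact zero_le
  · intro m m' hmm
    exact Set.inter_subset_inter_right _ (fun ω hω j hj1 hj2 => hω j hj1 (by omega))
  · exact fun m => nullMeasurable_avoid M x y n B m
  · exact ⟨0, measure_ne_top _ _⟩


lemma nullMeasurable_coord (x y : E) (k : ℕ) :
    NullMeasurableSet {ω : ℕ → E | ω k = y} (M.P x) := by
  have h : {ω : ℕ → E | ω k = y} = Ev k {xs | xs (Fin.last k) = y} := rfl
  rw [h]
  exact nullMeasurable_Ev M x k _

lemma recur_compl_null (hrec : M.Recurrent) (y : E) :
    M.P y ({ω | ∀ N : ℕ, ∃ n, N ≤ n ∧ ω n = y}ᶜ) = 0 := by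
  haveI := M.prob y
  have hnm : NullMeasurableSet {ω : ℕ → E | ∀ N : ℕ, ∃ n, N ≤ n ∧ ω n = y} (M.P y) := by
    have h : {ω : ℕ → E | ∀ N : ℕ, ∃ n, N ≤ n ∧ ω n = y}
        = ⋂ N : ℕ, ⋃ n : ℕ, {ω : ℕ → E | N ≤ n ∧ ω n = y} := by
      ext ω
      simp only [Set.mem_setOf_eq, Set.mem_iInter, Set.mem_iUnion]
    rw [h]
    refine NullMeasurableSet.iInter fun N => NullMeasurableSet.iUnion fun n => ?_
    by_cases hNn : N ≤ n
    · have h2 : {ω : ℕ → E | N ≤ n ∧ ω n = y} = {ω : ℕ → E | ω n = y} := by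
        ext ω; simp [hNn]
      rw [h2]
      exact nullMeasurable_coord M y y n
    · have h2 : {ω : ℕ → E | N ≤ n ∧ ω n = y} = ∅ := by
        ext ω; simp [hNn]
      rw [h2]
      exact NullMeasurableSet.of_null (by simp)
  have hsum := measure_add_measure_compl₀ hnm
  rw [hrec y, measure_univ] at hsum
  have : (1:ℝ≥0∞) + M.P y ({ω | ∀ N : ℕ, ∃ n, N ≤ n ∧ ω n = y}ᶜ) = 1 + 0 := by
    rw [hsum, add_zero]
  exact (ENNReal.add_right_inj (by simp)).1 this

lemma sN_zero (hirr : M.Irreducible) (hrec : M.Recurrent) (y x : E) : sN M y x = 0 := by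
  obtain ⟨n, hn⟩ := hirr y x
  set B : Set (Fin (n+1) → E) := {xs | xs (Fin.last n) = x} with hB
  have hEv : {ω : ℕ → E | ω n = x} = Ev n B := rfl
  have hsub : Ev n B ∩ TailAvoid y n ⊆ {ω : ℕ → E | ∀ N : ℕ, ∃ k, N ≤ k ∧ ω k = y}ᶜ := by
    rintro ω ⟨_, hT⟩ hcon
    obtain ⟨k, hk1, hk2⟩ := hcon (n+1)
    exact hT k (by omega) hk2
  have h0 : M.P y (Ev n B ∩ TailAvoid y n) = 0 :=
    le_antisymm (le_trans (measure_mono hsub) (le_of_eq (recur_compl_null M hrec y)))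
      (zero_le)
  rw [MLem1] at h0
  have hfac : ∀ xs : Fin (n+1) → E,
      (if xs ∈ B then W M y xs * sN M y (xs (Fin.last n)) else 0)
      = (if xs ∈ B then W M y xs else 0) * sN M y x := by
    intro xs
    by_cases h : xs ∈ B
    · rw [if_pos h, if_pos h, show xs (Fin.last n) = x from h]
    · rw [if_neg h, if_neg h, zero_mul]
  rw [tsum_congr hfac, ENNReal.tsum_mul_right] at h0
  have hEvPos : 0 < ∑' xs : Fin (n+1) → E, (if xs ∈ B then W M y xs else 0) := by
    rw [← P_Ev, ← hEv]
    exact hn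
  rcases mul_eq_zero.1 h0 with h | h
  · exact absurd h (ne_of_gt hEvPos)
  · exact h

def Hit (y : E) : Set (ℕ → E) := {ω | ∃ k : ℕ, ω k = y}

lemma nullMeasurable_hit (x y : E) : NullMeasurableSet (Hit y) (M.P x) := by
  have h : Hit y = ⋃ k : ℕ, {ω : ℕ → E | ω k = y} := by
    ext ω; simp [Hit]
  rw [h]
  exact NullMeasurableSet.iUnion fun k => nullMeasurable_coord M x y k

lemma hit_one (hirr : M.Irreducible) (hrec : M.Recurrent) (x y : E) :
    M.P x (Hit y) = 1 := by
  haveI := M.prob x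
  have hnull : M.P x ((Hit y)ᶜ) = 0 := by
    have hsub : (Hit y)ᶜ ⊆ TailAvoid y 0 := by
      intro ω hω j _ hc
      exact hω ⟨j, hc⟩
    exact le_antisymm
      (le_trans (measure_mono hsub) (le_of_eq (sN_zero M hirr hrec y x))) (zero_le)
  have hsum := measure_add_measure_compl₀ (nullMeasurable_hit M x y)
  rw [hnull, add_zero, measure_univ] at hsum
  exact hsum

def FH (y : E) (n : ℕ) : Set (ℕ → E) := {ω | ω n = y ∧ ∀ k : ℕ, k < n → ω k ≠ y}

def FHB (y : E) (n : ℕ) : Set (Fin (n+1) → E) :=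
  {xs | xs (Fin.last n) = y ∧ ∀ k : Fin (n+1), (k:ℕ) < n → xs k ≠ y}

lemma FH_eq_Ev (y : E) (n : ℕ) : FH y n = Ev n (FHB y n) := by
  ext ω
  simp only [FH, FHB, Ev, Set.mem_setOf_eq]
  constructor
  · rintro ⟨h1, h2⟩
    exact ⟨h1, fun k hk => h2 k hk⟩
  · rintro ⟨h1, h2⟩
    refine ⟨h1, fun k hk => ?_⟩
    exact h2 ⟨k, by omega⟩ hk

lemma FH_disjoint (y : E) : Pairwise (Function.onFun Disjoint (FH y)) := by
  intro n n' hne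
  simp only [Function.onFun]
  rw [Set.disjoint_left]
  rintro ω ⟨h1, h2⟩ ⟨h1', h2'⟩
  rcases lt_or_gt_of_ne hne with h | h
  · exact h2' n h h1
  · exact h2 n' h h1'

lemma hit_eq_iUnion_FH (y : E) : Hit y = ⋃ n : ℕ, FH y n := by
  ext ω
  simp only [Hit, Set.mem_setOf_eq, Set.mem_iUnion]
  constructor
  · intro h
    exact ⟨Nat.find h, Nat.find_spec h, fun k hk => Nat.find_min h hk⟩
  · rintro ⟨n, hn, _⟩
    exact ⟨n, hn⟩

lemma P_hit_sum (x y : E) : M.P x (Hit y) = ∑' n : ℕ, M.P x (FH y n) := by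
  rw [hit_eq_iUnion_FH]
  exact measure_iUnion₀
    (fun n n' hne => ((FH_disjoint y) hne).aedisjoint)
    (fun n => (FH_eq_Ev y n) ▸ nullMeasurable_Ev M x n (FHB y n))


lemma tsum_ind_le_one {ι α : Type*} [Countable ι] (S : ι → Set α) (a : α)
    (huniq : ∀ i j, a ∈ S i → a ∈ S j → i = j) :
    ∑' i, (if a ∈ S i then (1:ℝ≥0∞) else 0) ≤ 1 := by
  by_cases h : ∃ i, a ∈ S i
  · obtain ⟨i₀, hi₀⟩ := h
    have hle : ∀ i, (if a ∈ S i then (1:ℝ≥0∞) else 0) ≤ (if i = i₀ then 1 else 0) := by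
      intro i
      by_cases hi : a ∈ S i
      · rw [if_pos hi, if_pos (huniq i i₀ hi hi₀)]
      · rw [if_neg hi]; exact zero_le
    refine le_trans (Summable.tsum_le_tsum hle ENNReal.summable ENNReal.summable) ?_
    exact le_of_eq (tsum_ite_eq i₀ (fun _ => (1:ℝ≥0∞)))
  · push_neg at h
    simp [h]

lemma Cyl_eq_Ev {n : ℕ} (xs : Fin (n + 1) → E) : Cyl xs = Ev n ({xs} : Set _) := by
  ext ω
  rw [mem_Cyl]
  exact Iff.rfl

def SFH (y : E) (i : (n : ℕ) × (Fin (n + 1) → E)) : Set (ℕ → E) :=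
  {ω | i.2 ∈ FHB y i.1 ∧ ω ∈ Cyl i.2}

def EvAt (n : ℕ) (B : Set (Fin (n + 1) → E)) (z : E) : Set (ℕ → E) :=
  Ev n B ∩ {ω' | ω' n = z}

lemma mem_EvAt {n : ℕ} {B : Set (Fin (n + 1) → E)} {z : E} {ω : ℕ → E} :
    ω ∈ EvAt n B z ↔ ω ∈ Ev n B ∧ ω n = z := Iff.rfl

lemma Q_univ_le (hirr : M.Irreducible) (hrec : M.Recurrent)
    (Q : E → Measure (ℕ → E))
    (hconcat : ∀ (x y : E) (n : ℕ) (F : (ℕ → E) → ℝ≥0∞),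
      (∃ g : (Fin (n + 1) → E) → ℝ≥0∞, F = fun ω => g fun i : Fin (n + 1) => ω i) →
      ∫⁻ ω, F ω * (if ω n = y then 1 else 0) ∂ Q x
        = (∫⁻ ω, F ω * (if ω n = y then 1 else 0) ∂ M.P x) * Q y Set.univ)
    (x y : E) : Q y Set.univ ≤ Q x Set.univ := by
  classical
  set ι := (n : ℕ) × (Fin (n+1) → E) with hι
  set S : ι → Set (ℕ → E) := SFH y with hS
  have hterm : ∀ i : ι, (∫⁻ ω, (if ω ∈ S i then (1:ℝ≥0∞) else 0) ∂ Q x)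
      = (if i.2 ∈ FHB y i.1 then W M x i.2 else 0) * Q y Set.univ := by
    rintro ⟨n, xs⟩
    by_cases hxs : xs ∈ FHB y n
    · have hSC : ∀ ω : ℕ → E, (ω ∈ S ⟨n, xs⟩) ↔ ω ∈ Cyl xs := by
        intro ω
        simp only [hS, Set.mem_setOf_eq]
        exact ⟨fun h => h.2, fun h => ⟨hxs, h⟩⟩
      have hωn : ∀ ω : ℕ → E, ω ∈ Cyl xs → ω n = y := by
        intro ω h
        have h1 : ω ((Fin.last n : Fin (n+1)) : ℕ) = xs (Fin.last n) := h (Fin.last n)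
        rw [show ((Fin.last n : Fin (n+1)) : ℕ) = n from rfl] at h1
        rw [h1]
        exact hxs.1
      have hpt : ∀ ω : ℕ → E, (if ω ∈ S ⟨n, xs⟩ then (1:ℝ≥0∞) else 0)
          = (if ω ∈ Cyl xs then (1:ℝ≥0∞) else 0) * (if ω n = y then 1 else 0) := by
        intro ω
        by_cases h : ω ∈ Cyl xs
        · rw [if_pos ((hSC ω).2 h), if_pos h, if_pos (hωn ω h), mul_one]
        · rw [if_neg (fun hc => h ((hSC ω).1 hc)), if_neg h, zero_mul]
      have hgex : ∃ g : (Fin (n + 1) → E) → ℝ≥0∞,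
          (fun ω : ℕ → E => if ω ∈ Cyl xs then (1:ℝ≥0∞) else 0)
          = fun ω => g fun i : Fin (n + 1) => ω i := by
        refine ⟨fun v => if v = xs then 1 else 0, ?_⟩
        funext ω
        show (if ω ∈ Cyl xs then (1:ℝ≥0∞) else 0)
          = (if (fun i : Fin (n + 1) => ω i) = xs then (1:ℝ≥0∞) else 0)
        by_cases h : ω ∈ Cyl xs
        · rw [if_pos h, if_pos (mem_Cyl.1 h)]
        · rw [if_neg h, if_neg (fun hc => h (mem_Cyl.2 hc))]
      have h1 := hconcat x y n _ hgex
      calc ∫⁻ ω, (if ω ∈ S ⟨n, xs⟩ then (1:ℝ≥0∞) else 0) ∂ Q x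
          = ∫⁻ ω, (if ω ∈ Cyl xs then (1:ℝ≥0∞) else 0) * (if ω n = y then 1 else 0) ∂ Q x :=
            lintegral_congr hpt
        _ = (∫⁻ ω, (if ω ∈ Cyl xs then (1:ℝ≥0∞) else 0) * (if ω n = y then 1 else 0)
              ∂ M.P x) * Q y Set.univ := h1
        _ = (∫⁻ ω, (if ω ∈ S ⟨n, xs⟩ then (1:ℝ≥0∞) else 0) ∂ M.P x) * Q y Set.univ := by
            rw [lintegral_congr hpt]
        _ = (if xs ∈ FHB y n then W M x xs else 0) * Q y Set.univ := by
            congr 1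
            have hmeas : NullMeasurableSet (S ⟨n, xs⟩) (M.P x) := by
              have : S ⟨n, xs⟩ = Cyl xs := Set.ext hSC
              rw [this, Cyl_eq_Ev]
              exact nullMeasurable_Ev M x n _
            rw [lintegral_mem_ite₀ hmeas, if_pos hxs]
            have : S ⟨n, xs⟩ = Cyl xs := Set.ext hSC
            rw [this]
            exact P_Cyl M x xs
    · have hz : ∀ ω : ℕ → E, (if ω ∈ S ⟨n, xs⟩ then (1:ℝ≥0∞) else 0) = 0 := by
        intro ω
        rw [if_neg (fun hc => hxs hc.1)]
      rw [lintegral_congr hz, lintegral_zero, if_neg hxs, zero_mul]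
  have hsum : ∑' i : ι, ((if i.2 ∈ FHB y i.1 then W M x i.2 else 0) * Q y Set.univ)
      = Q y Set.univ := by
    rw [ENNReal.tsum_mul_right]
    have h2 : ∑' i : ι, (if i.2 ∈ FHB y i.1 then W M x i.2 else 0) = M.P x (Hit y) := by
      rw [P_hit_sum, ENNReal.tsum_sigma']
      refine tsum_congr fun n => ?_
      rw [FH_eq_Ev, P_Ev]
    rw [h2, hit_one M hirr hrec x y, one_mul]
  have huniq : ∀ (ω : ℕ → E) (i j : ι), ω ∈ S i → ω ∈ S j → i = j := by
    rintro ω ⟨n, xs⟩ ⟨n', xs'⟩ ⟨hxs, hωc⟩ ⟨hxs', hωc'⟩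
    have hn : n = n' := by
      by_contra hne
      have hω1 : ω ∈ FH y n := by
        rw [FH_eq_Ev]
        show (fun i : Fin (n+1) => ω i) ∈ FHB y n
        rw [mem_Cyl.1 hωc]
        exact hxs
      have hω2 : ω ∈ FH y n' := by
        rw [FH_eq_Ev]
        show (fun i : Fin (n'+1) => ω i) ∈ FHB y n'
        rw [mem_Cyl.1 hωc']
        exact hxs'
      exact Set.disjoint_left.1 (FH_disjoint y hne) hω1 hω2
    subst hn
    have hxx : xs = xs' := (mem_Cyl.1 hωc).symm.trans (mem_Cyl.1 hωc')
    exact congrArg (Sigma.mk n) hxx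
  calc Q y Set.univ = ∑' i : ι, (∫⁻ ω, (if ω ∈ S i then (1:ℝ≥0∞) else 0) ∂ Q x) := by
        rw [tsum_congr hterm, hsum]
    _ ≤ ∫⁻ ω, ∑' i : ι, (if ω ∈ S i then (1:ℝ≥0∞) else 0) ∂ Q x :=
        tsum_lintegral_le (Q x) _
    _ ≤ ∫⁻ _, 1 ∂ Q x := lintegral_mono fun ω => tsum_ind_le_one S ω (huniq ω)
    _ = Q x Set.univ := lintegral_one

lemma ge_side (Q : E → Measure (ℕ → E)) (c : ℝ≥0∞)
    (hQuniv : ∀ z, Q z Set.univ = c)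
    (hconcat : ∀ (x y : E) (n : ℕ) (F : (ℕ → E) → ℝ≥0∞),
      (∃ g : (Fin (n + 1) → E) → ℝ≥0∞, F = fun ω => g fun i : Fin (n + 1) => ω i) →
      ∫⁻ ω, F ω * (if ω n = y then 1 else 0) ∂ Q x
        = (∫⁻ ω, F ω * (if ω n = y then 1 else 0) ∂ M.P x) * Q y Set.univ)
    (x : E) (n : ℕ) (B : Set (Fin (n + 1) → E)) (hSm : MeasurableSet (Ev n B)) :
    c * M.P x (Ev n B) ≤ Q x (Ev n B) := by
  classical
  haveI := M.prob x
  have hAznm : ∀ z : E, NullMeasurableSet (EvAt n B z) (M.P x) :=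
    fun z => hSm.nullMeasurableSet.inter (nullMeasurable_coord M x z n)
  have key : ∀ z : E, (∫⁻ ω, (if ω ∈ EvAt n B z then (1:ℝ≥0∞) else 0) ∂ Q x)
      = M.P x (EvAt n B z) * c := by
    intro z
    have hgex : ∃ g : (Fin (n + 1) → E) → ℝ≥0∞,
        (fun ω : ℕ → E => if ω ∈ Ev n B then (1:ℝ≥0∞) else 0)
        = fun ω => g fun i : Fin (n + 1) => ω i :=
      ⟨fun v => if v ∈ B then 1 else 0, rfl⟩
    have h1 := hconcat x z n _ hgex
    have hpt : ∀ ω : ℕ → E, (if ω ∈ Ev n B then (1:ℝ≥0∞) else 0) * (if ω n = z then 1 else 0)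
        = (if ω ∈ EvAt n B z then 1 else 0) := by
      intro ω
      by_cases hA : ω ∈ Ev n B
      · by_cases hz : ω n = z
        · rw [if_pos hA, if_pos hz, if_pos (mem_EvAt.2 ⟨hA, hz⟩), mul_one]
        · rw [if_pos hA, if_neg hz, if_neg (fun hc => hz (mem_EvAt.1 hc).2), mul_zero]
      · rw [if_neg hA, zero_mul, if_neg (fun hc => hA (mem_EvAt.1 hc).1)]
    calc ∫⁻ ω, (if ω ∈ EvAt n B z then (1:ℝ≥0∞) else 0) ∂ Q x
        = ∫⁻ ω, (if ω ∈ Ev n B then (1:ℝ≥0∞) else 0) * (if ω n = z then 1 else 0) ∂ Q x :=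
          lintegral_congr fun ω => (hpt ω).symm
      _ = (∫⁻ ω, (if ω ∈ Ev n B then (1:ℝ≥0∞) else 0) * (if ω n = z then 1 else 0)
            ∂ M.P x) * Q z Set.univ := h1
      _ = M.P x (EvAt n B z) * c := by
          rw [lintegral_congr hpt, lintegral_mem_ite₀ (hAznm z), hQuniv z]
  have hsplit : M.P x (Ev n B) = ∑' z : E, M.P x (EvAt n B z) := by
    have hU : Ev n B = ⋃ z : E, EvAt n B z := by
      ext ω
      simp only [Set.mem_iUnion, mem_EvAt]
      exact ⟨fun h => ⟨ω n, h, rfl⟩, fun ⟨z, h, _⟩ => h⟩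
    conv_lhs => rw [hU]
    refine measure_iUnion₀ ?_ hAznm
    intro z z' hne
    refine Disjoint.aedisjoint (Set.disjoint_left.2 ?_)
    intro ω h1 h2
    exact hne ((mem_EvAt.1 h1).2 ▸ (mem_EvAt.1 h2).2 ▸ rfl)
  have hSsplit : ∀ ω : ℕ → E,
      ∑' z : E, (if ω ∈ EvAt n B z then (1:ℝ≥0∞) else 0)
      = (if ω ∈ Ev n B then 1 else 0) := by
    intro ω
    by_cases h : ω ∈ Ev n B
    · have hz : ∀ z : E, (if ω ∈ EvAt n B z then (1:ℝ≥0∞) else 0)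
          = (if z = ω n then 1 else 0) := by
        intro z
        by_cases hzz : z = ω n
        · rw [if_pos (mem_EvAt.2 ⟨h, hzz.symm⟩), if_pos hzz]
        · rw [if_neg (fun hc => hzz (mem_EvAt.1 hc).2.symm), if_neg hzz]
      rw [tsum_congr hz, tsum_ite_eq (ω n) _, if_pos h]
    · have hz : ∀ z : E, (if ω ∈ EvAt n B z then (1:ℝ≥0∞) else 0) = 0 :=
        fun z => if_neg (fun hc => h (mem_EvAt.1 hc).1)
      rw [tsum_congr hz, tsum_zero, if_neg h]
  calc c * M.P x (Ev n B)
      = (∑' z : E, M.P x (EvAt n B z)) * c := by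
        rw [← hsplit, mul_comm]
    _ = ∑' z : E, (M.P x (EvAt n B z) * c) := (ENNReal.tsum_mul_right).symm
    _ = ∑' z : E, (∫⁻ ω, (if ω ∈ EvAt n B z then (1:ℝ≥0∞) else 0) ∂ Q x) :=
        tsum_congr fun z => (key z).symm
    _ ≤ ∫⁻ ω, ∑' z : E, (if ω ∈ EvAt n B z then (1:ℝ≥0∞) else 0) ∂ Q x :=
        tsum_lintegral_le (Q x) _
    _ = ∫⁻ ω, (if ω ∈ Ev n B then (1:ℝ≥0∞) else 0) ∂ Q x := lintegral_congr hSsplit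
    _ = Q x (Ev n B) := lintegral_mem_ite₀ hSm.nullMeasurableSet

end MCAux

/-- If `(Q_x)` is a family of finite measures on path space satisfying the concatenation
identity `Q_x(F_n · 1_{X_n = y}) = E_x[F_n · 1_{X_n = y}] · Q_y(total mass)` for all
functionals `F_n` of the first `n + 1` coordinates, where `(P_x)` is an irreducible
recurrent Markov chain, then there is `c ≥ 0` with `Q_x = c • P_x` for all `x`. -/
theorem finite_concatenation_family_is_multiple_of_markov
    {E : Type*} [Countable E] [MeasurableSpace E]
    (M : MC E) (hirr : M.Irreducible) (hrec : M.Recurrent)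
    (Q : E → Measure (ℕ → E)) (hQfin : ∀ x, IsFiniteMeasure (Q x))
    (hconcat : ∀ (x y : E) (n : ℕ) (F : (ℕ → E) → ℝ≥0∞),
      (∃ g : (Fin (n + 1) → E) → ℝ≥0∞, F = fun ω => g fun i : Fin (n + 1) => ω i) →
      ∫⁻ ω, F ω * (if ω n = y then 1 else 0) ∂ Q x
        = (∫⁻ ω, F ω * (if ω n = y then 1 else 0) ∂ M.P x) * Q y Set.univ) :
    ∃ c : ℝ≥0∞, ∀ x : E, Q x = c • M.P x := by
  classical
  rcases isEmpty_or_nonempty E with hE | hE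
  · exact ⟨0, fun x => isEmptyElim x⟩
  obtain ⟨x₀⟩ := hE
  have hmono := fun x y => MCAux.Q_univ_le M hirr hrec Q hconcat x y
  set c := Q x₀ Set.univ with hc
  have hconst : ∀ z, Q z Set.univ = c := fun z => le_antisymm (hmono x₀ z) (hmono z x₀)
  have hcfin : c ≠ ∞ := by
    haveI := hQfin x₀
    exact measure_ne_top _ _
  refine ⟨c, fun x => ?_⟩
  haveI := hQfin x
  haveI := M.prob x
  refine MeasureTheory.ext_of_generate_finite
    (MeasureTheory.measurableCylinders fun _ : ℕ => E)
    ?_ MeasureTheory.isPiSystem_measurableCylinders ?_ ?_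
  · exact (MeasureTheory.generateFrom_measurableCylinders).symm
  · intro s hs
    have hsm : MeasurableSet s := MeasurableSet.of_mem_measurableCylinders hs
    obtain ⟨I, T, hT, rfl⟩ := (MeasureTheory.mem_measurableCylinders s).1 hs
    set n := I.sup id with hn
    have hmem : ∀ i : I, ((i : ℕ)) < n + 1 :=
      fun i => Nat.lt_succ_of_le (Finset.le_sup (f := id) i.2)
    set B : Set (Fin (n+1) → E) := {v | (fun i : I => v ⟨(i : ℕ), hmem i⟩) ∈ T} with hB
    have hEq : MeasureTheory.cylinder I T = MCAux.Ev n B := rfl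
    have hSm : MeasurableSet (MCAux.Ev n B) := hEq ▸ hsm
    have hcompl : MCAux.Ev n Bᶜ = (MCAux.Ev n B)ᶜ := rfl
    have hScm : MeasurableSet (MCAux.Ev n Bᶜ) := by
      rw [hcompl]; exact hSm.compl
    have h1 := MCAux.ge_side M Q c hconst hconcat x n B hSm
    have h2 := MCAux.ge_side M Q c hconst hconcat x n Bᶜ hScm
    rw [hcompl] at h2
    have hQadd : Q x (MCAux.Ev n B) + Q x ((MCAux.Ev n B)ᶜ) = c := by
      rw [measure_add_measure_compl hSm, hconst x]
    have hPadd : M.P x (MCAux.Ev n B) + M.P x ((MCAux.Ev n B)ᶜ) = 1 := by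
      rw [measure_add_measure_compl hSm, measure_univ]
    have hfin2 : c * M.P x ((MCAux.Ev n B)ᶜ) ≠ ∞ :=
      ENNReal.mul_ne_top hcfin (measure_ne_top _ _)
    have hle : Q x (MCAux.Ev n B) + c * M.P x ((MCAux.Ev n B)ᶜ)
        ≤ c * M.P x (MCAux.Ev n B) + c * M.P x ((MCAux.Ev n B)ᶜ) := by
      calc Q x (MCAux.Ev n B) + c * M.P x ((MCAux.Ev n B)ᶜ)
          ≤ Q x (MCAux.Ev n B) + Q x ((MCAux.Ev n B)ᶜ) := add_le_add_right h2 _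
        _ = c := hQadd
        _ = c * M.P x (MCAux.Ev n B) + c * M.P x ((MCAux.Ev n B)ᶜ) := by
            rw [← mul_add, hPadd, mul_one]
    have hQle : Q x (MCAux.Ev n B) ≤ c * M.P x (MCAux.Ev n B) :=
      ENNReal.le_of_add_le_add_right hfin2 hle
    show Q x (MeasureTheory.cylinder I T) = (c • M.P x) (MeasureTheory.cylinder I T)
    rw [hEq, Measure.smul_apply, smul_eq_mul]
    exact le_antisymm hQle h1
  · rw [hconst x, Measure.smul_apply, measure_univ, smul_eq_mul, mul_one]
end
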